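/- arXiv:1602.00733 — 10 statements merged into one kernel-verified Lean document; each statement's English description precedes it below -/
import Mathlib

section
/- For all integers p, q, p', q' ≥ 2 with p ≤ p' and q < q', there is no contraction model of the complete bipartite graph K_{p,q} in the complete bipartite graph K_{p',q'}. -/
open SimpleGraph

/-- A contraction model of a graph `H` in a graph `G`: a map sending each vertex of `H`
to a connected subset of vertices of `G`, these subsets partitioning the vertices of `G`,
with distinct vertices of `H` adjacent iff the corresponding subsets are joined by an
edge of `G`. -/
def IsContractionModel {V W : Type*} (G : SimpleGraph V) (H : SimpleGraph W)
    (φ : W → Set V) : Prop :=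
  (∀ w : W, (G.induce (φ w)).Connected) ∧
  (∀ v : V, ∃! w : W, v ∈ φ w) ∧
  ∀ w w' : W, w ≠ w' →
    (H.Adj w w' ↔ ∃ a ∈ φ w, ∃ b ∈ φ w', G.Adj a b)

/-- `H` is a contraction of `G`: there is a contraction model of `H` in `G`
(equivalently, `H` can be obtained from `G` by a sequence of edge contractions). -/
def IsContraction {V W : Type*} (H : SimpleGraph W) (G : SimpleGraph V) : Prop :=
  ∃ φ : W → Set V, IsContractionModel G H φ

/-- The graph `D_r`: two adjacent vertices together with `r` further vertices,
each adjacent to exactly the first two. `D_2` is the diamond (`K₄` minus an edge). -/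
def Dgraph (r : ℕ) : SimpleGraph (Fin 2 ⊕ Fin r) :=
  SimpleGraph.fromRel (fun x _ => x.isLeft)

/-- Finite graphs, with vertex set `Fin n` for some `n`. -/
def FinGraph : Type := Σ n : ℕ, SimpleGraph (Fin n)

/-- The contraction relation on finite graphs. -/
def FinGraph.Contr (H G : FinGraph) : Prop := IsContraction H.2 G.2

/-- A set of finite graphs is well-quasi-ordered by the contraction relation if every
infinite sequence of its members contains two graphs, the earlier being a contraction
of the later. -/
def WqoByContraction (S : Set FinGraph) : Prop :=
  ∀ f : ℕ → FinGraph, (∀ k, f k ∈ S) → ∃ i j : ℕ, i < j ∧ FinGraph.Contr (f i) (f j)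

/-- For all integers `p, q, p', q' ≥ 2` with `p ≤ p'` and `q < q'`,
there is no contraction model of `K_{p,q}` in `K_{p',q'}`. -/
theorem no_model_completeBipartite (p q p' q' : ℕ)
    (hp : 2 ≤ p) (hq : 2 ≤ q) (hp' : 2 ≤ p') (hq' : 2 ≤ q')
    (hpp' : p ≤ p') (hqq' : q < q') :
    ∀ φ : (Fin p ⊕ Fin q) → Set (Fin p' ⊕ Fin q'),
      ¬ IsContractionModel (completeBipartiteGraph (Fin p') (Fin q'))
        (completeBipartiteGraph (Fin p) (Fin q)) φ := by
  intro φ h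
  obtain ⟨hconn, hpart, hadj⟩ := h
  set G := completeBipartiteGraph (Fin p') (Fin q') with hG
  -- Step 1: every branch set is a singleton.
  have hsing : ∀ w, ∀ x ∈ φ w, ∀ y ∈ φ w, x = y := by
    intro w x hx y hy
    by_contra hxy
    -- there is an edge inside φ w
    have hr : (G.induce (φ w)).Reachable ⟨x, hx⟩ ⟨y, hy⟩ :=
      (hconn w).preconnected _ _
    obtain ⟨wlk⟩ := hr
    have hnil : ¬ wlk.Nil := by
      intro hn
      exact hxy (by simpa using congrArg Subtype.val (SimpleGraph.Walk.Nil.eq hn))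
    have hedge := wlk.adj_snd hnil
    have hGA : G.Adj x ((wlk.getVert 1 : ↥(φ w)) : Fin p' ⊕ Fin q') := hedge
    have hb : ((wlk.getVert 1 : ↥(φ w)) : Fin p' ⊕ Fin q') ∈ φ w := (wlk.getVert 1).2
    -- so φ w contains a left vertex and a right vertex
    have hkey : (∃ l, Sum.inl l ∈ φ w) ∧ (∃ r, Sum.inr r ∈ φ w) := by
      rcases hbv : ((wlk.getVert 1 : ↥(φ w)) : Fin p' ⊕ Fin q') with l' | r' <;>
        rw [hbv] at hGA hb <;> rcases x with l | r
      · simp [hG] at hGA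
      · exact ⟨⟨l', hb⟩, ⟨r, hx⟩⟩
      · exact ⟨⟨l, hx⟩, ⟨r', hb⟩⟩
      · simp [hG] at hGA
    obtain ⟨⟨l, hl⟩, ⟨r, hr'⟩⟩ := hkey
    -- pick a non-neighbour w' ≠ w of w
    have : ∃ w', w' ≠ w ∧ ¬ (completeBipartiteGraph (Fin p) (Fin q)).Adj w w' := by
      have : Nontrivial (Fin p) := Fin.nontrivial_iff_two_le.mpr hp
      have : Nontrivial (Fin q) := Fin.nontrivial_iff_two_le.mpr hq
      rcases w with i | j
      · obtain ⟨i', hi'⟩ := exists_ne i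
        exact ⟨Sum.inl i', by simp [hi'], by simp [hG, completeBipartiteGraph]⟩
      · obtain ⟨j', hj'⟩ := exists_ne j
        exact ⟨Sum.inr j', by simp [hj'], by simp [hG, completeBipartiteGraph]⟩
    obtain ⟨w', hne, hnadj⟩ := this
    -- but φ w' is nonempty, and anything is adjacent to φ w
    obtain ⟨⟨c, hc⟩⟩ := (hconn w').nonempty
    have : ∃ a ∈ φ w, ∃ b ∈ φ w', G.Adj a b := by
      rcases c with cl | cr
      · exact ⟨Sum.inr r, hr', Sum.inl cl, hc, by simp [hG, completeBipartiteGraph]⟩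
      · exact ⟨Sum.inl l, hl, Sum.inr cr, hc, by simp [hG, completeBipartiteGraph]⟩
    exact hnadj ((hadj w w' hne.symm).mpr this)
  -- Step 2: cardinality contradiction.
  have hne : ∀ w, (φ w).Nonempty := by
    intro w
    obtain ⟨⟨v, hv⟩⟩ := (hconn w).nonempty
    exact ⟨v, hv⟩
  choose f hf using hne
  have hbij : Function.Bijective f := by
    constructor
    · intro w w' hww'
      obtain ⟨u, _, hu⟩ := hpart (f w)
      rw [hu w (hf w), hu w' (hww' ▸ hf w')]
    · intro v
      obtain ⟨w, hw, -⟩ := hpart v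
      exact ⟨w, hsing w (f w) (hf w) v hw⟩
  have hcard := Fintype.card_of_bijective hbij
  simp [Fintype.card_sum] at hcard
  omega
end

section
/- The family {K_{2,p} : p ∈ ℕ, p ≥ 2} of complete bipartite graphs is an infinite antichain of the contraction relation: for all distinct integers p, q ≥ 2, K_{2,p} is not a contraction of K_{2,q}. -/
open SimpleGraph

lemma exists_adj_of_conn {V : Type*} {G : SimpleGraph V} {s : Set V}
    (h : (G.induce s).Connected) {a b : V} (ha : a ∈ s) (hb : b ∈ s) (hab : a ≠ b) :
    ∃ x ∈ s, ∃ y ∈ s, G.Adj x y := by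
  obtain ⟨wlk⟩ := h.preconnected ⟨a, ha⟩ ⟨b, hb⟩
  cases wlk with
  | nil => exact absurd rfl hab
  | @cons _ x _ h' _ => exact ⟨a, ha, x.1, x.2, h'⟩

lemma nonempty_of_conn {V : Type*} {G : SimpleGraph V} {s : Set V}
    (h : (G.induce s).Connected) : s.Nonempty :=
  Set.nonempty_coe_sort.mp h.nonempty

lemma completeBipartite_aux (p q : ℕ) (hp : 2 ≤ p) (hq : 2 ≤ q) (hpq : p ≠ q)
    (φ : Fin 2 ⊕ Fin p → Set (Fin 2 ⊕ Fin q))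
    (hconn : ∀ w, ((completeBipartiteGraph (Fin 2) (Fin q)).induce (φ w)).Connected)
    (hpart : ∀ v, ∃! w, v ∈ φ w)
    (hadj : ∀ w w', w ≠ w' → ((completeBipartiteGraph (Fin 2) (Fin p)).Adj w w' ↔
        ∃ a ∈ φ w, ∃ b ∈ φ w', (completeBipartiteGraph (Fin 2) (Fin q)).Adj a b)) : False := by
  have hne : ∀ w, (φ w).Nonempty := fun w => nonempty_of_conn (hconn w)
  choose σ hσ1 hσ2 using hpart
  rcases lt_trichotomy p q with hlt | heq | hgt
  · -- p < q
    obtain ⟨w1, hw1⟩ : ∃ w, (Sum.inl 0 : Fin 2 ⊕ Fin q) ∈ φ w := ⟨_, hσ1 _⟩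
    obtain ⟨w2, hw2⟩ : ∃ w, (Sum.inl 1 : Fin 2 ⊕ Fin q) ∈ φ w := ⟨_, hσ1 _⟩
    have hleft : ∀ w (i : Fin 2), (Sum.inl i : Fin 2 ⊕ Fin q) ∈ φ w → w = w1 ∨ w = w2 := by
      intro w i hw
      fin_cases i
      · exact Or.inl ((hσ2 _ _ hw).trans (hσ2 _ _ hw1).symm)
      · exact Or.inr ((hσ2 _ _ hw).trans (hσ2 _ _ hw2).symm)
    have hsing : ∀ w, w ≠ w1 → w ≠ w2 → ∃ j : Fin q, φ w = {Sum.inr j} := by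
      intro w hne1 hne2
      obtain ⟨x, hx⟩ := hne w
      rcases x with i | j
      · rcases hleft w i hx with h | h <;> [exact absurd h hne1; exact absurd h hne2]
      · refine ⟨j, Set.eq_singleton_iff_unique_mem.mpr ⟨hx, ?_⟩⟩
        intro y hy
        by_contra hyne
        obtain ⟨a, ha, b, hb, hab⟩ := exists_adj_of_conn (hconn w) hy hx hyne
        rcases a with ia | ja
        · rcases hleft w ia ha with h | h <;> [exact hne1 h; exact hne2 h]
        · rcases b with ib | jb
          · rcases hleft w ib hb with h | h <;> [exact hne1 h; exact hne2 h]
          · simp at hab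
    by_cases hww : w1 = w2
    · -- both left vertices in the same part
      subst hww
      obtain ⟨u, u', huu, hu, hu', hAdj⟩ : ∃ u u', u ≠ u' ∧ u ≠ w1 ∧ u' ≠ w1 ∧
          (completeBipartiteGraph (Fin 2) (Fin p)).Adj u u' := by
        rcases w1 with i | j
        · exact ⟨Sum.inl (if i = 0 then 1 else 0), Sum.inr ⟨0, by omega⟩, by simp,
            by fin_cases i <;> simp, by simp, by simp⟩
        · refine ⟨Sum.inl 0, Sum.inr (if j.val = 0 then ⟨1, by omega⟩ else ⟨0, by omega⟩),
            by simp, by simp, ?_, by simp⟩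
          intro hcon
          injection hcon with hc
          rw [Fin.ext_iff] at hc
          split at hc <;> (rw [Fin.val_mk] at hc; omega)
      obtain ⟨j, hj⟩ := hsing u hu hu
      obtain ⟨j', hj'⟩ := hsing u' hu' hu'
      obtain ⟨a, ha, b, hb, hab⟩ := (hadj u u' huu).mp hAdj
      rw [hj] at ha; rw [hj'] at hb
      simp only [Set.mem_singleton_iff] at ha hb
      subst ha; subst hb
      simp at hab
    · -- the two left vertices lie in distinct parts w1 ≠ w2
      have key : ∀ wa wb : Fin 2 ⊕ Fin p, wa ≠ wb →
          (∀ w, w ≠ wa → w ≠ wb → ∃ j : Fin q, φ w = {Sum.inr j}) →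
          (∃ r0 : Fin q, (Sum.inr r0 : Fin 2 ⊕ Fin q) ∈ φ wa) →
          (∃ ia : Fin 2, (Sum.inl ia : Fin 2 ⊕ Fin q) ∈ φ wa) →
          (∃ ib : Fin 2, (Sum.inl ib : Fin 2 ⊕ Fin q) ∈ φ wb) → False := by
        rintro wa wb hne' hsing' ⟨r0, hr0⟩ ⟨ia, hia⟩ ⟨ib, hib⟩
        obtain ⟨ws, hws_ne, hws_nadj⟩ : ∃ ws, ws ≠ wa ∧
            ¬ (completeBipartiteGraph (Fin 2) (Fin p)).Adj wa ws := by
          rcases wa with i | j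
          · exact ⟨Sum.inl (if i = 0 then 1 else 0), by fin_cases i <;> simp, by simp⟩
          · refine ⟨Sum.inr (if j.val = 0 then ⟨1, by omega⟩ else ⟨0, by omega⟩),
              ?_, by simp⟩
            intro hcon
            injection hcon with hc
            rw [Fin.ext_iff] at hc
            split at hc <;> (rw [Fin.val_mk] at hc; omega)
        apply hws_nadj
        by_cases hwb : ws = wb
        · subst hwb
          exact (hadj wa ws hne').mpr ⟨Sum.inr r0, hr0, Sum.inl ib, hib, by simp⟩
        · obtain ⟨j, hj⟩ := hsing' ws hws_ne hwb
          exact (hadj wa ws (Ne.symm hws_ne)).mpr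
            ⟨Sum.inl ia, hia, Sum.inr j, by simp [hj], by simp⟩
      -- find a right vertex in φ w1 ∪ φ w2
      by_cases hex : ∃ r0 : Fin q, σ (Sum.inr r0) = w1 ∨ σ (Sum.inr r0) = w2
      · obtain ⟨r0, hr0⟩ := hex
        rcases hr0 with h | h
        · exact key w1 w2 hww hsing ⟨r0, h ▸ hσ1 _⟩ ⟨0, hw1⟩ ⟨1, hw2⟩
        · exact key w2 w1 (Ne.symm hww) (fun w h1 h2 => hsing w h2 h1)
            ⟨r0, h ▸ hσ1 _⟩ ⟨1, hw2⟩ ⟨0, hw1⟩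
      · push_neg at hex
        -- all right vertices lie in singleton parts distinct from w1, w2 : too many parts
        set g : Fin q ⊕ Fin 2 → Fin 2 ⊕ Fin p :=
          Sum.elim (fun r => σ (Sum.inr r)) (fun i => if i = 0 then w1 else w2) with hg
        have hginj : Function.Injective g := by
          rintro (r | i) (r' | i') h
          · simp only [hg, Sum.elim_inl] at h
            obtain ⟨j, hj⟩ := hsing (σ (Sum.inr r)) (hex r).1 (hex r).2
            have h1 : (Sum.inr r : Fin 2 ⊕ Fin q) ∈ φ (σ (Sum.inr r)) := hσ1 _
            have h2 : (Sum.inr r' : Fin 2 ⊕ Fin q) ∈ φ (σ (Sum.inr r)) := h ▸ hσ1 _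
            rw [hj] at h1 h2
            simp only [Set.mem_singleton_iff] at h1 h2
            injection h1 with h1'
            injection h2 with h2'
            rw [h1', h2']
          · exfalso
            simp only [hg, Sum.elim_inl, Sum.elim_inr] at h
            rcases eq_or_ne i' 0 with h0 | h0
            · exact (hex r).1 (by simpa [h0] using h)
            · exact (hex r).2 (by simpa [h0] using h)
          · exfalso
            simp only [hg, Sum.elim_inl, Sum.elim_inr] at h
            rcases eq_or_ne i 0 with h0 | h0
            · exact (hex r').1 (by simpa [h0] using h.symm)
            · exact (hex r').2 (by simpa [h0] using h.symm)
          · simp only [hg, Sum.elim_inr] at h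
            fin_cases i <;> fin_cases i' <;> simp only [reduceIte] at h <;>
              first
                | rfl
                | exact absurd h hww
                | exact absurd h.symm hww
                | skip
        have := Fintype.card_le_of_injective g hginj
        simp [Fintype.card_sum] at this
        omega
  · exact hpq heq
  · -- q < p : too many parts for the vertices
    set f : Fin 2 ⊕ Fin p → Fin 2 ⊕ Fin q := fun w => (hne w).choose with hf
    have hfmem : ∀ w, f w ∈ φ w := fun w => (hne w).choose_spec
    have hfinj : Function.Injective f := by
      intro w w' h
      have h1 := hfmem w
      have h2 := hfmem w'
      rw [h] at h1
      exact (hσ2 _ _ h1).trans (hσ2 _ _ h2).symm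
    have := Fintype.card_le_of_injective f hfinj
    simp [Fintype.card_sum] at this
    omega

/-- The family `{K_{2,p} : p ≥ 2}` is an antichain of the contraction
relation: for all distinct integers `p, q ≥ 2`, `K_{2,p}` is not a contraction of `K_{2,q}`. -/
theorem completeBipartite_two_antichain (p q : ℕ) (hp : 2 ≤ p) (hq : 2 ≤ q) (hpq : p ≠ q) :
    ¬ IsContraction (completeBipartiteGraph (Fin 2) (Fin p))
        (completeBipartiteGraph (Fin 2) (Fin q)) := by
  rintro ⟨φ, hconn, hpart, hadj⟩
  exact completeBipartite_aux p q hp hq hpq φ hconn hpart hadj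
end

section
/- Let p ≥ 1 be an integer. For every edge e of the graph D_p, the graph obtained from D_p by contracting e is isomorphic either to D_{p-1} or to the star K_{1,p}. -/
open SimpleGraph

/-- The graph obtained from `G` by contracting the edge `{a, b}`: vertices `a` and `b`
are replaced by a single vertex (here represented by `a`) adjacent to all former
neighbours of `a` and of `b`. -/
def contractEdge {V : Type*} (G : SimpleGraph V) (a b : V) :
    SimpleGraph {x : V // x ≠ b} :=
  SimpleGraph.fromRel (fun x y => G.Adj x.1 y.1 ∨ (x.1 = a ∧ G.Adj b y.1))

/- ### Auxiliary material -/

lemma Dgraph_adj (r : ℕ) (x y : Fin 2 ⊕ Fin r) :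
    (Dgraph r).Adj x y ↔ x ≠ y ∧ (x.isLeft ∨ y.isLeft) := Iff.rfl

lemma succAbove_symm {q : ℕ} (k : Fin (q + 1)) (z : {x : Fin (q + 1) // x ≠ k}) :
    k.succAbove ((finSuccAboveEquiv k).symm z) = z.1 := by
  have h := (finSuccAboveEquiv k).apply_symm_apply z
  rw [finSuccAboveEquiv_apply] at h
  exact congrArg Subtype.val h

lemma fin2_eq_of_ne : ∀ i i' j : Fin 2, i ≠ j → i' ≠ j → i = i' := by decide

lemma fin2_add_one_ne : ∀ j : Fin 2, j + 1 ≠ j := by decide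

lemma fin2_one_of_ne_zero : ∀ t : Fin 2, t ≠ 0 → t = 1 := by decide

/-- Case A equivalence: contracting the edge between the two left vertices. -/
def eqvA {q : ℕ} (i j : Fin 2) (hij : i ≠ j) :
    {x : Fin 2 ⊕ Fin (q + 1) // x ≠ Sum.inl j} ≃ (Fin 1 ⊕ Fin (q + 1)) where
  toFun x := match x with
    | ⟨.inl _, _⟩ => .inl 0
    | ⟨.inr m, _⟩ => .inr m
  invFun y := match y with
    | .inl _ => ⟨.inl i, by simp [hij]⟩
    | .inr m => ⟨.inr m, by simp⟩
  left_inv := by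
    rintro ⟨x | m, h⟩
    · simp only
      exact Subtype.ext (congrArg Sum.inl (fin2_eq_of_ne i x j hij (by simpa using h)))
    · rfl
  right_inv := by
    rintro (t | m)
    · simp [Fin.eq_zero t]
    · rfl

/-- Case B equivalence: contracting an edge from a left vertex to a right vertex. -/
def eqvB {q : ℕ} (k : Fin (q + 1)) :
    {x : Fin 2 ⊕ Fin (q + 1) // x ≠ Sum.inr k} ≃ (Fin 2 ⊕ Fin q) where
  toFun x := match x with
    | ⟨.inl i, _⟩ => .inl i
    | ⟨.inr m, h⟩ => .inr ((finSuccAboveEquiv k).symm ⟨m, fun hm => h (by simp [hm])⟩)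
  invFun y := match y with
    | .inl i => ⟨.inl i, by simp⟩
    | .inr t => ⟨.inr (k.succAbove t), by simp [Fin.succAbove_ne k t]⟩
  left_inv := by
    rintro ⟨x | m, h⟩
    · rfl
    · simp only
      exact Subtype.ext (congrArg Sum.inr (succAbove_symm k _))
  right_inv := by
    rintro (i | t)
    · rfl
    · simp only
      congr 1
      rw [Equiv.symm_apply_eq, finSuccAboveEquiv_apply]
  
/-- Case C equivalence: contracting an edge from a right vertex to a left vertex. -/
def eqvC {q : ℕ} (j : Fin 2) (k : Fin (q + 1)) :
    {x : Fin 2 ⊕ Fin (q + 1) // x ≠ Sum.inl j} ≃ (Fin 2 ⊕ Fin q) where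
  toFun x := match x with
    | ⟨.inl _, _⟩ => .inl 0
    | ⟨.inr m, _⟩ =>
        if h : m = k then .inl 1
        else .inr ((finSuccAboveEquiv k).symm ⟨m, h⟩)
  invFun y := match y with
    | .inl t => if t = 0 then ⟨.inl (j + 1), by simp [fin2_add_one_ne j]⟩
        else ⟨.inr k, by simp⟩
    | .inr t => ⟨.inr (k.succAbove t), by simp⟩
  left_inv := by
    rintro ⟨x | m, h⟩
    · simp only [if_pos rfl]
      exact Subtype.ext (congrArg Sum.inl (fin2_eq_of_ne (j + 1) x j (fin2_add_one_ne j)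
        (by simpa using h)))
    · by_cases hm : m = k
      · subst hm
        dsimp only
        rw [dif_pos rfl]
        dsimp only
        rw [if_neg (one_ne_zero (α := Fin 2))]
      · dsimp only
        rw [dif_neg hm]
        simp only [if_neg one_ne_zero]
        exact Subtype.ext (congrArg Sum.inr (succAbove_symm k _))
  right_inv := by
    rintro (t | t)
    · by_cases ht : t = 0
      · subst ht; rfl
      · rw [fin2_one_of_ne_zero t ht]
        dsimp only
        rw [if_neg (one_ne_zero (α := Fin 2))]
        dsimp only
        rw [dif_pos rfl]
    · dsimp only
      rw [dif_neg (Fin.succAbove_ne k t)]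
      congr 1
      rw [Equiv.symm_apply_eq, finSuccAboveEquiv_apply]

lemma contractA_adj {q : ℕ} (i j : Fin 2)
    (x y : {z : Fin 2 ⊕ Fin (q + 1) // z ≠ .inl j}) :
    (contractEdge (Dgraph (q + 1)) (.inl i) (.inl j)).Adj x y ↔
      x ≠ y ∧ (x.1.isLeft ∨ y.1.isLeft) := by
  obtain ⟨x, hx⟩ := x; obtain ⟨y, hy⟩ := y
  simp only [contractEdge, fromRel_adj, Dgraph_adj, ne_eq, Subtype.mk.injEq]
  rcases x with x | x <;> rcases y with y | y <;> simp_all <;> tauto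

lemma contractB_adj {q : ℕ} (i : Fin 2) (k : Fin (q + 1))
    (x y : {z : Fin 2 ⊕ Fin (q + 1) // z ≠ .inr k}) :
    (contractEdge (Dgraph (q + 1)) (.inl i) (.inr k)).Adj x y ↔
      x ≠ y ∧ (x.1.isLeft ∨ y.1.isLeft) := by
  obtain ⟨x, hx⟩ := x; obtain ⟨y, hy⟩ := y
  simp only [contractEdge, fromRel_adj, Dgraph_adj, ne_eq, Subtype.mk.injEq]
  rcases x with x | x <;> rcases y with y | y <;> simp_all <;> tauto

lemma contractC_adj {q : ℕ} (j : Fin 2) (k : Fin (q + 1))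
    (x y : {z : Fin 2 ⊕ Fin (q + 1) // z ≠ .inl j}) :
    (contractEdge (Dgraph (q + 1)) (.inr k) (.inl j)).Adj x y ↔
      x ≠ y ∧ (x.1.isLeft ∨ y.1.isLeft ∨ x.1 = Sum.inr k ∨ y.1 = Sum.inr k) := by
  obtain ⟨x, hx⟩ := x; obtain ⟨y, hy⟩ := y
  simp only [contractEdge, fromRel_adj, Dgraph_adj, ne_eq, Subtype.mk.injEq]
  rcases x with x | x <;> rcases y with y | y <;> simp_all <;> tauto

/-- Let `p ≥ 1`. For every edge `{u, v}` of `D_p`, the graph obtained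
from `D_p` by contracting this edge is isomorphic either to `D_{p-1}` or to the star
`K_{1,p}`. -/
theorem contractEdge_Dgraph (p : ℕ) (hp : 1 ≤ p) (u v : Fin 2 ⊕ Fin p)
    (huv : (Dgraph p).Adj u v) :
    Nonempty (contractEdge (Dgraph p) u v ≃g Dgraph (p - 1)) ∨
    Nonempty (contractEdge (Dgraph p) u v ≃g completeBipartiteGraph (Fin 1) (Fin p)) := by
  obtain ⟨q, rfl⟩ : ∃ q, p = q + 1 := ⟨p - 1, by omega⟩
  rcases u with i | k' <;> rcases v with j | k
  · -- both left : star
    right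
    have hij : i ≠ j := by
      rw [Dgraph_adj] at huv
      simpa using huv.1
    refine ⟨{ toEquiv := eqvA i j hij, map_rel_iff' := ?_ }⟩
    intro x y
    rw [contractA_adj]
    obtain ⟨x, hx⟩ := x; obtain ⟨y, hy⟩ := y
    rcases x with x | x <;> rcases y with y | y <;>
      simp_all [eqvA, Subtype.ext_iff] <;>
      first
        | exact fin2_eq_of_ne x y j (fun h => hx (by rw [h])) (fun h => hy (by rw [h]))
        | tauto
  · -- u left, v right : D_{q}
    left
    refine ⟨{ toEquiv := eqvB k, map_rel_iff' := ?_ }⟩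
    intro x y
    rw [Dgraph_adj, contractB_adj]
    simp only [ne_eq, EmbeddingLike.apply_eq_iff_eq]
    obtain ⟨x, hx⟩ := x; obtain ⟨y, hy⟩ := y
    rcases x with x | x <;> rcases y with y | y <;> simp [eqvB]
  · -- u right, v left : D_{q}
    left
    refine ⟨{ toEquiv := eqvC j k', map_rel_iff' := ?_ }⟩
    intro x y
    rw [Dgraph_adj, contractC_adj]
    simp only [ne_eq, EmbeddingLike.apply_eq_iff_eq]
    obtain ⟨x, hx⟩ := x; obtain ⟨y, hy⟩ := y
    rcases x with x | x <;> rcases y with y | y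
    · simp [eqvC]
    · rcases eq_or_ne y k' with h | h <;> simp [eqvC, h]
    · rcases eq_or_ne x k' with h | h <;> simp [eqvC, h]
    · rcases eq_or_ne x k' with h | h <;> rcases eq_or_ne y k' with h2 | h2 <;>
        simp [eqvC, h, h2]
  · -- both right : impossible
    exfalso
    rw [Dgraph_adj] at huv
    simpa using huv.2
end

section
/- Let p ≥ 2 be an integer and let H be a graph. If H is a contraction of K_{2,p} and H is not isomorphic to K_{2,p}, then H is isomorphic to D_r for some integer r ≥ 0 or to a star K_{1,r} for some integer r ≥ 0. -/
open SimpleGraph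

lemma aux_no_adj {V : Type*} {G : SimpleGraph V} {s : Set V}
    (h : (G.induce s).Connected) (hn : ∀ a ∈ s, ∀ b ∈ s, ¬ G.Adj a b) :
    ∀ a ∈ s, ∀ b ∈ s, a = b := by
  intro a ha b hb
  have hbot : G.induce s = ⊥ := by
    ext x y
    simp only [comap_adj, bot_adj, iff_false]
    exact hn x x.2 y y.2
  have hr := h.preconnected ⟨a, ha⟩ ⟨b, hb⟩
  rw [hbot, reachable_bot] at hr
  exact congrArg Subtype.val hr

lemma star_adj (r : ℕ) (u v : Fin 1 ⊕ Fin r) :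
    (completeBipartiteGraph (Fin 1) (Fin r)).Adj u v ↔
      ((u.isLeft = true ∧ ¬ v.isLeft = true) ∨ (¬ u.isLeft = true ∧ v.isLeft = true)) := by
  cases u <;> cases v <;> simp

/-- Let `p ≥ 2` and let `H` be a graph. If `H` is a contraction of
`K_{2,p}` and `H` is not isomorphic to `K_{2,p}`, then `H` is isomorphic to `D_r` for
some `r ≥ 0` or to a star `K_{1,r}` for some `r ≥ 0`. -/
theorem contraction_of_completeBipartite_two {V : Type*} [Fintype V]
    (p : ℕ) (hp : 2 ≤ p) (H : SimpleGraph V)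
    (hctr : IsContraction H (completeBipartiteGraph (Fin 2) (Fin p)))
    (hniso : ¬ Nonempty (H ≃g completeBipartiteGraph (Fin 2) (Fin p))) :
    (∃ r : ℕ, Nonempty (H ≃g Dgraph r)) ∨
    (∃ r : ℕ, Nonempty (H ≃g completeBipartiteGraph (Fin 1) (Fin r))) := by
  classical
  obtain ⟨φ, hconn, huniq, hadj⟩ := hctr
  set G := completeBipartiteGraph (Fin 2) (Fin p) with hG
  have hne : ∀ w, (φ w).Nonempty := fun w => Set.nonempty_coe_sort.mp (hconn w).nonempty
  obtain ⟨w1, hw1, hw1u⟩ := huniq (Sum.inl 0)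
  obtain ⟨w2, hw2, hw2u⟩ := huniq (Sum.inl 1)
  -- every branch set other than those of w1, w2 is a singleton on the right side
  have hsingle : ∀ w, w ≠ w1 → w ≠ w2 → ∃ b : Fin p, φ w = {Sum.inr b} := by
    intro w h1 h2
    obtain ⟨x, hx⟩ := hne w
    have hright : ∀ y ∈ φ w, ∃ b : Fin p, y = Sum.inr b := by
      intro y hy
      match y with
      | Sum.inr b => exact ⟨b, rfl⟩
      | Sum.inl i =>
        exfalso
        have hi : i = 0 ∨ i = 1 := by omega
        rcases hi with rfl | rfl
        · exact h1 (hw1u w hy)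
        · exact h2 (hw2u w hy)
    obtain ⟨b, rfl⟩ := hright x hx
    refine ⟨b, Set.eq_singleton_iff_unique_mem.mpr ⟨hx, ?_⟩⟩
    intro y hy
    refine aux_no_adj (hconn w) ?_ y hy _ hx
    intro c hc d hd
    obtain ⟨bc, rfl⟩ := hright c hc
    obtain ⟨bd, rfl⟩ := hright d hd
    simp [hG]
  have hadj_w1 : ∀ w b, φ w = {Sum.inr b} → w ≠ w1 → H.Adj w1 w := by
    intro w b hb hnw
    rw [hadj w1 w (Ne.symm hnw)]
    exact ⟨Sum.inl 0, hw1, Sum.inr b, by simp [hb], by simp [hG]⟩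
  have hadj_w2 : ∀ w b, φ w = {Sum.inr b} → w ≠ w2 → H.Adj w2 w := by
    intro w b hb hnw
    rw [hadj w2 w (Ne.symm hnw)]
    exact ⟨Sum.inl 1, hw2, Sum.inr b, by simp [hb], by simp [hG]⟩
  have hnadj : ∀ w w', w ≠ w' → (∃ b, φ w = {Sum.inr b}) → (∃ b, φ w' = {Sum.inr b}) →
      ¬ H.Adj w w' := by
    rintro w w' hww ⟨b, hb⟩ ⟨b', hb'⟩ hA
    rw [hadj w w' hww] at hA
    obtain ⟨a, ha, c, hc, hac⟩ := hA
    rw [hb] at ha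
    rw [hb'] at hc
    rw [Set.mem_singleton_iff] at ha hc
    subst ha; subst hc
    simp [hG] at hac
  by_cases h12 : w1 = w2
  · -- the two left vertices are in the same branch set : star
    right
    have hchar : ∀ x y, H.Adj x y ↔ x ≠ y ∧ (x = w1 ∨ y = w1) := by
      intro x y
      constructor
      · intro hA
        refine ⟨hA.ne, ?_⟩
        by_contra hcon
        push_neg at hcon
        exact hnadj x y hA.ne (hsingle x hcon.1 (h12 ▸ hcon.1))
          (hsingle y hcon.2 (h12 ▸ hcon.2)) hA
      · rintro ⟨hxy, rfl | rfl⟩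
        · obtain ⟨b, hb⟩ := hsingle y (Ne.symm hxy) (h12 ▸ Ne.symm hxy)
          exact hadj_w1 y b hb (Ne.symm hxy)
        · obtain ⟨b, hb⟩ := hsingle x hxy (h12 ▸ hxy)
          exact (hadj_w1 x b hb hxy).symm
    refine ⟨Fintype.card {x : V // ¬ x = w1}, ?_⟩
    let e0 : {x : V // x = w1} ≃ Fin 1 :=
      ⟨fun _ => 0, fun _ => ⟨w1, rfl⟩, fun x => Subtype.ext x.2.symm, fun i => by omega⟩
    let e1 := Fintype.equivFin {x : V // ¬ x = w1}
    let e : V ≃ Fin 1 ⊕ Fin (Fintype.card {x : V // ¬ x = w1}) :=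
      (Equiv.sumCompl (· = w1)).symm.trans (Equiv.sumCongr e0 e1)
    have heleft : ∀ x : V, (e x).isLeft = true ↔ x = w1 := by
      intro x
      by_cases hx : x = w1
      · have h' : (Equiv.sumCompl (· = w1)).symm x = Sum.inl ⟨x, hx⟩ :=
          Equiv.sumCompl_symm_apply_of_pos (p := (· = w1)) (a := x) hx
        simp [e, h', hx]
      · have h' : (Equiv.sumCompl (· = w1)).symm x = Sum.inr ⟨x, hx⟩ :=
          Equiv.sumCompl_symm_apply_of_neg (p := (· = w1)) (a := x) hx
        simp [e, h', hx]
    refine ⟨⟨e, ?_⟩⟩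
    intro a b
    show (completeBipartiteGraph (Fin 1) (Fin _)).Adj (e a) (e b) ↔ H.Adj a b
    rw [star_adj, hchar, heleft, heleft]
    constructor
    · rintro (⟨rfl, hb⟩ | ⟨ha, rfl⟩)
      · exact ⟨fun h => hb h.symm, Or.inl rfl⟩
      · exact ⟨fun h => ha h, Or.inr rfl⟩
    · rintro ⟨hne', rfl | rfl⟩
      · exact Or.inl ⟨rfl, fun h => hne' h.symm⟩
      · exact Or.inr ⟨fun h => hne' h, rfl⟩
  · by_cases hE : H.Adj w1 w2
    · -- branch sets of w1, w2 are adjacent : Dgraph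
      left
      have hchar : ∀ x y, H.Adj x y ↔
          x ≠ y ∧ ((x = w1 ∨ x = w2) ∨ (y = w1 ∨ y = w2)) := by
        intro x y
        constructor
        · intro hA
          refine ⟨hA.ne, ?_⟩
          by_contra hcon
          push_neg at hcon
          exact hnadj x y hA.ne (hsingle x hcon.1.1 hcon.1.2)
            (hsingle y hcon.2.1 hcon.2.2) hA
        · rintro ⟨hxy, (rfl | rfl) | (rfl | rfl)⟩
          · by_cases hy2 : y = w2
            · subst hy2; exact hE
            · obtain ⟨b, hb⟩ := hsingle y (Ne.symm hxy) hy2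
              exact hadj_w1 y b hb (Ne.symm hxy)
          · by_cases hy1 : y = w1
            · subst hy1; exact hE.symm
            · obtain ⟨b, hb⟩ := hsingle y hy1 (Ne.symm hxy)
              exact hadj_w2 y b hb (Ne.symm hxy)
          · by_cases hx2 : x = w2
            · subst hx2; exact hE.symm
            · obtain ⟨b, hb⟩ := hsingle x hxy hx2
              exact (hadj_w1 x b hb hxy).symm
          · by_cases hx1 : x = w1
            · subst hx1; exact hE
            · obtain ⟨b, hb⟩ := hsingle x hx1 hxy
              exact (hadj_w2 x b hb hxy).symm
      refine ⟨Fintype.card {x : V // ¬ (x = w1 ∨ x = w2)}, ?_⟩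
      let e0 : {x : V // x = w1 ∨ x = w2} ≃ Fin 2 :=
        ⟨fun x => if x.1 = w1 then 0 else 1,
         fun i => if i = 0 then ⟨w1, Or.inl rfl⟩ else ⟨w2, Or.inr rfl⟩,
         fun x => by
           rcases x with ⟨x, rfl | rfl⟩
           · simp
           · simp [Ne.symm h12],
         fun i => by
           rcases Fin.exists_fin_two.mp ⟨i, rfl⟩ with h | h <;> subst h
           · simp
           · simp [Ne.symm h12]⟩
      let e1 := Fintype.equivFin {x : V // ¬ (x = w1 ∨ x = w2)}
      let e : V ≃ Fin 2 ⊕ Fin (Fintype.card {x : V // ¬ (x = w1 ∨ x = w2)}) :=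
        (Equiv.sumCompl (fun x => x = w1 ∨ x = w2)).symm.trans (Equiv.sumCongr e0 e1)
      have heleft : ∀ x : V, (e x).isLeft = true ↔ (x = w1 ∨ x = w2) := by
        intro x
        by_cases hx : x = w1 ∨ x = w2
        · have h' : (Equiv.sumCompl (fun x => x = w1 ∨ x = w2)).symm x = Sum.inl ⟨x, hx⟩ :=
            Equiv.sumCompl_symm_apply_of_pos (p := fun x => x = w1 ∨ x = w2) (a := x) hx
          simp [e, h', hx]
        · have h' : (Equiv.sumCompl (fun x => x = w1 ∨ x = w2)).symm x = Sum.inr ⟨x, hx⟩ :=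
            Equiv.sumCompl_symm_apply_of_neg (p := fun x => x = w1 ∨ x = w2) (a := x) hx
          simp [e, h', hx]
      refine ⟨⟨e, ?_⟩⟩
      intro a b
      show (Dgraph _).Adj (e a) (e b) ↔ H.Adj a b
      rw [Dgraph_adj, hchar]
      simp only [ne_eq, EmbeddingLike.apply_eq_iff_eq, heleft]
    · -- no adjacency between the branch sets of w1 and w2 : H ≅ K_{2,p}
      exfalso
      have hsingall : ∀ v : V, ∃ u, φ v = {u} := by
        intro v
        by_cases hv1 : v = w1
        · subst hv1
          refine ⟨Sum.inl 0, Set.eq_singleton_iff_unique_mem.mpr ⟨hw1, ?_⟩⟩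
          intro x hx
          match x with
          | Sum.inl i =>
            have hi : i = 0 ∨ i = 1 := by omega
            rcases hi with rfl | rfl
            · rfl
            · exact absurd (hw2u v hx) h12
          | Sum.inr b =>
            exfalso
            exact hE ((hadj v w2 h12).mpr ⟨Sum.inr b, hx, Sum.inl 1, hw2, by simp [hG]⟩)
        · by_cases hv2 : v = w2
          · subst hv2
            refine ⟨Sum.inl 1, Set.eq_singleton_iff_unique_mem.mpr ⟨hw2, ?_⟩⟩
            intro x hx
            match x with
            | Sum.inl i =>
              have hi : i = 0 ∨ i = 1 := by omega
              rcases hi with rfl | rfl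
              · exact absurd (hw1u v hx).symm h12
              · rfl
            | Sum.inr b =>
              exfalso
              exact hE ((hadj w1 v h12).mpr ⟨Sum.inl 0, hw1, Sum.inr b, hx, by simp [hG]⟩)
          · obtain ⟨b, hb⟩ := hsingle v hv1 hv2
            exact ⟨Sum.inr b, hb⟩
      choose g hg using hsingall
      have hmem : ∀ v, g v ∈ φ v := fun v => by rw [hg v]; exact rfl
      have hinj : Function.Injective g := by
        intro a b hab
        obtain ⟨w, hw, hwu⟩ := huniq (g a)
        have ha := hwu a (hmem a)
        have hb := hwu b (hab ▸ hmem b)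
        exact ha.trans hb.symm
      have hsurj : Function.Surjective g := by
        intro u
        obtain ⟨w, hw, _⟩ := huniq u
        refine ⟨w, ?_⟩
        have : u ∈ ({g w} : Set _) := (hg w) ▸ hw
        exact this.symm
      refine hniso ⟨⟨Equiv.ofBijective g ⟨hinj, hsurj⟩, ?_⟩⟩
      intro a b
      show G.Adj (g a) (g b) ↔ H.Adj a b
      by_cases hab : a = b
      · subst hab
        simp
      · rw [hadj a b hab]
        simp [hg a, hg b]
end

section
/- For all integers p, q with 3 ≤ p < q, there is no contraction model of the complement of the cycle C_p in the complement of the cycle C_q. In particular, the family {complement of C_i : i ≥ 6} is an infinite antichain of the contraction relation. -/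
open SimpleGraph

private lemma cycle_adj_add {n : ℕ} (w : Fin (n+3)) : (cycleGraph (n+3)).Adj w (w+1) :=
  cycleGraph_adj.mpr (Or.inr (add_sub_cancel_left w 1))

private lemma cycle_adj_sub {n : ℕ} (w : Fin (n+3)) : (cycleGraph (n+3)).Adj w (w-1) :=
  cycleGraph_adj.mpr (Or.inl (sub_sub_cancel w 1))

private lemma cycle_sub_ne_add {n : ℕ} (w : Fin (n+3)) : w - 1 ≠ w + 1 := by
  intro h
  have h2 : w - 1 + 2 = w + 1 := by open Fin.CommRing in ring
  rw [h] at h2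
  have h3 : (2 : Fin (n+3)) = 0 :=
    add_left_cancel (a := w + 1) (b := (2 : Fin (n+3))) (c := 0) (by rw [add_zero]; exact h2)
  have h4 : ((2 : Fin (n+3))).val = 0 := by rw [h3]; rfl
  simp [Fin.val_two, Nat.mod_eq_of_lt (show 2 < n + 3 by omega)] at h4

private lemma cycle_nbr {n : ℕ} {a b : Fin (n+3)} (h : (cycleGraph (n+3)).Adj a b) :
    b = a - 1 ∨ b = a + 1 := by
  rcases cycleGraph_adj.mp h with h' | h'
  · left; have h2 := (sub_sub_cancel a b).symm; rw [h'] at h2; exact h2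
  · right; rw [← h']; abel

private lemma contr_card_le {i j : ℕ} {H : SimpleGraph (Fin i)} {G : SimpleGraph (Fin j)}
    (h : IsContraction H G) : i ≤ j := by
  obtain ⟨φ, hconn, hpart, -⟩ := h
  have hne : ∀ w, (φ w).Nonempty := fun w => Set.nonempty_coe_sort.mp (hconn w).nonempty
  choose g hg using hne
  have hinj : Function.Injective g := fun w w' e =>
    (hpart (g w)).unique (hg w) (by rw [e]; exact hg w')
  simpa using Fintype.card_le_of_injective g hinj

private lemma no_model (p q : ℕ) (hp : 3 ≤ p) (hpq : p < q)
    (φ : Fin p → Set (Fin q)) :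
    ¬ IsContractionModel (cycleGraph q)ᶜ (cycleGraph p)ᶜ φ := by
  obtain ⟨m, rfl⟩ : ∃ m, p = m + 3 := ⟨p - 3, by omega⟩
  obtain ⟨n, rfl⟩ : ∃ n, q = n + 3 := ⟨q - 3, by omega⟩
  rintro ⟨hconn, hpart, hadj⟩
  have hne : ∀ w, (φ w).Nonempty := fun w => Set.nonempty_coe_sort.mp (hconn w).nonempty
  have hdisj : ∀ w w', w ≠ w' → ∀ v, v ∈ φ w → v ∈ φ w' → False :=
    fun w w' hww' v h1 h2 => hww' ((hpart v).unique h1 h2)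
  have hjoin : ∀ w w' : Fin (m+3), w ≠ w' → (cycleGraph (m+3)).Adj w w' →
      ∀ a ∈ φ w, ∀ b ∈ φ w', (cycleGraph (n+3)).Adj a b := by
    intro w w' hww' hadjw a ha b hb
    have hnotadj : ¬ (cycleGraph (m+3))ᶜ.Adj w w' := by simp [compl_adj, hadjw]
    have hnc : ¬ (cycleGraph (n+3))ᶜ.Adj a b :=
      fun h => hnotadj ((hadj w w' hww').mpr ⟨a, ha, b, hb, h⟩)
    have hab : a ≠ b := fun e => hdisj w w' hww' a ha (e ▸ hb)
    by_contra hna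
    exact hnc ((compl_adj _ _ _).mpr ⟨hab, hna⟩)
  have hsub : ∀ w : Fin (m+3), ∀ b ∈ φ w, ∀ b' ∈ φ w, b = b' := by
    intro w b hb b' hb'
    have hw : w = (w - 1) + 1 := (sub_add_cancel w 1).symm
    set u := w - 1 with hu
    obtain ⟨a, ha⟩ := hne u
    obtain ⟨c, hc⟩ := hne (u - 1)
    have hne1 : u ≠ u + 1 := (cycle_adj_add u).ne
    have hne2 : u ≠ u - 1 := (cycle_adj_sub u).ne
    have hne3 : u - 1 ≠ u + 1 := cycle_sub_ne_add u
    rw [hw] at hb hb'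
    have hbv := cycle_nbr (hjoin u (u+1) hne1 (cycle_adj_add u) a ha b hb)
    have hb'v := cycle_nbr (hjoin u (u+1) hne1 (cycle_adj_add u) a ha b' hb')
    have hcv := cycle_nbr (hjoin u (u-1) hne2 (cycle_adj_sub u) a ha c hc)
    have hbc : b ≠ c := fun e => hdisj (u+1) (u-1) hne3.symm b hb (e ▸ hc)
    have hb'c : b' ≠ c := fun e => hdisj (u+1) (u-1) hne3.symm b' hb' (e ▸ hc)
    have haa : a - 1 ≠ a + 1 := cycle_sub_ne_add a
    rcases hbv with rfl | rfl <;> rcases hb'v with rfl | rfl <;>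
      rcases hcv with rfl | rfl <;> simp_all
  have hex : ∀ v : Fin (n+3), ∃ w, v ∈ φ w := fun v => (hpart v).exists
  choose f hf using hex
  have hinj : Function.Injective f := fun v v' h =>
    hsub (f v) v (hf v) v' (by rw [h]; exact hf v')
  have hcard := Fintype.card_le_of_injective f hinj
  simp only [Fintype.card_fin] at hcard
  omega

/-- For all integers `3 ≤ p < q`, there is no contraction model of the
complement of the cycle `C_p` in the complement of the cycle `C_q`. In particular, the
family of complements of cycles `C_i` with `i ≥ 6` is an infinite antichain of the
contraction relation. -/
theorem antiholes_antichain :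
    (∀ p q : ℕ, 3 ≤ p → p < q →
      ∀ φ : Fin p → Set (Fin q),
        ¬ IsContractionModel (SimpleGraph.cycleGraph q)ᶜ (SimpleGraph.cycleGraph p)ᶜ φ) ∧
    (∀ i j : ℕ, 6 ≤ i → 6 ≤ j → i ≠ j →
      ¬ IsContraction (SimpleGraph.cycleGraph i)ᶜ (SimpleGraph.cycleGraph j)ᶜ) := by
  constructor
  · exact no_model
  · intro i j hi hj hij hcontr
    rcases Nat.lt_or_ge i j with hlt | hge
    · obtain ⟨φ, hφ⟩ := hcontr
      exact no_model i j (by omega) hlt φ hφ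
    · have hle := contr_card_le hcontr
      have : j < i := by omega
      omega
end

section
/- Let p ≥ 3 be an integer. For every integer q > p, the graph D_p is not a contraction of the complement of the cycle C_q. Consequently, the class of connected D_p-contraction-free graphs contains infinitely many pairwise ⋖-incomparable graphs. -/
open SimpleGraph

/-- Finite graphs, with vertex set `Fin n` for some `n`. -/

lemma add_one_ne {n : ℕ} (u : Fin (n+2)) : u + 1 ≠ u := by
  intro h
  rw [Fin.ext_iff] at h
  simp [Fin.add_def, Fin.val_one] at h
  have hu := u.isLt
  rcases Nat.lt_or_ge (u.val + 1) (n+2) with h' | h'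
  · rw [Nat.mod_eq_of_lt (by omega)] at h; omega
  · rw [Nat.mod_eq_sub_mod (by omega), Nat.mod_eq_of_lt (by omega)] at h; omega

lemma add_two_ne {n : ℕ} (u : Fin (n+3)) : u + 1 + 1 ≠ u := by
  intro h
  rw [Fin.ext_iff] at h
  simp [Fin.add_def, Fin.val_one] at h
  have hu := u.isLt
  rcases Nat.lt_or_ge (u.val + 2) (n+3) with h' | h'
  · rw [Nat.mod_eq_of_lt (by omega)] at h; omega
  · rw [Nat.mod_eq_sub_mod (by omega), Nat.mod_eq_of_lt (by omega)] at h; omega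

lemma add_three_ne {n : ℕ} (u : Fin (n+4)) : u + 1 + 1 + 1 ≠ u := by
  intro h
  rw [Fin.ext_iff] at h
  simp [Fin.add_def, Fin.val_one] at h
  have hu := u.isLt
  rcases Nat.lt_or_ge (u.val + 3) (n+4) with h' | h'
  · rw [Nat.mod_eq_of_lt (by omega)] at h; omega
  · rw [Nat.mod_eq_sub_mod (by omega), Nat.mod_eq_of_lt (by omega)] at h; omega

lemma add_four_ne {n : ℕ} (u : Fin (n+5)) : u + 1 + 1 + 1 + 1 ≠ u := by
  intro h
  rw [Fin.ext_iff] at h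
  simp [Fin.add_def, Fin.val_one] at h
  have hu := u.isLt
  rcases Nat.lt_or_ge (u.val + 4) (n+5) with h' | h'
  · rw [Nat.mod_eq_of_lt (by omega)] at h; omega
  · rw [Nat.mod_eq_sub_mod (by omega), Nat.mod_eq_of_lt (by omega)] at h; omega

lemma cyc_adj {n : ℕ} {u v : Fin (n+4)} :
    (cycleGraph (n+4)).Adj u v ↔ u = v + 1 ∨ v = u + 1 := by
  rw [cycleGraph_adj]
  constructor
  · rintro (h | h)
    · left; rwa [sub_eq_iff_eq_add'] at h
    · right; rwa [sub_eq_iff_eq_add'] at h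
  · rintro (h | h)
    · left; rw [h]; abel
    · right; rw [h]; abel
lemma part_nonempty {V W : Type*} {G : SimpleGraph V} {φ : W → Set V}
    (h : ∀ w : W, (G.induce (φ w)).Connected) (w : W) : (φ w).Nonempty :=
  Set.nonempty_coe_sort.1 (h w).nonempty

lemma card_le_of_contraction {m n : ℕ} {H : SimpleGraph (Fin m)} {G : SimpleGraph (Fin n)}
    (h : IsContraction H G) : m ≤ n := by
  obtain ⟨φ, hconn, huniq, -⟩ := h
  choose pick hpick using fun w => part_nonempty hconn w
  have hinj : Function.Injective pick := by
    intro w w' hww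
    obtain ⟨z, hz, hz2⟩ := huniq (pick w)
    rw [hz2 w (hpick w), hz2 w' (hww ▸ hpick w')]
  simpa using Fintype.card_le_of_injective pick hinj

lemma not_Dp_contraction (p q : ℕ) (hp : 3 ≤ p) (hq : 4 ≤ q) :
    ¬ IsContraction (Dgraph p) (cycleGraph q)ᶜ := by
  obtain ⟨n, rfl⟩ : ∃ n, q = n + 4 := ⟨q - 4, by omega⟩
  rintro ⟨φ, hconn, huniq, hadj⟩
  set w1 : Fin 2 ⊕ Fin p := Sum.inr ⟨0, by omega⟩ with hw1
  set w2 : Fin 2 ⊕ Fin p := Sum.inr ⟨1, by omega⟩ with hw2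
  set w3 : Fin 2 ⊕ Fin p := Sum.inr ⟨2, by omega⟩ with hw3
  have hne12 : w1 ≠ w2 := by simp [hw1, hw2]
  have hne13 : w1 ≠ w3 := by simp [hw1, hw3]
  have hne23 : w2 ≠ w3 := by simp [hw2, hw3]
  have hnadj : ∀ i j : Fin p, ¬ (Dgraph p).Adj (Sum.inr i) (Sum.inr j) := by
    intro i j
    simp [Dgraph, fromRel_adj]
  -- representatives
  obtain ⟨x1, hx1⟩ := part_nonempty hconn w1
  obtain ⟨x2, hx2⟩ := part_nonempty hconn w2
  obtain ⟨x3, hx3⟩ := part_nonempty hconn w3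
  have hxne : ∀ {w w' : Fin 2 ⊕ Fin p} {x y : Fin (n+4)},
      w ≠ w' → x ∈ φ w → y ∈ φ w' → x ≠ y := by
    intro w w' x y hww hx hy h
    rw [← h] at hy
    obtain ⟨z, hz, hz2⟩ := huniq x
    exact hww ((hz2 w hx).trans (hz2 w' hy).symm)
  have key : ∀ {w w' : Fin 2 ⊕ Fin p} {x y : Fin (n+4)},
      w ≠ w' → ¬ (Dgraph p).Adj w w' → x ∈ φ w → y ∈ φ w' →
      x = y + 1 ∨ y = x + 1 := by
    intro w w' x y hww hnd hx hy
    rw [← cyc_adj]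
    have hne := hxne hww hx hy
    have := (hadj w w' hww).not.1 hnd
    push_neg at this
    have h2 := this x hx y hy
    rw [compl_adj] at h2
    push_neg at h2
    exact h2 hne
  have h12 := key hne12 (hnadj _ _) hx1 hx2
  have h13 := key hne13 (hnadj _ _) hx1 hx3
  have h23 := key hne23 (hnadj _ _) hx2 hx3
  have hne_x12 : x1 ≠ x2 := hxne hne12 hx1 hx2
  have hne_x13 : x1 ≠ x3 := hxne hne13 hx1 hx3
  have hne_x23 : x2 ≠ x3 := hxne hne23 hx2 hx3
  rcases h12 with h12 | h12
  · subst h12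
    rcases h13 with h13 | h13
    · exact hne_x23 (by rwa [add_left_inj] at h13)
    · rcases h23 with h23 | h23
      · rw [h13] at h23
        exact add_three_ne x2 h23.symm
      · exact add_one_ne (x2 + 1) (h13.symm.trans h23)
  · subst h12
    rcases h13 with h13 | h13
    · rcases h23 with h23 | h23
      · rw [add_left_inj] at h23
        exact hne_x13 (h23 ▸ h13 ▸ rfl)
      · rw [h23] at h13
        exact add_three_ne x1 h13.symm
    · exact hne_x23 h13.symm

lemma not_compl_cyc (m n : ℕ) (hm : 5 ≤ m) (hmn : m < n) :
    ¬ IsContraction (cycleGraph m)ᶜ (cycleGraph n)ᶜ := by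
  obtain ⟨m', rfl⟩ : ∃ m', m = m' + 5 := ⟨m - 5, by omega⟩
  obtain ⟨n', rfl⟩ : ∃ n', n = n' + 5 := ⟨n - 5, by omega⟩
  rintro ⟨φ, hconn, huniq, hadj⟩
  -- the map sending a vertex to its part
  have g : ∀ v : Fin (n'+5), ∃ w, v ∈ φ w := fun v => ((huniq v).exists)
  choose g hg using g
  have hgu : ∀ (v : Fin (n'+5)) (w : Fin (m'+5)), v ∈ φ w → g v = w := by
    intro v w hv
    obtain ⟨z, hz, hz2⟩ := huniq v
    rw [hz2 (g v) (hg v), hz2 w hv]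
  have hxne : ∀ {w w' : Fin (m'+5)} {x y : Fin (n'+5)},
      w ≠ w' → x ∈ φ w → y ∈ φ w' → x ≠ y := by
    intro w w' x y hww hx hy h
    rw [← h] at hy
    exact hww ((hgu x w hx).symm.trans (hgu x w' hy))
  -- a part with two distinct vertices
  obtain ⟨a, b, hab, hgab⟩ : ∃ a b, a ≠ b ∧ g a = g b := by
    have := Fintype.exists_ne_map_eq_of_card_lt g (by simp; omega)
    obtain ⟨a, b, h1, h2⟩ := this
    exact ⟨a, b, h1, h2⟩
  set w : Fin (m'+5) := g a with hw
  have ha : a ∈ φ w := hg a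
  have hb : b ∈ φ w := hgab ▸ hg b
  -- two non-neighbours of w in the complement of C_m
  have key : ∀ u : Fin (m'+5), w ≠ u → (cycleGraph (m'+5)).Adj w u →
      ∀ x ∈ φ w, ∀ y ∈ φ u, x = y + 1 ∨ y = x + 1 := by
    intro u hwu hadj' x hx y hy
    have hnd : ¬ ((cycleGraph (m'+5))ᶜ.Adj w u) := by
      rw [compl_adj]; push_neg; exact fun _ => hadj'
    have := (hadj w u hwu).not.1 hnd
    push_neg at this
    have h2 := this x hx y hy
    rw [compl_adj] at h2
    push_neg at h2
    rw [← cyc_adj]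
    exact h2 (hxne hwu hx hy)
  have hu1 : (cycleGraph (m'+5)).Adj w (w + 1) := cyc_adj.2 (Or.inr rfl)
  have hu2 : (cycleGraph (m'+5)).Adj w (w - 1) := by
    rw [cyc_adj]; left; rw [sub_add_cancel]
  have hwu1 : w ≠ w + 1 := fun h => add_one_ne w h.symm
  have hwu2 : w ≠ w - 1 := by
    intro h
    have h2 : w - 1 + 1 = w := sub_add_cancel w 1
    rw [← h] at h2
    exact add_one_ne w h2
  have hu12 : w + 1 ≠ w - 1 := by
    intro h
    have h2 : w - 1 + 1 = w := sub_add_cancel w 1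
    rw [← h] at h2
    exact add_two_ne w h2
  obtain ⟨c, hc⟩ := part_nonempty hconn (w + 1)
  obtain ⟨d, hd⟩ := part_nonempty hconn (w - 1)
  have hcd : c ≠ d := hxne (by exact hu12) hc hd
  have hac := key _ hwu1 hu1 a ha c hc
  have hbc := key _ hwu1 hu1 b hb c hc
  have had := key _ hwu2 hu2 a ha d hd
  have hbd := key _ hwu2 hu2 b hb d hd
  rcases hac with h1 | h1 <;> rcases hbc with h2 | h2
  · exact hab (h1.trans h2.symm)
  · rcases had with h3 | h3
    · rcases hbd with h4 | h4
      · exact hab (h3.trans h4.symm)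
      · exact hcd (h2.trans h4.symm)
    · rcases hbd with h4 | h4
      · exact add_four_ne b (h4.trans (by rw [h3, h1, h2])).symm
      · exact hab (add_right_cancel (h3.symm.trans h4))
  · rcases had with h3 | h3
    · rcases hbd with h4 | h4
      · exact hab (h3.trans h4.symm)
      · exact add_four_ne a (h3.trans (by rw [h4, h2, h1])).symm
    · rcases hbd with h4 | h4
      · exact hcd (h1.trans h3.symm)
      · exact hab (add_right_cancel (h3.symm.trans h4))
  · exact hab (add_right_cancel (h1.symm.trans h2))

lemma compl_cyc_connected (q : ℕ) (hq : 5 ≤ q) : ((cycleGraph q)ᶜ).Connected := by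
  obtain ⟨n, rfl⟩ : ∃ n, q = n + 5 := ⟨q - 5, by omega⟩
  rw [connected_iff]
  refine ⟨?_, inferInstance⟩
  have step : ∀ u : Fin (n+5), ((cycleGraph (n+5))ᶜ).Reachable u (u + 1) := by
    intro u
    have h1 : ((cycleGraph (n+5))ᶜ).Adj u (u + 1 + 1 + 1) := by
      rw [compl_adj]
      refine ⟨fun h => add_three_ne u h.symm, ?_⟩
      rw [cyc_adj]
      rintro (h | h)
      · exact add_four_ne u h.symm
      · exact add_two_ne (u + 1) h
    have h2 : ((cycleGraph (n+5))ᶜ).Adj (u + 1 + 1 + 1) (u + 1) := by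
      rw [compl_adj]
      refine ⟨fun h => add_two_ne (u + 1) h, ?_⟩
      rw [cyc_adj]
      rintro (h | h)
      · exact add_one_ne (u + 1 + 1) h
      · exact add_three_ne (u + 1) h.symm
    exact h1.reachable.trans h2.reachable
  intro u v
  by_cases huv : u = v
  · subst huv; rfl
  by_cases hadj : ((cycleGraph (n+5))ᶜ).Adj u v
  · exact hadj.reachable
  · have hc : (cycleGraph (n+5)).Adj u v := by
      by_contra hn
      exact hadj ((compl_adj _ _ _).2 ⟨huv, hn⟩)
    rw [cyc_adj] at hc
    rcases hc with h | h
    · rw [h]; exact (step v).symm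
    · rw [h]; exact step u

/-- Let `p ≥ 3`. For every `q > p`, the graph `D_p` is not a contraction
of the complement of the cycle `C_q`. Consequently, the class of connected
`D_p`-contraction-free graphs contains infinitely many pairwise incomparable graphs
(an infinite antichain of the contraction relation). -/
theorem Dgraph_not_contraction_antihole (p : ℕ) (hp : 3 ≤ p) :
    (∀ q : ℕ, p < q → ¬ IsContraction (Dgraph p) (SimpleGraph.cycleGraph q)ᶜ) ∧
    (∃ f : ℕ → FinGraph,
      (∀ k, (f k).2.Connected ∧ ¬ IsContraction (Dgraph p) (f k).2) ∧
      (∀ i j : ℕ, i ≠ j → ¬ FinGraph.Contr (f i) (f j))) := by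
  constructor
  · intro q hq
    exact not_Dp_contraction p q hp (by omega)
  · refine ⟨fun k => ⟨p + 3 + k, (cycleGraph (p + 3 + k))ᶜ⟩,
      fun k => ⟨compl_cyc_connected _ (by omega), not_Dp_contraction p _ hp (by omega)⟩, ?_⟩
    intro i j hij hcontr
    have hcontr' : IsContraction (cycleGraph (p + 3 + i))ᶜ (cycleGraph (p + 3 + j))ᶜ := hcontr
    rcases lt_or_gt_of_ne hij with h | h
    · exact not_compl_cyc _ _ (by omega) (by omega) hcontr'
    · have := card_le_of_contraction hcontr'
      omega
end

section
/- Let H be a connected graph. If the class of connected H-contraction-free graphs is well-quasi-ordered by the contraction relation, then H is a contraction of the diamond D_2 (the graph obtained from K_4 by deleting one edge). -/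
open SimpleGraph

/-! ### Auxiliary material -/

/-- The cocktail party graph on `2n+6` vertices: `u ~ v` iff they lie in different
pairs `{2k, 2k+1}`. -/
def CPgraph (n : ℕ) : SimpleGraph (Fin (2*n+6)) where
  Adj u v := u.val / 2 ≠ v.val / 2
  symm := ⟨by intro u v h; omega⟩
  loopless := ⟨by intro u h; omega⟩

/-- The complete bipartite graph `K_{2,n+2}` on `n+4` vertices: hubs `0, 1`,
rights `2, …, n+3`. -/
def K2graph (n : ℕ) : SimpleGraph (Fin (n+4)) where
  Adj u v := (u.val < 2 ∧ 2 ≤ v.val) ∨ (v.val < 2 ∧ 2 ≤ u.val)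
  symm := ⟨by intro u v h; tauto⟩
  loopless := ⟨by intro u h; omega⟩

lemma cp_adj {n : ℕ} {u v : Fin (2*n+6)} : (CPgraph n).Adj u v ↔ u.val / 2 ≠ v.val / 2 :=
  Iff.rfl

lemma k2_adj {n : ℕ} {u v : Fin (n+4)} :
    (K2graph n).Adj u v ↔ (u.val < 2 ∧ 2 ≤ v.val) ∨ (v.val < 2 ∧ 2 ≤ u.val) := Iff.rfl

instance : DecidableRel (Dgraph 2).Adj := fun x y =>
  decidable_of_iff _ (SimpleGraph.fromRel_adj _ x y).symm

lemma star_connected {V : Type*} (G : SimpleGraph V) (S : Set V) (c : V) (hc : c ∈ S)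
    (h : ∀ x ∈ S, x = c ∨ G.Adj c x) : (G.induce S).Connected := by
  rw [connected_iff]
  refine ⟨?_, ⟨⟨c, hc⟩⟩⟩
  have key : ∀ x : S, (G.induce S).Reachable x ⟨c, hc⟩ := by
    rintro ⟨x, hx⟩
    rcases h x hx with rfl | hadj
    · rfl
    · exact (SimpleGraph.Adj.reachable (by simpa using hadj.symm))
  intro x y
  exact (key x).trans (key y).symm

lemma singleton_connected {V : Type*} (G : SimpleGraph V) (a : V) :
    (G.induce {a}).Connected :=
  star_connected G {a} a rfl (fun _ hx => Or.inl hx)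

lemma induce_connected_congr {V : Type*} (G : SimpleGraph V) {S T : Set V} (h : S = T)
    (hT : (G.induce T).Connected) : (G.induce S).Connected := by subst h; exact hT

lemma subsingleton_of_connected_of_no_edge {V : Type*} {G : SimpleGraph V} {S : Set V}
    (h : (G.induce S).Connected) (hS : ∀ a ∈ S, ∀ b ∈ S, ¬ G.Adj a b) : S.Subsingleton := by
  intro a ha b hb
  obtain ⟨w⟩ := h.preconnected ⟨a, ha⟩ ⟨b, hb⟩
  cases w with
  | nil => rfl
  | cons hadj p =>
    exact absurd (by simpa using hadj) (fun h' => hS _ ha _ (Subtype.mem _) h')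

lemma set_nonempty_of_induce_connected {V : Type*} {G : SimpleGraph V} {S : Set V}
    (h : (G.induce S).Connected) : S.Nonempty :=
  Set.nonempty_coe_sort.mp h.nonempty

lemma CPgraph_connected (n : ℕ) : (CPgraph n).Connected := by
  rw [connected_iff]
  refine ⟨?_, ⟨⟨0, by omega⟩⟩⟩
  have key : ∀ x : Fin (2*n+6), (CPgraph n).Reachable x ⟨0, by omega⟩ := by
    intro x
    by_cases h : x.val / 2 = 0
    · by_cases h0 : x = ⟨0, by omega⟩
      · rw [h0]
      · have h2 : (CPgraph n).Adj x ⟨2, by omega⟩ := by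
          show x.val / 2 ≠ 2/2; omega
        have h3 : (CPgraph n).Adj ⟨2, by omega⟩ ⟨0, by omega⟩ := by
          show (2:ℕ)/2 ≠ 0/2; omega
        exact h2.reachable.trans h3.reachable
    · exact (SimpleGraph.Adj.reachable (by show x.val/2 ≠ 0/2; omega))
  intro x y
  exact (key x).trans (key y).symm

lemma K2graph_connected (n : ℕ) : (K2graph n).Connected := by
  rw [connected_iff]
  refine ⟨?_, ⟨⟨0, by omega⟩⟩⟩
  have key : ∀ x : Fin (n+4), (K2graph n).Reachable x ⟨0, by omega⟩ := by
    intro x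
    by_cases h : 2 ≤ x.val
    · exact (SimpleGraph.Adj.reachable (by right; exact ⟨show (0:ℕ) < 2 by omega, h⟩))
    · by_cases h0 : x = ⟨0, by omega⟩
      · rw [h0]
      · have h2 : (K2graph n).Adj x ⟨2, by omega⟩ := Or.inl ⟨by omega, show (2:ℕ) ≤ 2 by omega⟩
        have h3 : (K2graph n).Adj ⟨2, by omega⟩ ⟨0, by omega⟩ :=
          Or.inr ⟨show (0:ℕ) < 2 by omega, show (2:ℕ) ≤ 2 by omega⟩
        exact h2.reachable.trans h3.reachable
  intro x y
  exact (key x).trans (key y).symm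

/-- Two nonempty disjoint sets in the cocktail party graph with no edge between them
are matched singletons. -/
lemma CP_nonadj_parts {n : ℕ} {P Q : Set (Fin (2*n+6))}
    (hPne : P.Nonempty) (hQne : Q.Nonempty)
    (hdisj : ∀ x, x ∈ P → x ∉ Q)
    (hno : ∀ a ∈ P, ∀ b ∈ Q, ¬ (CPgraph n).Adj a b) :
    (∃ p, P = {p}) ∧ (∃ q, Q = {q}) ∧ ∀ p ∈ P, ∀ q ∈ Q, p.val/2 = q.val/2 := by
  have key : ∀ p ∈ P, ∀ q ∈ Q, p.val/2 = q.val/2 := by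
    intro p hp q hq
    have := hno p hp q hq
    rw [cp_adj] at this
    omega
  obtain ⟨p, hp⟩ := hPne
  obtain ⟨q, hq⟩ := hQne
  have hPs : P.Subsingleton := by
    intro a ha b hb
    have h1 := key a ha q hq
    have h2 := key b hb q hq
    have h3 : a ≠ q := fun h => hdisj a ha (h ▸ hq)
    have h4 : b ≠ q := fun h => hdisj b hb (h ▸ hq)
    by_contra hne
    have v3 : a.val ≠ q.val := fun h => h3 (Fin.ext h)
    have v4 : b.val ≠ q.val := fun h => h4 (Fin.ext h)
    have v5 : a.val ≠ b.val := fun h => hne (Fin.ext h)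
    omega
  have hQs : Q.Subsingleton := by
    intro a ha b hb
    have h1 := key p hp a ha
    have h2 := key p hp b hb
    have h3 : a ≠ p := fun h => hdisj p hp (h ▸ ha)
    have h4 : b ≠ p := fun h => hdisj p hp (h ▸ hb)
    by_contra hne
    have v3 : a.val ≠ p.val := fun h => h3 (Fin.ext h)
    have v4 : b.val ≠ p.val := fun h => h4 (Fin.ext h)
    have v5 : a.val ≠ b.val := fun h => hne (Fin.ext h)
    omega
  exact ⟨⟨p, hPs.eq_singleton_of_mem hp⟩, ⟨q, hQs.eq_singleton_of_mem hq⟩, key⟩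

section ModelHelpers
variable {W : Type*} {H : SimpleGraph W}

lemma model_disjoint {V : Type*} {G : SimpleGraph V} {φ : W → Set V}
    (hm : IsContractionModel G H φ) {w w' : W} (hne : w ≠ w') :
    ∀ x, x ∈ φ w → x ∉ φ w' := by
  intro x hx hx'
  obtain ⟨-, hpart, -⟩ := hm
  obtain ⟨u, -, hu⟩ := hpart x
  exact hne ((hu w hx).trans (hu w' hx').symm)

lemma model_no_edge {V : Type*} {G : SimpleGraph V} {φ : W → Set V}
    (hm : IsContractionModel G H φ) {w w' : W} (hne : w ≠ w') (hnadj : ¬ H.Adj w w') :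
    ∀ a ∈ φ w, ∀ b ∈ φ w', ¬ G.Adj a b := by
  intro a ha b hb hab
  exact hnadj ((hm.2.2 w w' hne).mpr ⟨a, ha, b, hb, hab⟩)

/-- In a model in the cocktail party graph, the parts of two distinct nonadjacent
vertices are matched singletons. -/
lemma CP_model_parts {n : ℕ} {φ : W → Set (Fin (2*n+6))}
    (hm : IsContractionModel (CPgraph n) H φ) {w w' : W} (hne : w ≠ w')
    (hnadj : ¬ H.Adj w w') :
    (∃ p, φ w = {p}) ∧ (∃ q, φ w' = {q}) ∧
      ∀ p ∈ φ w, ∀ q ∈ φ w', p.val/2 = q.val/2 :=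
  CP_nonadj_parts (set_nonempty_of_induce_connected (hm.1 w))
    (set_nonempty_of_induce_connected (hm.1 w'))
    (model_disjoint hm hne) (model_no_edge hm hne hnadj)

end ModelHelpers

/-- The cocktail party graphs form an antichain with respect to contraction. -/
lemma CP_antichain {m n : ℕ} (h : m < n) : ¬ IsContraction (CPgraph m) (CPgraph n) := by
  rintro ⟨φ, hm⟩
  have hsing : ∀ w : Fin (2*m+6), ∃ p, φ w = {p} := by
    intro w
    set w' : Fin (2*m+6) := ⟨2*(w.val/2) + (1 - w.val % 2), by omega⟩ with hw'
    have hne : w ≠ w' := by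
      intro hEq
      have : w.val = 2*(w.val/2) + (1 - w.val % 2) := congrArg Fin.val hEq
      omega
    have hnadj : ¬ (CPgraph m).Adj w w' := by rw [cp_adj]; simp only [hw']; omega
    exact (CP_model_parts hm hne hnadj).1
  choose p hp using hsing
  have hsurj : Function.Surjective p := by
    intro v
    obtain ⟨w, hw, -⟩ := hm.2.1 v
    exact ⟨w, ((hp w) ▸ hw : v ∈ ({p w} : Set _)).symm⟩
  have := Fintype.card_le_of_surjective p hsurj
  simp only [Fintype.card_fin] at this
  omega

/-- A connected part with no edges to another nonempty disjoint part in `K2graph`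
is a singleton. -/
lemma K2_nonadj_part {n : ℕ} {P Q : Set (Fin (n+4))}
    (hPconn : ((K2graph n).induce P).Connected) (hQne : Q.Nonempty)
    (hno : ∀ a ∈ P, ∀ b ∈ Q, ¬ (K2graph n).Adj a b) :
    ∃ p, P = {p} := by
  have hPne := set_nonempty_of_induce_connected hPconn
  by_cases hedge : ∃ a ∈ P, ∃ b ∈ P, (K2graph n).Adj a b
  · exfalso
    obtain ⟨a, ha, b, hb, hab⟩ := hedge
    obtain ⟨q, hq⟩ := hQne
    have h1 := hno a ha q hq
    have h2 := hno b hb q hq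
    rw [k2_adj] at hab h1 h2
    omega
  · push_neg at hedge
    have := subsingleton_of_connected_of_no_edge hPconn hedge
    obtain ⟨p, hp⟩ := hPne
    exact ⟨p, this.eq_singleton_of_mem hp⟩

/-- The graphs `K_{2,n+2}` form an antichain with respect to contraction. -/
lemma K2_antichain {m n : ℕ} (h : m < n) : ¬ IsContraction (K2graph m) (K2graph n) := by
  rintro ⟨φ, hm⟩
  have hsing : ∀ w : Fin (m+4), ∃ p, φ w = {p} := by
    intro w
    have : ∃ w' : Fin (m+4), w' ≠ w ∧ ¬ (K2graph m).Adj w w' := by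
      by_cases hw : w.val < 2
      · refine ⟨⟨1 - w.val, by omega⟩, ?_, ?_⟩
        · intro hEq
          have : (1 - w.val) = w.val := congrArg Fin.val hEq
          omega
        · rw [k2_adj]; simp only []; omega
      · refine ⟨⟨if w.val = 2 then 3 else 2, by split <;> omega⟩, ?_, ?_⟩
        · intro hEq
          have : (if w.val = 2 then 3 else 2) = w.val := congrArg Fin.val hEq
          split at this <;> omega
        · rw [k2_adj]; simp only []; split <;> omega
    obtain ⟨w', hne, hnadj⟩ := this
    exact K2_nonadj_part (hm.1 w) (set_nonempty_of_induce_connected (hm.1 w'))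
      (model_no_edge hm (Ne.symm hne) hnadj)
  choose p hp using hsing
  have hsurj : Function.Surjective p := by
    intro v
    obtain ⟨w, hw, -⟩ := hm.2.1 v
    exact ⟨w, ((hp w) ▸ hw : v ∈ ({p w} : Set _)).symm⟩
  have := Fintype.card_le_of_surjective p hsurj
  simp only [Fintype.card_fin] at this
  omega

lemma pair_connected_D2 (p q : Fin 2 ⊕ Fin 2) (h : (Dgraph 2).Adj p q) :
    ((Dgraph 2).induce {p, q}).Connected := by
  refine star_connected _ _ p (by simp) ?_
  intro x hx
  simp only [Set.mem_insert_iff, Set.mem_singleton_iff] at hx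
  rcases hx with rfl | rfl
  · exact Or.inl rfl
  · exact Or.inr h

/-- Any graph on a type with a single element is a contraction of the diamond. -/
lemma contraction_D2_of_subsingleton {W : Type*} {H : SimpleGraph W} (w₀ : W)
    (hsub : ∀ w : W, w = w₀) : IsContraction H (Dgraph 2) := by
  refine ⟨fun _ => Set.univ, ?_, ?_, ?_⟩
  · intro w
    refine star_connected _ _ (Sum.inl 0) trivial ?_
    intro x _
    have key : ∀ y : Fin 2 ⊕ Fin 2, y = Sum.inl 0 ∨ (Dgraph 2).Adj (Sum.inl 0) y := by decide
    exact key x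
  · exact fun v => ⟨w₀, trivial, fun w _ => hsub w⟩
  · intro w w' hne
    exact absurd ((hsub w).trans (hsub w').symm) hne

/-- A single edge is a contraction of the diamond. -/
lemma contraction_D2_of_edge {W : Type*} {H : SimpleGraph W} {a b : W}
    (hab : a ≠ b) (hcov : ∀ w, w = a ∨ w = b) (Hab : H.Adj a b) :
    IsContraction H (Dgraph 2) := by
  classical
  refine ⟨fun w => if w = a then {Sum.inl 0, Sum.inl 1, Sum.inr 0} else {Sum.inr 1},
    ?_, ?_, ?_⟩
  · intro w
    rcases hcov w with rfl|rfl
    · refine induce_connected_congr _ (T := {Sum.inl 0, Sum.inl 1, Sum.inr 0}) (by simp) ?_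
      refine star_connected _ _ (Sum.inl 0) (by simp) ?_
      intro x hx
      simp only [Set.mem_insert_iff, Set.mem_singleton_iff] at hx
      rcases hx with rfl | rfl | rfl
      · exact Or.inl rfl
      · exact Or.inr (by decide)
      · exact Or.inr (by decide)
    · exact induce_connected_congr _ (T := {Sum.inr 1}) (by simp [Ne.symm hab])
        (singleton_connected _ _)
  · rintro (i | i) <;> fin_cases i
    · refine ⟨a, by simp, ?_⟩
      intro w hw
      rcases hcov w with rfl|rfl
      · rfl
      · simp [Ne.symm hab] at hw
    · refine ⟨a, by simp, ?_⟩
      intro w hw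
      rcases hcov w with rfl|rfl
      · rfl
      · simp [Ne.symm hab] at hw
    · refine ⟨a, by simp, ?_⟩
      intro w hw
      rcases hcov w with rfl|rfl
      · rfl
      · simp [Ne.symm hab] at hw
    · refine ⟨b, by simp [Ne.symm hab], ?_⟩
      intro w hw
      rcases hcov w with rfl|rfl
      · simp at hw
      · rfl
  · intro w w' hne
    have Hba := Hab.symm
    have D1 : (Dgraph 2).Adj (Sum.inl 0) (Sum.inr 1) := by decide
    have D2 : (Dgraph 2).Adj (Sum.inr 1) (Sum.inl 0) := by decide
    rcases hcov w with rfl|rfl <;> rcases hcov w' with rfl|rfl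
    · exact absurd rfl hne
    · exact iff_of_true Hab ⟨Sum.inl 0, by simp, Sum.inr 1, by simp [Ne.symm hab], D1⟩
    · exact iff_of_true Hba ⟨Sum.inr 1, by simp [Ne.symm hab], Sum.inl 0, by simp, D2⟩
    · exact absurd rfl hne

/-- The path `P₃` (with centre `c`) is a contraction of the diamond. -/
lemma contraction_D2_of_path {W : Type*} {H : SimpleGraph W} {c a b : W}
    (hca : c ≠ a) (hcb : c ≠ b) (hab : a ≠ b)
    (hcov : ∀ w, w = c ∨ w = a ∨ w = b)
    (Hca : H.Adj c a) (Hcb : H.Adj c b) (Hab : ¬ H.Adj a b) :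
    IsContraction H (Dgraph 2) := by
  classical
  refine ⟨fun w => if w = c then {Sum.inl 0, Sum.inl 1} else if w = a then {Sum.inr 0}
    else {Sum.inr 1}, ?_, ?_, ?_⟩
  · intro w
    rcases hcov w with rfl|rfl|rfl
    · exact induce_connected_congr _ (T := {Sum.inl 0, Sum.inl 1}) (by simp)
        (pair_connected_D2 _ _ (by decide))
    · exact induce_connected_congr _ (T := {Sum.inr 0}) (by simp [Ne.symm hca])
        (singleton_connected _ _)
    · exact induce_connected_congr _ (T := {Sum.inr 1})
        (by simp [Ne.symm hcb, Ne.symm hab]) (singleton_connected _ _)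
  · rintro (i | i) <;> fin_cases i
    · refine ⟨c, by simp, ?_⟩
      intro w hw
      rcases hcov w with rfl|rfl|rfl
      · rfl
      · simp [Ne.symm hca] at hw
      · simp [Ne.symm hcb, Ne.symm hab] at hw
    · refine ⟨c, by simp, ?_⟩
      intro w hw
      rcases hcov w with rfl|rfl|rfl
      · rfl
      · simp [Ne.symm hca] at hw
      · simp [Ne.symm hcb, Ne.symm hab] at hw
    · refine ⟨a, by simp [Ne.symm hca], ?_⟩
      intro w hw
      rcases hcov w with rfl|rfl|rfl
      · simp at hw
      · rfl
      · simp [Ne.symm hcb, Ne.symm hab] at hw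
    · refine ⟨b, by simp [Ne.symm hcb, Ne.symm hab], ?_⟩
      intro w hw
      rcases hcov w with rfl|rfl|rfl
      · simp at hw
      · simp [Ne.symm hca] at hw
      · rfl
  · intro w w' hne
    have Hac := Hca.symm
    have Hbc := Hcb.symm
    have Hba : ¬ H.Adj b a := fun h => Hab h.symm
    rcases hcov w with rfl|rfl|rfl <;> rcases hcov w' with rfl|rfl|rfl
    · exact absurd rfl hne
    · exact iff_of_true Hca ⟨Sum.inl 0, by simp, Sum.inr 0, by simp [Ne.symm hca], by decide⟩
    · exact iff_of_true Hcb ⟨Sum.inl 0, by simp, Sum.inr 1,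
        by simp [Ne.symm hcb, Ne.symm hab], by decide⟩
    · exact iff_of_true Hac ⟨Sum.inr 0, by simp [Ne.symm hca], Sum.inl 0, by simp, by decide⟩
    · exact absurd rfl hne
    · refine iff_of_false Hab ?_
      rintro ⟨x, hx, y, hy, hxy⟩
      simp [Ne.symm hca] at hx
      simp [Ne.symm hcb, Ne.symm hab] at hy
      subst hx; subst hy
      exact absurd hxy (by decide)
    · exact iff_of_true Hbc ⟨Sum.inr 1, by simp [Ne.symm hcb, Ne.symm hab],
        Sum.inl 0, by simp, by decide⟩
    · refine iff_of_false Hba ?_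
      rintro ⟨x, hx, y, hy, hxy⟩
      simp [Ne.symm hcb, Ne.symm hab] at hx
      simp [Ne.symm hca] at hy
      subst hx; subst hy
      exact absurd hxy (by decide)
    · exact absurd rfl hne

/-- The triangle is a contraction of the diamond. -/
lemma contraction_D2_of_triangle {W : Type*} {H : SimpleGraph W} {a b c : W}
    (hab : a ≠ b) (hac : a ≠ c) (hbc : b ≠ c)
    (hcov : ∀ w, w = a ∨ w = b ∨ w = c)
    (Hab : H.Adj a b) (Hac : H.Adj a c) (Hbc : H.Adj b c) :
    IsContraction H (Dgraph 2) := by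
  classical
  refine ⟨fun w => if w = a then {Sum.inl 0, Sum.inr 1} else if w = b then {Sum.inl 1}
    else {Sum.inr 0}, ?_, ?_, ?_⟩
  · intro w
    rcases hcov w with rfl|rfl|rfl
    · exact induce_connected_congr _ (T := {Sum.inl 0, Sum.inr 1}) (by simp)
        (pair_connected_D2 _ _ (by decide))
    · exact induce_connected_congr _ (T := {Sum.inl 1}) (by simp [Ne.symm hab])
        (singleton_connected _ _)
    · exact induce_connected_congr _ (T := {Sum.inr 0})
        (by simp [Ne.symm hac, Ne.symm hbc]) (singleton_connected _ _)
  · rintro (i | i) <;> fin_cases i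
    · refine ⟨a, by simp, ?_⟩
      intro w hw
      rcases hcov w with rfl|rfl|rfl
      · rfl
      · simp [Ne.symm hab] at hw
      · simp [Ne.symm hac, Ne.symm hbc] at hw
    · refine ⟨b, by simp [Ne.symm hab], ?_⟩
      intro w hw
      rcases hcov w with rfl|rfl|rfl
      · simp at hw
      · rfl
      · simp [Ne.symm hac, Ne.symm hbc] at hw
    · refine ⟨c, by simp [Ne.symm hac, Ne.symm hbc], ?_⟩
      intro w hw
      rcases hcov w with rfl|rfl|rfl
      · simp at hw
      · simp [Ne.symm hab] at hw
      · rfl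
    · refine ⟨a, by simp, ?_⟩
      intro w hw
      rcases hcov w with rfl|rfl|rfl
      · rfl
      · simp [Ne.symm hab] at hw
      · simp [Ne.symm hac, Ne.symm hbc] at hw
  · intro w w' hne
    have Hba := Hab.symm
    have Hca := Hac.symm
    have Hcb := Hbc.symm
    rcases hcov w with rfl|rfl|rfl <;> rcases hcov w' with rfl|rfl|rfl
    · exact absurd rfl hne
    · exact iff_of_true Hab ⟨Sum.inl 0, by simp, Sum.inl 1, by simp [Ne.symm hab], by decide⟩
    · exact iff_of_true Hac ⟨Sum.inl 0, by simp, Sum.inr 0,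
        by simp [Ne.symm hac, Ne.symm hbc], by decide⟩
    · exact iff_of_true Hba ⟨Sum.inl 1, by simp [Ne.symm hab], Sum.inl 0, by simp, by decide⟩
    · exact absurd rfl hne
    · exact iff_of_true Hbc ⟨Sum.inl 1, by simp [Ne.symm hab], Sum.inr 0,
        by simp [Ne.symm hac, Ne.symm hbc], by decide⟩
    · exact iff_of_true Hca ⟨Sum.inr 0, by simp [Ne.symm hac, Ne.symm hbc],
        Sum.inl 0, by simp, by decide⟩
    · exact iff_of_true Hcb ⟨Sum.inr 0, by simp [Ne.symm hac, Ne.symm hbc],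
        Sum.inl 1, by simp [Ne.symm hab], by decide⟩
    · exact absurd rfl hne

/-- The diamond pattern itself. -/
lemma contraction_D2_of_diamond {W : Type*} {H : SimpleGraph W} {a b c d : W}
    (hab : a ≠ b) (hac : a ≠ c) (had : a ≠ d) (hbc : b ≠ c) (hbd : b ≠ d) (hcd : c ≠ d)
    (hcov : ∀ w, w = a ∨ w = b ∨ w = c ∨ w = d)
    (Hab : H.Adj a b) (Hac : H.Adj a c) (Had : H.Adj a d) (Hbc : H.Adj b c)
    (Hbd : H.Adj b d) (Hcd : ¬ H.Adj c d) : IsContraction H (Dgraph 2) := by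
  classical
  refine ⟨fun w => if w = a then {Sum.inl 0} else if w = b then {Sum.inl 1}
    else if w = c then {Sum.inr 0} else {Sum.inr 1}, ?_, ?_, ?_⟩
  · intro w
    rcases hcov w with rfl|rfl|rfl|rfl
    · exact induce_connected_congr _ (T := {Sum.inl 0}) (by simp) (singleton_connected _ _)
    · exact induce_connected_congr _ (T := {Sum.inl 1}) (by simp [Ne.symm hab])
        (singleton_connected _ _)
    · exact induce_connected_congr _ (T := {Sum.inr 0}) (by simp [Ne.symm hac, Ne.symm hbc])
        (singleton_connected _ _)
    · exact induce_connected_congr _ (T := {Sum.inr 1})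
        (by simp [Ne.symm had, Ne.symm hbd, Ne.symm hcd]) (singleton_connected _ _)
  · rintro (i | i) <;> fin_cases i
    · refine ⟨a, by simp, ?_⟩
      intro w hw
      rcases hcov w with rfl|rfl|rfl|rfl <;>
        simp_all [hab, hac, had, hbc, hbd, hcd,
          Ne.symm hab, Ne.symm hac, Ne.symm had, Ne.symm hbc, Ne.symm hbd, Ne.symm hcd]
    · refine ⟨b, by simp [Ne.symm hab], ?_⟩
      intro w hw
      rcases hcov w with rfl|rfl|rfl|rfl <;>
        simp_all [hab, hac, had, hbc, hbd, hcd,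
          Ne.symm hab, Ne.symm hac, Ne.symm had, Ne.symm hbc, Ne.symm hbd, Ne.symm hcd]
    · refine ⟨c, by simp [Ne.symm hac, Ne.symm hbc], ?_⟩
      intro w hw
      rcases hcov w with rfl|rfl|rfl|rfl <;>
        simp_all [hab, hac, had, hbc, hbd, hcd,
          Ne.symm hab, Ne.symm hac, Ne.symm had, Ne.symm hbc, Ne.symm hbd, Ne.symm hcd]
    · refine ⟨d, by simp [Ne.symm had, Ne.symm hbd, Ne.symm hcd], ?_⟩
      intro w hw
      rcases hcov w with rfl|rfl|rfl|rfl <;>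
        simp_all [hab, hac, had, hbc, hbd, hcd,
          Ne.symm hab, Ne.symm hac, Ne.symm had, Ne.symm hbc, Ne.symm hbd, Ne.symm hcd]
  · have Hba := Hab.symm
    have Hca := Hac.symm
    have Hda := Had.symm
    have Hcb := Hbc.symm
    have Hdb := Hbd.symm
    have Hdc : ¬ H.Adj d c := fun h => Hcd h.symm
    have D1 : (Dgraph 2).Adj (Sum.inl 0) (Sum.inl 1) := by decide
    have D2 : (Dgraph 2).Adj (Sum.inl 1) (Sum.inl 0) := by decide
    have D3 : (Dgraph 2).Adj (Sum.inl 0) (Sum.inr 0) := by decide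
    have D4 : (Dgraph 2).Adj (Sum.inr 0) (Sum.inl 0) := by decide
    have D5 : (Dgraph 2).Adj (Sum.inl 0) (Sum.inr 1) := by decide
    have D6 : (Dgraph 2).Adj (Sum.inr 1) (Sum.inl 0) := by decide
    have D7 : (Dgraph 2).Adj (Sum.inl 1) (Sum.inr 0) := by decide
    have D8 : (Dgraph 2).Adj (Sum.inr 0) (Sum.inl 1) := by decide
    have D9 : (Dgraph 2).Adj (Sum.inl 1) (Sum.inr 1) := by decide
    have D10 : (Dgraph 2).Adj (Sum.inr 1) (Sum.inl 1) := by decide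
    have D11 : ¬ (Dgraph 2).Adj (Sum.inr 0) (Sum.inr 1) := by decide
    have D12 : ¬ (Dgraph 2).Adj (Sum.inr 1) (Sum.inr 0) := by decide
    intro w w' hne
    rcases hcov w with rfl|rfl|rfl|rfl <;> rcases hcov w' with rfl|rfl|rfl|rfl <;>
      simp_all [hab, hac, had, hbc, hbd, hcd,
        Ne.symm hab, Ne.symm hac, Ne.symm had, Ne.symm hbc, Ne.symm hbd, Ne.symm hcd]

/-- Let `H` be a connected graph. If the class of connected
`H`-contraction-free graphs is well-quasi-ordered by the contraction relation,
then `H` is a contraction of the diamond `D₂` (i.e. `K₄` minus an edge). -/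
theorem contraction_of_diamond_of_wqo {W : Type*} [Fintype W]
    (H : SimpleGraph W) (hH : H.Connected)
    (hwqo : WqoByContraction {G : FinGraph | G.2.Connected ∧ ¬ IsContraction H G.2}) :
    IsContraction H (Dgraph 2) := by
  classical
  set N := Fintype.card W with hN
  -- Step 1: H is a contraction of some big cocktail party graph.
  have hCP : ∃ k, IsContraction H (CPgraph (k + N)) := by
    by_contra hno
    push_neg at hno
    obtain ⟨i, j, hij, hcontr⟩ := hwqo (fun k => ⟨2*(k+N)+6, CPgraph (k+N)⟩)
      (fun k => ⟨CPgraph_connected _, hno k⟩)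
    exact CP_antichain (show i + N < j + N by omega) hcontr
  obtain ⟨k₁, φC, hmC⟩ := hCP
  -- (A): H has a universal vertex.
  have hA : ∃ w : W, ∀ w', w' ≠ w → H.Adj w w' := by
    by_contra hnoA
    push_neg at hnoA
    have hsing : ∀ w : W, ∃ p, φC w = {p} := by
      intro w
      obtain ⟨w', hne', hnadj⟩ := hnoA w
      exact (CP_model_parts hmC (Ne.symm hne') (fun h => hnadj h)).1
    choose p hp using hsing
    have hsurj : Function.Surjective p := by
      intro v
      obtain ⟨w, hw, -⟩ := hmC.2.1 v
      exact ⟨w, ((hp w) ▸ hw : v ∈ ({p w} : Set _)).symm⟩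
    have hcard := Fintype.card_le_of_surjective p hsurj
    simp only [Fintype.card_fin] at hcard
    omega
  -- (B): H has no independent set of size 3.
  have hB : ∀ x y z : W, x ≠ y → x ≠ z → y ≠ z →
      ¬H.Adj x y → ¬H.Adj x z → ¬H.Adj y z → False := by
    intro x y z hxy hxz hyz nxy nxz nyz
    obtain ⟨⟨px, hpx⟩, ⟨py, hpy⟩, key1⟩ := CP_model_parts hmC hxy nxy
    obtain ⟨-, ⟨pz, hpz⟩, key2⟩ := CP_model_parts hmC hxz nxz
    have key3 := (CP_model_parts hmC hyz nyz).2.2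
    have mx : px ∈ φC x := by rw [hpx]; rfl
    have my : py ∈ φC y := by rw [hpy]; rfl
    have mz : pz ∈ φC z := by rw [hpz]; rfl
    have e1 := key1 px mx py my
    have e2 := key2 px mx pz mz
    have e3 := key3 py my pz mz
    have d1 : px ≠ py := fun h => model_disjoint hmC hxy px mx (h ▸ my)
    have d2 : px ≠ pz := fun h => model_disjoint hmC hxz px mx (h ▸ mz)
    have d3 : py ≠ pz := fun h => model_disjoint hmC hyz py my (h ▸ mz)
    have v1 : px.val ≠ py.val := fun h => d1 (Fin.ext h)
    have v2 : px.val ≠ pz.val := fun h => d2 (Fin.ext h)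
    have v3 : py.val ≠ pz.val := fun h => d3 (Fin.ext h)
    omega
  -- Step 2: H is a contraction of some K_{2,k+2}.
  have hK2 : ∃ k, IsContraction H (K2graph k) := by
    by_contra hno
    push_neg at hno
    obtain ⟨i, j, hij, hcontr⟩ := hwqo (fun k => ⟨k+4, K2graph k⟩)
      (fun k => ⟨K2graph_connected _, hno k⟩)
    exact K2_antichain hij hcontr
  obtain ⟨k, φ, hm⟩ := hK2
  -- Analyse the model in K_{2,k+2}.
  obtain ⟨w₀, h0, hu0⟩ := hm.2.1 ⟨0, by omega⟩
  obtain ⟨w₁, h1, hu1⟩ := hm.2.1 ⟨1, by omega⟩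
  -- Every other part is a single "right" vertex.
  have hOther : ∀ w, w ≠ w₀ → w ≠ w₁ → ∃ r : Fin (k+4), 2 ≤ r.val ∧ φ w = {r} := by
    intro w hw0 hw1
    have hnohub : ∀ x ∈ φ w, 2 ≤ x.val := by
      intro x hx
      by_contra hc
      push_neg at hc
      interval_cases h : x.val
      · exact hw0 (hu0 w (by rwa [show (⟨0, by omega⟩ : Fin (k+4)) = x from (Fin.ext h.symm)]))
      · exact hw1 (hu1 w (by rwa [show (⟨1, by omega⟩ : Fin (k+4)) = x from (Fin.ext h.symm)]))
    have hnoedge : ∀ a ∈ φ w, ∀ b ∈ φ w, ¬ (K2graph k).Adj a b := by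
      intro a ha b hb hab
      have h2a := hnohub a ha
      have h2b := hnohub b hb
      rw [k2_adj] at hab
      omega
    have hsub := subsingleton_of_connected_of_no_edge (hm.1 w) hnoedge
    obtain ⟨r, hr⟩ := set_nonempty_of_induce_connected (hm.1 w)
    exact ⟨r, hnohub r hr, hsub.eq_singleton_of_mem hr⟩
  -- Every other vertex is adjacent (in H) to both hub vertices.
  have hAdj0 : ∀ w, w ≠ w₀ → w ≠ w₁ → H.Adj w₀ w ∧ H.Adj w₁ w := by
    intro w hw0 hw1
    obtain ⟨r, hr2, hr⟩ := hOther w hw0 hw1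
    constructor
    · exact (hm.2.2 w₀ w (Ne.symm hw0)).mpr
        ⟨⟨0, by omega⟩, h0, r, by rw [hr]; rfl, Or.inl ⟨show (0:ℕ) < 2 by omega, hr2⟩⟩
    · exact (hm.2.2 w₁ w (Ne.symm hw1)).mpr
        ⟨⟨1, by omega⟩, h1, r, by rw [hr]; rfl, Or.inl ⟨show (1:ℕ) < 2 by omega, hr2⟩⟩
  -- Distinct other vertices are nonadjacent in H.
  have hNoAdj : ∀ w w', w ≠ w₀ → w ≠ w₁ → w' ≠ w₀ → w' ≠ w₁ → w ≠ w' →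
      ¬ H.Adj w w' := by
    intro w w' hw0 hw1 hw0' hw1' hne hadj
    obtain ⟨r, hr2, hr⟩ := hOther w hw0 hw1
    obtain ⟨r', hr2', hr'⟩ := hOther w' hw0' hw1'
    obtain ⟨a, ha, b, hb, hab⟩ := (hm.2.2 w w' hne).mp hadj
    rw [hr, Set.mem_singleton_iff] at ha
    rw [hr', Set.mem_singleton_iff] at hb
    subst ha; subst hb
    rw [k2_adj] at hab
    omega
  by_cases hcase : w₀ = w₁
  · -- Both hubs in the same part: H is a star with at most 2 leaves.
    subst hcase
    by_cases hone : ∀ w, w = w₀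
    · exact contraction_D2_of_subsingleton w₀ hone
    push_neg at hone
    obtain ⟨u, hu⟩ := hone
    by_cases htwo : ∀ w, w = w₀ ∨ w = u
    · exact contraction_D2_of_edge (Ne.symm hu) htwo (hAdj0 u hu hu).1
    push_neg at htwo
    obtain ⟨v, hv0, hvu⟩ := htwo
    have hcov : ∀ w, w = w₀ ∨ w = u ∨ w = v := by
      intro w
      by_contra hc
      push_neg at hc
      obtain ⟨hw0, hwu, hwv⟩ := hc
      exact hB u v w (fun h => hvu h.symm) (fun h => hwu h.symm) (fun h => hwv h.symm)
        (hNoAdj u v hu hu hv0 hv0 (fun h => hvu h.symm))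
        (hNoAdj u w hu hu hw0 hw0 (fun h => hwu h.symm))
        (hNoAdj v w hv0 hv0 hw0 hw0 (fun h => hwv h.symm))
    exact contraction_D2_of_path (Ne.symm hu) (Ne.symm hv0) (Ne.symm hvu) hcov
      (hAdj0 u hu hu).1 (hAdj0 v hv0 hv0).1
      (hNoAdj u v hu hu hv0 hv0 (fun h => hvu h.symm))
  · -- Hubs in different parts.
    by_cases hadj : H.Adj w₀ w₁
    · by_cases hone : ∀ w, w = w₀ ∨ w = w₁
      · exact contraction_D2_of_edge hcase hone hadj
      push_neg at hone
      obtain ⟨u, hu0', hu1'⟩ := hone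
      by_cases htwo : ∀ w, w = w₀ ∨ w = w₁ ∨ w = u
      · exact contraction_D2_of_triangle hcase (Ne.symm hu0') (Ne.symm hu1') htwo hadj
          (hAdj0 u hu0' hu1').1 (hAdj0 u hu0' hu1').2
      push_neg at htwo
      obtain ⟨v, hv0, hv1, hvu⟩ := htwo
      have hcov : ∀ w, w = w₀ ∨ w = w₁ ∨ w = u ∨ w = v := by
        intro w
        by_contra hc
        push_neg at hc
        obtain ⟨hw0, hw1, hwu, hwv⟩ := hc
        exact hB u v w (fun h => hvu h.symm) (fun h => hwu h.symm) (fun h => hwv h.symm)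
          (hNoAdj u v hu0' hu1' hv0 hv1 (fun h => hvu h.symm))
          (hNoAdj u w hu0' hu1' hw0 hw1 (fun h => hwu h.symm))
          (hNoAdj v w hv0 hv1 hw0 hw1 (fun h => hwv h.symm))
      exact contraction_D2_of_diamond hcase (Ne.symm hu0') (Ne.symm hv0) (Ne.symm hu1')
        (Ne.symm hv1) (Ne.symm hvu) hcov hadj
        (hAdj0 u hu0' hu1').1 (hAdj0 v hv0 hv1).1
        (hAdj0 u hu0' hu1').2 (hAdj0 v hv0 hv1).2
        (hNoAdj u v hu0' hu1' hv0 hv1 (fun h => hvu h.symm))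
    · -- Hub parts nonadjacent: H must be the path P₃ centred at the universal vertex.
      obtain ⟨ws, hstar⟩ := hA
      have hs0 : ws ≠ w₀ := by
        rintro rfl
        exact hadj (hstar w₁ (Ne.symm hcase))
      have hs1 : ws ≠ w₁ := by
        rintro rfl
        exact hadj ((hstar w₀ hcase).symm)
      have hcov : ∀ w, w = ws ∨ w = w₀ ∨ w = w₁ := by
        intro w
        by_contra hc
        push_neg at hc
        obtain ⟨hws, hw0, hw1⟩ := hc
        exact hNoAdj ws w hs0 hs1 hw0 hw1 (Ne.symm hws) (hstar w hws)
      exact contraction_D2_of_path hs0 hs1 hcase hcov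
        (hstar w₀ (Ne.symm hs0)) (hstar w₁ (Ne.symm hs1)) hadj
end

section
/- Let G be a graph and let C be a (not necessarily induced) cycle in G. If C has at least one chord in G and at least one non-chord in G, then C has a chord {u,u'} and a non-chord {v,v'} that are crossing in C, i.e., u, v, u', v' are four distinct vertices appearing in this cyclic order along C. -/
open SimpleGraph

private def cycIdx {m : ℕ} (hm : 0 < m) (x : ℕ) : Fin m := ⟨x % m, Nat.mod_lt _ hm⟩

private lemma cycIdx_congr {m : ℕ} (hm : 0 < m) {x y : ℕ} (h : x % m = y % m) :
    cycIdx hm x = cycIdx hm y := Fin.ext h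

private lemma mod_two_mul {x m : ℕ} (h1 : m ≤ x) (h2 : x < 2 * m) : x % m = x - m := by
  rw [Nat.mod_eq_sub_mod h1, Nat.mod_eq_of_lt (by omega)]

/-- Key crossing lemma: if all pairs of crossing diagonals (in sorted position form)
have the same status under `P`, then for any cyclic quadruple `a, a+s, a+t, a+u`
the diagonals `{a, a+t}` and `{a+s, a+u}` have the same status. -/
private lemma cross_key {m : ℕ} (hm : 0 < m) (P : Fin m → Fin m → Prop)
    (hsymm : ∀ i j, P i j ↔ P j i)
    (H : ∀ i₁ i₂ i₃ i₄ : Fin m, i₁ < i₂ → i₂ < i₃ → i₃ < i₄ → (P i₁ i₃ ↔ P i₂ i₄))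
    (a s t u : ℕ) (ha : a < m) (h0 : 0 < s) (hst : s < t) (htu : t < u) (hu : u < m) :
    (P (cycIdx hm a) (cycIdx hm (a + t)) ↔ P (cycIdx hm (a + s)) (cycIdx hm (a + u))) := by
  have ea : a % m = a := Nat.mod_eq_of_lt ha
  rcases lt_or_ge (a + u) m with h4 | h4
  · have e2 : (a + s) % m = a + s := Nat.mod_eq_of_lt (by omega)
    have e3 : (a + t) % m = a + t := Nat.mod_eq_of_lt (by omega)
    have e4 : (a + u) % m = a + u := Nat.mod_eq_of_lt (by omega)
    exact H _ _ _ _ (by simp only [cycIdx, Fin.mk_lt_mk, ea, e2]; omega)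
      (by simp only [cycIdx, Fin.mk_lt_mk, e2, e3]; omega)
      (by simp only [cycIdx, Fin.mk_lt_mk, e3, e4]; omega)
  · rcases lt_or_ge (a + t) m with h3 | h3
    · -- order: (a+u)-m < a < a+s < a+t
      have e2 : (a + s) % m = a + s := Nat.mod_eq_of_lt (by omega)
      have e3 : (a + t) % m = a + t := Nat.mod_eq_of_lt (by omega)
      have e4 : (a + u) % m = a + u - m := mod_two_mul h4 (by omega)
      rw [hsymm (cycIdx hm (a + s)) (cycIdx hm (a + u))]
      exact (H (cycIdx hm (a + u)) (cycIdx hm a) (cycIdx hm (a + s)) (cycIdx hm (a + t))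
        (by simp only [cycIdx, Fin.mk_lt_mk, e4, ea]; omega)
        (by simp only [cycIdx, Fin.mk_lt_mk, ea, e2]; omega)
        (by simp only [cycIdx, Fin.mk_lt_mk, e2, e3]; omega)).symm
    · rcases lt_or_ge (a + s) m with h2 | h2
      · -- order: (a+t)-m < (a+u)-m < a < a+s
        have e2 : (a + s) % m = a + s := Nat.mod_eq_of_lt (by omega)
        have e3 : (a + t) % m = a + t - m := mod_two_mul h3 (by omega)
        have e4 : (a + u) % m = a + u - m := mod_two_mul h4 (by omega)
        rw [hsymm (cycIdx hm a) (cycIdx hm (a + t)),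
            hsymm (cycIdx hm (a + s)) (cycIdx hm (a + u))]
        exact H (cycIdx hm (a + t)) (cycIdx hm (a + u)) (cycIdx hm a) (cycIdx hm (a + s))
          (by simp only [cycIdx, Fin.mk_lt_mk, e3, e4]; omega)
          (by simp only [cycIdx, Fin.mk_lt_mk, e4, ea]; omega)
          (by simp only [cycIdx, Fin.mk_lt_mk, ea, e2]; omega)
      · -- order: (a+s)-m < (a+t)-m < (a+u)-m < a
        have e2 : (a + s) % m = a + s - m := mod_two_mul h2 (by omega)
        have e3 : (a + t) % m = a + t - m := mod_two_mul h3 (by omega)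
        have e4 : (a + u) % m = a + u - m := mod_two_mul h4 (by omega)
        rw [hsymm (cycIdx hm a) (cycIdx hm (a + t))]
        exact (H (cycIdx hm (a + s)) (cycIdx hm (a + t)) (cycIdx hm (a + u)) (cycIdx hm a)
          (by simp only [cycIdx, Fin.mk_lt_mk, e2, e3]; omega)
          (by simp only [cycIdx, Fin.mk_lt_mk, e3, e4]; omega)
          (by simp only [cycIdx, Fin.mk_lt_mk, e4, ea]; omega)).symm

/-- Let `C` be a (not necessarily induced) cycle in `G`, given by an
injective map `f : Fin (n+3) → V` with consecutive images adjacent (indices taken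
cyclically). If `C` has at least one chord and at least one non-chord in `G`, then it
has a chord and a non-chord that are crossing in `C`: there are positions
`i₁ < i₂ < i₃ < i₄` such that one of the pairs `{f i₁, f i₃}`, `{f i₂, f i₄}` is a chord
and the other is a non-chord. -/
theorem crossing_chord_nonchord {V : Type*} [Fintype V] (G : SimpleGraph V) (n : ℕ)
    (f : Fin (n + 3) → V) (hinj : Function.Injective f)
    (hcyc : ∀ i : Fin (n + 3), G.Adj (f i) (f (i + 1)))
    (hchord : ∃ i j : Fin (n + 3), i ≠ j ∧ j ≠ i + 1 ∧ i ≠ j + 1 ∧ G.Adj (f i) (f j))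
    (hnonchord : ∃ i j : Fin (n + 3), i ≠ j ∧ j ≠ i + 1 ∧ i ≠ j + 1 ∧ ¬ G.Adj (f i) (f j)) :
    ∃ i₁ i₂ i₃ i₄ : Fin (n + 3), i₁ < i₂ ∧ i₂ < i₃ ∧ i₃ < i₄ ∧
      ((G.Adj (f i₁) (f i₃) ∧ ¬ G.Adj (f i₂) (f i₄)) ∨
       (¬ G.Adj (f i₁) (f i₃) ∧ G.Adj (f i₂) (f i₄))) := by
  
  rcases Nat.eq_zero_or_pos n with hn | hn
  · subst hn
    exfalso
    obtain ⟨i, j, h1, h2, h3, -⟩ := hchord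
    have hi := i.isLt; have hj := j.isLt
    simp only [ne_eq, Fin.ext_iff, Fin.val_add, Fin.val_one] at h1 h2 h3
    omega
  · have hm : 0 < n + 3 := by omega
    have hm4 : 4 ≤ n + 3 := by omega
    by_contra hcon
    push_neg at hcon
    set P : Fin (n + 3) → Fin (n + 3) → Prop := fun i j => G.Adj (f i) (f j) with hP
    have hsymm : ∀ i j, P i j ↔ P j i := fun i j => SimpleGraph.adj_comm _ _ _
    have H : ∀ i₁ i₂ i₃ i₄ : Fin (n + 3), i₁ < i₂ → i₂ < i₃ → i₃ < i₄ →
        (P i₁ i₃ ↔ P i₂ i₄) := by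
      intro a b c d h1 h2 h3
      have := hcon a b c d h1 h2 h3
      simp only [hP]
      tauto
    set g : ℕ → Prop := fun k => P (cycIdx hm k) (cycIdx hm (k + 2)) with hg
    -- consecutive short diagonals cross, hence have equal status
    have hshort : ∀ k, g k ↔ g (k + 1) := by
      intro k
      have hk : k % (n + 3) < (n + 3) := Nat.mod_lt _ hm
      have := cross_key hm P hsymm H (k % (n + 3)) 1 2 3 hk (by omega) (by omega) (by omega)
        (by omega)
      rw [cycIdx_congr hm (Nat.mod_mod_of_dvd k dvd_rfl),
          cycIdx_congr hm (Nat.mod_add_mod k (n + 3) 2),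
          cycIdx_congr hm (Nat.mod_add_mod k (n + 3) 1),
          cycIdx_congr hm (Nat.mod_add_mod k (n + 3) 3)] at this
      exact this.trans (by rw [show k + 3 = (k + 1) + 2 by omega])
    have hstep : ∀ d k, g k ↔ g (k + d) := by
      intro d
      induction d with
      | zero => intro k; rfl
      | succ d ih =>
        intro k
        exact (ih k).trans ((hshort (k + d)).trans (by rw [show k + d + 1 = k + (d + 1) by omega]))
    have hconst : ∀ a b : ℕ, g a ↔ g b := by
      intro a b
      exact (hstep b a).trans (by rw [Nat.add_comm]; exact (hstep a b).symm)
    -- every diagonal crosses a short diagonal, hence has status `g 0`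
    have hdiag : ∀ x ℓ : ℕ, 2 ≤ ℓ → ℓ + 2 ≤ (n + 3) →
        (P (cycIdx hm x) (cycIdx hm (x + ℓ)) ↔ g 0) := by
      intro x ℓ hl1 hl2
      set a : ℕ := (x + (n + 3) - 1) % (n + 3) with hadef
      have ha : a < (n + 3) := Nat.mod_lt _ hm
      have key := cross_key hm P hsymm H a 1 2 (ℓ + 1) ha (by omega) (by omega) (by omega)
        (by omega)
      have e1 : (a + 1) % (n + 3) = x % (n + 3) := by
        rw [hadef, Nat.mod_add_mod, show x + (n + 3) - 1 + 1 = x + (n + 3) by omega, Nat.add_mod_right]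
      have e2 : (a + (ℓ + 1)) % (n + 3) = (x + ℓ) % (n + 3) := by
        rw [hadef, Nat.mod_add_mod, show x + (n + 3) - 1 + (ℓ + 1) = x + ℓ + (n + 3) by omega,
          Nat.add_mod_right]
      rw [cycIdx_congr hm e1, cycIdx_congr hm e2] at key
      exact key.symm.trans (hconst a 0)
    -- parametrize a diagonal `{i, j}` as `{i, i + ℓ}` with `2 ≤ ℓ ≤ (n + 3) - 2`
    have hparam : ∀ i j : Fin (n + 3), i ≠ j → j ≠ i + 1 → i ≠ j + 1 →
        ∃ ℓ, 2 ≤ ℓ ∧ ℓ + 2 ≤ (n + 3) ∧ i = cycIdx hm i.val ∧ j = cycIdx hm (i.val + ℓ) := by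
      intro i j h1 h2 h3
      have hi := i.isLt; have hj := j.isLt
      simp only [ne_eq, Fin.ext_iff, Fin.val_add, Fin.val_one] at h1 h2 h3
      have ei : (i.val + 1) % (n + 3) = if i.val + 1 < n + 3 then i.val + 1 else 0 := by
        split_ifs with h
        · exact Nat.mod_eq_of_lt h
        · rw [show i.val + 1 = n + 3 by omega, Nat.mod_self]
      have ej : (j.val + 1) % (n + 3) = if j.val + 1 < n + 3 then j.val + 1 else 0 := by
        split_ifs with h
        · exact Nat.mod_eq_of_lt h
        · rw [show j.val + 1 = n + 3 by omega, Nat.mod_self]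
      rw [ei] at h2; rw [ej] at h3
      refine ⟨if i.val ≤ j.val then j.val - i.val else j.val + (n + 3) - i.val, ?_, ?_, ?_, ?_⟩
      · split_ifs at h2 h3 ⊢ <;> omega
      · split_ifs at h2 h3 ⊢ <;> omega
      · exact Fin.ext (Nat.mod_eq_of_lt hi).symm
      · refine Fin.ext ?_
        show j.val = _ % (n + 3)
        split_ifs with h
        · rw [show i.val + (j.val - i.val) = j.val by omega, Nat.mod_eq_of_lt hj]
        · rw [show i.val + (j.val + (n + 3) - i.val) = j.val + (n + 3) by omega, Nat.add_mod_right,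
            Nat.mod_eq_of_lt hj]
    obtain ⟨i, j, h1, h2, h3, hadj⟩ := hchord
    obtain ⟨i', j', h1', h2', h3', hnadj⟩ := hnonchord
    obtain ⟨ℓ, hl1, hl2, hie, hje⟩ := hparam i j h1 h2 h3
    obtain ⟨ℓ', hl1', hl2', hie', hje'⟩ := hparam i' j' h1' h2' h3'
    have hg0 : g 0 := by
      rw [← hdiag i.val ℓ hl1 hl2, ← hie, ← hje]
      exact hadj
    have hng0 : ¬ g 0 := by
      rw [← hdiag i'.val ℓ' hl1' hl2', ← hie', ← hje']
      exact hnadj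
    exact hng0 hg0
end

section
/- Let ⟨H_1, …, H_p⟩ and ⟨G_1, …, G_q⟩ be sequences of rooted connected graphs with p ≥ 1, and suppose there is a strictly increasing function φ : {1,…,p} → {1,…,q} such that for every i, H_i is a rooted contraction of G_{φ(i)}. Then: (i) cycle(H_1,…,H_p) is a rooted contraction of cycle(G_1,…,G_q); (ii) clique(H_1,…,H_p) is a rooted contraction of clique(G_1,…,G_q); and (iii) stick(H_1,…,H_p) is a rooted contraction of stick(G_1,…,G_q). -/
open SimpleGraph

/-- A rooted graph: a finite graph with a distinguished vertex, its root. -/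
structure RootedGraph where
  V : Type
  [finV : Finite V]
  graph : SimpleGraph V
  root : V

attribute [instance] RootedGraph.finV

/-- `H` is a rooted contraction of `G`: there is a contraction model of `H` in `G` in
which the branch set of the root of `H` contains the root of `G`. -/
def RootedContraction (H G : RootedGraph) : Prop :=
  ∃ φ : H.V → Set G.V, IsContractionModel G.graph H.graph φ ∧ G.root ∈ φ H.root

/-- Relation describing the edges of the disjoint union of the rooted graphs
`Gs 0, …, Gs m`. -/
def sigmaAdjRel {m : ℕ} (Gs : Fin (m + 1) → RootedGraph)
    (x y : Σ i : Fin (m + 1), (Gs i).V) : Prop :=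
  ∃ (i : Fin (m + 1)) (a b : (Gs i).V),
    (Gs i).graph.Adj a b ∧ x = ⟨i, a⟩ ∧ y = ⟨i, b⟩

/-- `cycleC (G_0, …, G_m)`: the disjoint union of the `G_i`'s together with the edges
`{root G_i, root G_{i+1 mod m+1}}`; its root is the root of `G_0`. -/
def cycleC {m : ℕ} (Gs : Fin (m + 1) → RootedGraph) : RootedGraph where
  V := Σ i : Fin (m + 1), (Gs i).V
  graph := SimpleGraph.fromRel (fun x y => sigmaAdjRel Gs x y ∨
    ∃ i : Fin (m + 1), x = ⟨i, (Gs i).root⟩ ∧ y = ⟨i + 1, (Gs (i + 1)).root⟩)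
  root := ⟨0, (Gs 0).root⟩

/-- `cliqueC (G_0, …, G_m)`: the disjoint union of the `G_i`'s together with all edges
`{root G_i, root G_j}` for `i ≠ j`; its root is the root of `G_0`. -/
def cliqueC {m : ℕ} (Gs : Fin (m + 1) → RootedGraph) : RootedGraph where
  V := Σ i : Fin (m + 1), (Gs i).V
  graph := SimpleGraph.fromRel (fun x y => sigmaAdjRel Gs x y ∨
    ∃ i j : Fin (m + 1), i ≠ j ∧ x = ⟨i, (Gs i).root⟩ ∧ y = ⟨j, (Gs j).root⟩)
  root := ⟨0, (Gs 0).root⟩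

/-- `stickC (G_0, …, G_m)`: the disjoint union of the `G_i`'s with all the roots
identified into a single vertex (represented by `none`), which is the new root. -/
def stickC {m : ℕ} (Gs : Fin (m + 1) → RootedGraph) : RootedGraph :=
  haveI : ∀ i : Fin (m + 1), Finite {v : (Gs i).V // v ≠ (Gs i).root} :=
    fun _ => Subtype.finite
  haveI : Finite (Option (Σ i : Fin (m + 1), {v : (Gs i).V // v ≠ (Gs i).root})) := by
    cases nonempty_fintype (Σ i : Fin (m + 1), {v : (Gs i).V // v ≠ (Gs i).root})
    infer_instance
  { V := Option (Σ i : Fin (m + 1), {v : (Gs i).V // v ≠ (Gs i).root})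
    graph := SimpleGraph.fromRel (fun x y =>
    (∃ (i : Fin (m + 1)) (a b : {v : (Gs i).V // v ≠ (Gs i).root}),
      (Gs i).graph.Adj a.1 b.1 ∧ x = some ⟨i, a⟩ ∧ y = some ⟨i, b⟩) ∨
    (∃ (i : Fin (m + 1)) (b : {v : (Gs i).V // v ≠ (Gs i).root}),
      (Gs i).graph.Adj (Gs i).root b.1 ∧ x = none ∧ y = some ⟨i, b⟩))
    root := none }
section Helpers

open SimpleGraph

variable {m : ℕ}

lemma cycleC_adj_same (Gs : Fin (m+1) → RootedGraph) {i : Fin (m+1)} {a b : (Gs i).V} :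
    (cycleC Gs).graph.Adj ⟨i, a⟩ ⟨i, b⟩ ↔ (Gs i).graph.Adj a b := by
  show (SimpleGraph.fromRel _).Adj _ _ ↔ _
  erw [SimpleGraph.fromRel_adj]
  constructor
  · rintro ⟨hne, h | h⟩ <;>
    · rcases h with ⟨k, a', b', hadj, hx, hy⟩ | ⟨k, hx, hy⟩
      · simp only [Sigma.mk.inj_iff] at hx hy
        obtain ⟨rfl, ha⟩ := hx; obtain ⟨-, hb⟩ := hy
        rw [heq_eq_eq] at ha hb; subst ha; subst hb
        first | exact hadj | exact hadj.symm
      · simp only [Sigma.mk.inj_iff] at hx hy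
        obtain ⟨rfl, ha⟩ := hx
        obtain ⟨hk, hb⟩ := hy
        rw [heq_eq_eq] at ha
        rw [← hk] at hb
        rw [heq_eq_eq] at hb
        subst ha; subst hb
        exact absurd rfl hne
  · intro h
    refine ⟨?_, Or.inl (Or.inl ⟨i, a, b, h, rfl, rfl⟩)⟩
    intro hc
    have := (Sigma.mk.inj_iff.mp hc).2
    rw [heq_eq_eq] at this
    exact h.ne this

lemma cycleC_adj_ne (Gs : Fin (m+1) → RootedGraph) {i j : Fin (m+1)} (hij : i ≠ j)
    {a : (Gs i).V} {b : (Gs j).V} :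
    (cycleC Gs).graph.Adj ⟨i, a⟩ ⟨j, b⟩ ↔
      a = (Gs i).root ∧ b = (Gs j).root ∧ (j = i + 1 ∨ i = j + 1) := by
  show (SimpleGraph.fromRel _).Adj _ _ ↔ _
  erw [SimpleGraph.fromRel_adj]
  constructor
  · rintro ⟨hne, h | h⟩ <;>
      rcases h with ⟨k, a', b', hadj, hx, hy⟩ | ⟨k, hx, hy⟩ <;>
      simp only [Sigma.mk.inj_iff] at hx hy
    · exact absurd (hx.1.trans hy.1.symm) hij
    · obtain ⟨rfl, ha⟩ := hx
      obtain ⟨hk, hb⟩ := hy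
      rw [heq_eq_eq] at ha; subst hk
      rw [heq_eq_eq] at hb
      exact ⟨ha, hb, Or.inl rfl⟩
      
    · exact absurd (hy.1.trans hx.1.symm) hij
    · obtain ⟨rfl, hb⟩ := hx
      obtain ⟨hk, ha⟩ := hy
      rw [heq_eq_eq] at hb; subst hk
      rw [heq_eq_eq] at ha
      exact ⟨ha, hb, Or.inr rfl⟩
  · rintro ⟨rfl, rfl, h | h⟩
    · refine ⟨?_, Or.inl (Or.inr ⟨i, rfl, by rw [← h]⟩)⟩
      exact fun hc => hij (Sigma.mk.inj_iff.mp hc).1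
    · refine ⟨?_, Or.inr (Or.inr ⟨j, rfl, by rw [← h]⟩)⟩
      exact fun hc => hij (Sigma.mk.inj_iff.mp hc).1

lemma cliqueC_adj_same (Gs : Fin (m+1) → RootedGraph) {i : Fin (m+1)} {a b : (Gs i).V} :
    (cliqueC Gs).graph.Adj ⟨i, a⟩ ⟨i, b⟩ ↔ (Gs i).graph.Adj a b := by
  show (SimpleGraph.fromRel _).Adj _ _ ↔ _
  erw [SimpleGraph.fromRel_adj]
  constructor
  · rintro ⟨hne, h | h⟩ <;>
    · rcases h with ⟨k, a', b', hadj, hx, hy⟩ | ⟨k, l, hkl, hx, hy⟩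
      · simp only [Sigma.mk.inj_iff] at hx hy
        obtain ⟨rfl, ha⟩ := hx; obtain ⟨-, hb⟩ := hy
        rw [heq_eq_eq] at ha hb; subst ha; subst hb
        first | exact hadj | exact hadj.symm
      · simp only [Sigma.mk.inj_iff] at hx hy
        exact absurd (hx.1.symm.trans hy.1) hkl
  · intro h
    refine ⟨?_, Or.inl (Or.inl ⟨i, a, b, h, rfl, rfl⟩)⟩
    intro hc
    have := (Sigma.mk.inj_iff.mp hc).2
    rw [heq_eq_eq] at this
    exact h.ne this

lemma cliqueC_adj_ne (Gs : Fin (m+1) → RootedGraph) {i j : Fin (m+1)} (hij : i ≠ j)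
    {a : (Gs i).V} {b : (Gs j).V} :
    (cliqueC Gs).graph.Adj ⟨i, a⟩ ⟨j, b⟩ ↔
      a = (Gs i).root ∧ b = (Gs j).root := by
  show (SimpleGraph.fromRel _).Adj _ _ ↔ _
  erw [SimpleGraph.fromRel_adj]
  constructor
  · rintro ⟨hne, h | h⟩ <;>
      rcases h with ⟨k, a', b', hadj, hx, hy⟩ | ⟨k, l, hkl, hx, hy⟩ <;>
      simp only [Sigma.mk.inj_iff] at hx hy
    · exact absurd (hx.1.trans hy.1.symm) hij
    · obtain ⟨rfl, ha⟩ := hx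
      obtain ⟨rfl, hb⟩ := hy
      rw [heq_eq_eq] at ha hb
      exact ⟨ha, hb⟩
    · exact absurd (hy.1.trans hx.1.symm) hij
    · obtain ⟨rfl, hb⟩ := hx
      obtain ⟨rfl, ha⟩ := hy
      rw [heq_eq_eq] at ha hb
      exact ⟨ha, hb⟩
  · rintro ⟨rfl, rfl⟩
    refine ⟨?_, Or.inl (Or.inr ⟨i, j, hij, rfl, rfl⟩)⟩
    exact fun hc => hij (Sigma.mk.inj_iff.mp hc).1

end Helpers
section Helpers2

open SimpleGraph

variable {m : ℕ}

lemma stickC_adj_some_same (Gs : Fin (m+1) → RootedGraph) {i : Fin (m+1)}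
    {a b : {v : (Gs i).V // v ≠ (Gs i).root}} :
    (stickC Gs).graph.Adj (some ⟨i, a⟩) (some ⟨i, b⟩) ↔ (Gs i).graph.Adj a.1 b.1 := by
  show (SimpleGraph.fromRel _).Adj _ _ ↔ _
  erw [SimpleGraph.fromRel_adj]
  constructor
  · rintro ⟨hne, h | h⟩ <;>
    · rcases h with ⟨k, a', b', hadj, hx, hy⟩ | ⟨k, b', hadj, hx, hy⟩
      · injection hx with hx'; injection hy with hy'
        obtain ⟨rfl, ha⟩ := Sigma.mk.inj_iff.mp hx'
        obtain ⟨-, hb⟩ := Sigma.mk.inj_iff.mp hy'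
        rw [heq_eq_eq] at ha hb; subst ha; subst hb
        first | exact hadj | exact hadj.symm
      · exact absurd hx (by simp)
  · intro h
    refine ⟨?_, Or.inl (Or.inl ⟨i, a, b, h, rfl, rfl⟩)⟩
    intro hc
    injection hc with hc'
    have := (Sigma.mk.inj_iff.mp hc').2
    rw [heq_eq_eq] at this
    exact h.ne (congrArg Subtype.val this)

lemma stickC_adj_some_ne (Gs : Fin (m+1) → RootedGraph) {i j : Fin (m+1)} (hij : i ≠ j)
    {a : {v : (Gs i).V // v ≠ (Gs i).root}} {b : {v : (Gs j).V // v ≠ (Gs j).root}} :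
    ¬ (stickC Gs).graph.Adj (some ⟨i, a⟩) (some ⟨j, b⟩) := by
  intro h
  erw [show (stickC Gs).graph = SimpleGraph.fromRel _ from rfl, SimpleGraph.fromRel_adj] at h
  obtain ⟨hne, h | h⟩ := h <;>
  · rcases h with ⟨k, a', b', hadj, hx, hy⟩ | ⟨k, b', hadj, hx, hy⟩
    · injection hx with hx'; injection hy with hy'
      first
        | exact (hij ((Sigma.mk.inj_iff.mp hx').1.trans (Sigma.mk.inj_iff.mp hy').1.symm)).elim
        | exact (hij ((Sigma.mk.inj_iff.mp hy').1.trans (Sigma.mk.inj_iff.mp hx').1.symm)).elim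
    · exact absurd hx (by simp)

lemma stickC_adj_none (Gs : Fin (m+1) → RootedGraph) {i : Fin (m+1)}
    {b : {v : (Gs i).V // v ≠ (Gs i).root}} :
    (stickC Gs).graph.Adj none (some ⟨i, b⟩) ↔ (Gs i).graph.Adj (Gs i).root b.1 := by
  show (SimpleGraph.fromRel _).Adj _ _ ↔ _
  erw [SimpleGraph.fromRel_adj]
  constructor
  · rintro ⟨hne, h | h⟩
    · rcases h with ⟨k, a', b', hadj, hx, hy⟩ | ⟨k, b', hadj, hx, hy⟩
      · exact absurd hx (by simp)
      · injection hy with hy'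
        obtain ⟨rfl, hb⟩ := Sigma.mk.inj_iff.mp hy'
        rw [heq_eq_eq] at hb; subst hb
        exact hadj
    · rcases h with ⟨k, a', b', hadj, hx, hy⟩ | ⟨k, b', hadj, hx, hy⟩
      · exact absurd hy (by simp)
      · exact absurd hx (by simp)
  · intro h
    exact ⟨(by intro hc; cases hc), Or.inl (Or.inr ⟨i, b, h, rfl, rfl⟩)⟩

end Helpers2
section Helpers3

open SimpleGraph

variable {p q : ℕ}

/-- The index of the block that component `j` belongs to: the largest `i` with
`φ i ≤ j`, or `0` if there is none. -/
def psiFn (φ : Fin (p+1) → Fin (q+1)) (j : Fin (q+1)) : Fin (p+1) :=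
  if h : ((Finset.univ : Finset (Fin (p+1))).filter fun i => φ i ≤ j).Nonempty
  then ((Finset.univ : Finset (Fin (p+1))).filter fun i => φ i ≤ j).max' h else 0

lemma psi_ge {φ : Fin (p+1) → Fin (q+1)} {i : Fin (p+1)} {j : Fin (q+1)} (h : φ i ≤ j) :
    i ≤ psiFn φ j := by
  rw [psiFn, dif_pos ⟨i, by simp [h]⟩]
  exact Finset.le_max' _ _ (by simp [h])

lemma phi_psi_le {φ : Fin (p+1) → Fin (q+1)} {i : Fin (p+1)} {j : Fin (q+1)} (h : φ i ≤ j) :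
    φ (psiFn φ j) ≤ j := by
  have hne : ((Finset.univ : Finset (Fin (p+1))).filter fun i => φ i ≤ j).Nonempty :=
    ⟨i, by simp [h]⟩
  rw [psiFn, dif_pos hne]
  have := Finset.max'_mem _ hne
  simpa using this

lemma psi_phi {φ : Fin (p+1) → Fin (q+1)} (hφ : StrictMono φ) (i : Fin (p+1)) :
    psiFn φ (φ i) = i := by
  refine le_antisymm ?_ (psi_ge le_rfl)
  have hne : ((Finset.univ : Finset (Fin (p+1))).filter fun i' => φ i' ≤ φ i).Nonempty :=
    ⟨i, by simp⟩
  rw [psiFn, dif_pos hne]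
  refine Finset.max'_le _ _ _ fun i' hi' => ?_
  rw [Finset.mem_filter] at hi'
  exact hφ.le_iff_le.mp hi'.2

lemma psi_mono (φ : Fin (p+1) → Fin (q+1)) : Monotone (psiFn φ) := by
  intro j j' hjj
  by_cases h : ((Finset.univ : Finset (Fin (p+1))).filter fun i => φ i ≤ j).Nonempty
  · obtain ⟨i, hi⟩ := h
    rw [Finset.mem_filter] at hi
    have h1 : φ (psiFn φ j) ≤ j := phi_psi_le hi.2
    exact psi_ge (h1.trans hjj)
  · rw [psiFn, dif_neg h]
    exact Fin.zero_le _

lemma psi_zero {φ : Fin (p+1) → Fin (q+1)} (hφ : StrictMono φ) : psiFn φ 0 = 0 := by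
  by_cases h : ((Finset.univ : Finset (Fin (p+1))).filter fun i => φ i ≤ 0).Nonempty
  · rw [psiFn, dif_pos h]
    refine le_antisymm ?_ (Fin.zero_le _)
    refine Finset.max'_le _ _ _ fun i' hi' => ?_
    rw [Finset.mem_filter] at hi'
    exact hφ.le_iff_le.mp (le_trans hi'.2 (Fin.zero_le _))
  · rw [psiFn, dif_neg h]

lemma psi_last {φ : Fin (p+1) → Fin (q+1)} : psiFn φ (Fin.last q) = Fin.last p :=
  le_antisymm (Fin.le_last _) (psi_ge (Fin.le_last _))

lemma psi_zero_of_lt {φ : Fin (p+1) → Fin (q+1)} {j : Fin (q+1)}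
    (h : ∀ i, ¬ φ i ≤ j) : psiFn φ j = 0 := by
  rw [psiFn, dif_neg]
  rintro ⟨i, hi⟩
  rw [Finset.mem_filter] at hi
  exact h i hi.2

/-- If `j` is in block `i` but `φ i > j`, then `i = 0` (`j` lies before `φ 0`). -/
lemma psi_block_lower {φ : Fin (p+1) → Fin (q+1)} {j : Fin (q+1)}
    (h : ¬ φ (psiFn φ j) ≤ j) : psiFn φ j = 0 ∧ ∀ i, ¬ φ i ≤ j := by
  have : ∀ i, ¬ φ i ≤ j := by
    intro i hi
    exact h (phi_psi_le hi)
  exact ⟨psi_zero_of_lt this, this⟩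

/-- Successor lemma: crossing from block to block along the cycle. -/
lemma psi_succ {φ : Fin (p+1) → Fin (q+1)} (hφ : StrictMono φ) {j : Fin (q+1)}
    (h : psiFn φ (j + 1) ≠ psiFn φ j) : psiFn φ (j + 1) = psiFn φ j + 1 := by
  by_cases hj : j = Fin.last q
  · subst hj
    rw [Fin.last_add_one, psi_zero hφ, psi_last, Fin.last_add_one]
  · have hjq : (j : ℕ) < q := by
      rcases Fin.lt_or_eq_of_le (Fin.le_last j) with h' | h'
      · exact h'
      · exact absurd h' hj
    have hval : ((j + 1 : Fin (q+1)) : ℕ) = (j : ℕ) + 1 :=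
      Fin.val_add_one_of_lt (by rwa [Fin.lt_iff_val_lt_val, Fin.val_last])
    have hle : j ≤ j + 1 := by
      rw [Fin.le_iff_val_le_val, hval]; omega
    have hmono := psi_mono φ hle
    have hlt : psiFn φ j < psiFn φ (j + 1) := lt_of_le_of_ne hmono (Ne.symm h)
    set i' := psiFn φ (j + 1) with hi'
    have hi'0 : i' ≠ 0 := by
      intro hc
      rw [hc] at hlt
      exact absurd (Fin.zero_le _) (not_le_of_gt hlt)
    have hphi' : φ i' ≤ j + 1 := by
      by_contra hc
      rw [hi'] at hc
      exact hi'0 (hi'.trans (psi_block_lower hc).1)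
    -- show i'.val = (psiFn φ j).val + 1
    have hnotle : ¬ φ i' ≤ j := fun hc => absurd (psi_ge hc) (not_le_of_gt hlt)
    have hval2 : (i' : ℕ) = (psiFn φ j : ℕ) + 1 := by
      by_contra hc
      have h2 : (psiFn φ j : ℕ) + 1 < (i' : ℕ) := by
        have := Fin.lt_iff_val_lt_val.mp hlt
        omega
      -- consider i' - 1
      have hi'pos : 0 < (i' : ℕ) := by omega
      set i'' : Fin (p+1) := ⟨(i' : ℕ) - 1, by omega⟩ with hi''
      have hlt2 : i'' < i' := by rw [Fin.lt_iff_val_lt_val]; show (i' : ℕ) - 1 < (i' : ℕ); omega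
      have : φ i'' < φ i' := hφ hlt2
      have hle2 : φ i'' ≤ j := by
        rw [Fin.le_iff_val_le_val]
        have := Fin.lt_iff_val_lt_val.mp this
        have := Fin.le_iff_val_le_val.mp hphi'
        omega
      have := psi_ge hle2
      rw [Fin.le_iff_val_le_val] at this
      simp [hi''] at this
      omega
    refine Fin.ext ?_
    rw [hval2, Fin.val_add_one_of_lt]
    rw [Fin.lt_iff_val_lt_val, Fin.val_last]
    have := i'.isLt
    omega

/-- Reachability transfer along a map defined on a connected induced subgraph. -/
lemma reach_transfer {V W : Type*} {G : SimpleGraph V} {C : SimpleGraph W} {T : Set V}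
    {S : Set W} (g : V → W) (hg : ∀ x ∈ T, g x ∈ S)
    (hadj : ∀ x y, x ∈ T → y ∈ T → G.Adj x y → C.Adj (g x) (g y))
    (hT : (G.induce T).Connected) {x y : V} (hx : x ∈ T) (hy : y ∈ T) :
    (C.induce S).Reachable ⟨g x, hg x hx⟩ ⟨g y, hg y hy⟩ := by
  have hr := hT.preconnected ⟨x, hx⟩ ⟨y, hy⟩
  let f : G.induce T →g C.induce S :=
    ⟨fun z => ⟨g z.1, hg z.1 z.2⟩, fun {a b} hab => hadj _ _ a.2 b.2 hab⟩
  exact hr.map f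

/-- Reachability transfer along a map defined on a whole connected graph. -/
lemma reach_transfer' {V W : Type*} {G : SimpleGraph V} {C : SimpleGraph W}
    {S : Set W} (g : V → W) (hg : ∀ x, g x ∈ S)
    (hadj : ∀ x y, G.Adj x y → C.Adj (g x) (g y))
    (hT : G.Connected) (x y : V) :
    (C.induce S).Reachable ⟨g x, hg x⟩ ⟨g y, hg y⟩ := by
  have hr := hT.preconnected x y
  let f : G →g C.induce S := ⟨fun z => ⟨g z, hg z⟩, fun {a b} hab => hadj _ _ hab⟩
  exact hr.map f

end Helpers3
section StickProof

open SimpleGraph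

/-- Branch sets for the stick construction. -/
def stickBS {p q : ℕ} (H : Fin (p+1) → RootedGraph) (G : Fin (q+1) → RootedGraph)
    (φ : Fin (p+1) → Fin (q+1)) (μ : ∀ i, (H i).V → Set (G (φ i)).V) :
    Option (Σ i : Fin (p+1), {x : (H i).V // x ≠ (H i).root}) →
      Set (Option (Σ j : Fin (q+1), {x : (G j).V // x ≠ (G j).root})) := fun w =>
  {v | (w = none ∧ (v = none ∨ ∃ (j : Fin (q+1)) (y : {x : (G j).V // x ≠ (G j).root}),
        v = some ⟨j, y⟩ ∧ ((∀ i, j ≠ φ i) ∨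
          ∃ (i : Fin (p+1)) (x' : (G (φ i)).V), x' ∈ μ i (H i).root ∧
            (⟨j, y.1⟩ : Σ j, (G j).V) = ⟨φ i, x'⟩))) ∨
   (∃ (i : Fin (p+1)) (a : {x : (H i).V // x ≠ (H i).root}), w = some ⟨i, a⟩ ∧
      ∃ (y : {x : (G (φ i)).V // x ≠ (G (φ i)).root}), v = some ⟨φ i, y⟩ ∧ y.1 ∈ μ i a.1)}

variable {p q : ℕ} {H : Fin (p+1) → RootedGraph} {G : Fin (q+1) → RootedGraph}
  {φ : Fin (p+1) → Fin (q+1)} {μ : ∀ i, (H i).V → Set (G (φ i)).V}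

lemma stickBS_mem_some {i : Fin (p+1)} {a : {x : (H i).V // x ≠ (H i).root}}
    {v : Option (Σ j : Fin (q+1), {x : (G j).V // x ≠ (G j).root})} :
    v ∈ stickBS H G φ μ (some ⟨i, a⟩) ↔
      ∃ (y : {x : (G (φ i)).V // x ≠ (G (φ i)).root}), v = some ⟨φ i, y⟩ ∧ y.1 ∈ μ i a.1 := by
  simp only [stickBS, Set.mem_setOf_eq]
  constructor
  · rintro (⟨h, -⟩ | ⟨i', a', h, y, hv, hy⟩)
    · exact absurd h (by simp)
    · injection h with h'
      obtain ⟨rfl, ha⟩ := Sigma.mk.inj_iff.mp h'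
      rw [heq_eq_eq] at ha; subst ha
      exact ⟨y, hv, hy⟩
  · rintro ⟨y, hv, hy⟩
    exact Or.inr ⟨i, a, rfl, y, hv, hy⟩

lemma stickBS_mem_none
    {v : Option (Σ j : Fin (q+1), {x : (G j).V // x ≠ (G j).root})} :
    v ∈ stickBS H G φ μ none ↔
      (v = none ∨ ∃ (j : Fin (q+1)) (y : {x : (G j).V // x ≠ (G j).root}),
        v = some ⟨j, y⟩ ∧ ((∀ i, j ≠ φ i) ∨
          ∃ (i : Fin (p+1)) (x' : (G (φ i)).V), x' ∈ μ i (H i).root ∧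
            (⟨j, y.1⟩ : Σ j, (G j).V) = ⟨φ i, x'⟩)) := by
  simp only [stickBS, Set.mem_setOf_eq]
  constructor
  · rintro (⟨-, h⟩ | ⟨i', a', h, -⟩)
    · exact h
    · exact absurd h (by simp)
  · intro h
    exact Or.inl ⟨by trivial, h⟩

end StickProof
section StickMain

open SimpleGraph

open Classical in
/-- The canonical map from a component into the vertex set of the stick composition. -/
noncomputable def stickMap {q : ℕ} (G : Fin (q+1) → RootedGraph) (j : Fin (q+1)) (x : (G j).V) :
    Option (Σ j : Fin (q+1), {x : (G j).V // x ≠ (G j).root}) :=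
  if hx : x = (G j).root then none else some ⟨j, ⟨x, hx⟩⟩

lemma stickMap_root {q : ℕ} (G : Fin (q+1) → RootedGraph) (j : Fin (q+1)) :
    stickMap G j (G j).root = none := by rw [stickMap, dif_pos rfl]

lemma stickMap_ne {q : ℕ} {G : Fin (q+1) → RootedGraph} {j : Fin (q+1)} {x : (G j).V}
    (hx : x ≠ (G j).root) : stickMap G j x = some ⟨j, ⟨x, hx⟩⟩ := by rw [stickMap, dif_neg hx]

lemma stickMap_adj {q : ℕ} {G : Fin (q+1) → RootedGraph} {j : Fin (q+1)} {x y : (G j).V}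
    (h : (G j).graph.Adj x y) :
    (stickC G).graph.Adj (stickMap G j x) (stickMap G j y) := by
  by_cases hx : x = (G j).root <;> by_cases hy : y = (G j).root
  · exact absurd (hx.trans hy.symm) h.ne
  · rw [hx, stickMap_root, stickMap_ne hy]
    exact (stickC_adj_none G).mpr (hx ▸ h)
  · rw [hy, stickMap_root, stickMap_ne hx]
    exact ((stickC_adj_none G).mpr (hy ▸ h.symm)).symm
  · rw [stickMap_ne hx, stickMap_ne hy]
    exact (stickC_adj_some_same G).mpr h

lemma stick_contr (p q : ℕ) (H : Fin (p+1) → RootedGraph) (G : Fin (q+1) → RootedGraph)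
    (hG : ∀ j, (G j).graph.Connected)
    (φ : Fin (p+1) → Fin (q+1)) (hφ : StrictMono φ)
    (hctr : ∀ i, RootedContraction (H i) (G (φ i))) :
    RootedContraction (stickC H) (stickC G) := by
  classical
  choose μ hm hroot using hctr
  have hconn : ∀ i a, ((G (φ i)).graph.induce (μ i a)).Connected := fun i => (hm i).1
  have hpart : ∀ i v, ∃! w, v ∈ μ i w := fun i => (hm i).2.1
  have hadjm : ∀ i (a b : (H i).V), a ≠ b →
      ((H i).graph.Adj a b ↔ ∃ x ∈ μ i a, ∃ y ∈ μ i b, (G (φ i)).graph.Adj x y) :=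
    fun i => (hm i).2.2
  have huniq : ∀ i {x : (G (φ i)).V} {a b : (H i).V}, x ∈ μ i a → x ∈ μ i b → a = b :=
    fun i {x a b} ha hb => ((hpart i x).unique ha hb)
  have hnr : ∀ i (a : (H i).V), a ≠ (H i).root → ∀ x ∈ μ i a, x ≠ (G (φ i)).root := by
    intro i a ha x hx hc
    subst hc
    exact ha (huniq i hx (hroot i))
  refine ⟨stickBS H G φ μ, ⟨?_, ?_, ?_⟩, stickBS_mem_none.mpr (Or.inl rfl)⟩
  -- Connectivity of the branch sets
  · intro w
    obtain _ | ⟨i, a⟩ := w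
    · have hbase : (none : Option (Σ j : Fin (q+1), {x : (G j).V // x ≠ (G j).root})) ∈
          stickBS H G φ μ none := stickBS_mem_none.mpr (Or.inl rfl)
      rw [connected_iff]
      refine ⟨?_, ⟨⟨none, hbase⟩⟩⟩
      have key : ∀ u : ↥(stickBS H G φ μ none),
          ((stickC G).graph.induce (stickBS H G φ μ none)).Reachable u ⟨none, hbase⟩ := by
        rintro ⟨u, hu⟩
        rcases stickBS_mem_none.mp hu with rfl | ⟨j, y, rfl, hcase | ⟨i, x', hx', heq⟩⟩
        · exact Reachable.refl _
        · have hg : ∀ x : (G j).V, stickMap G j x ∈ stickBS H G φ μ none := by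
            intro x
            by_cases hx : x = (G j).root
            · rw [hx, stickMap_root]; exact stickBS_mem_none.mpr (Or.inl rfl)
            · rw [stickMap_ne hx]
              exact stickBS_mem_none.mpr (Or.inr ⟨j, ⟨x, hx⟩, rfl, Or.inl hcase⟩)
          have h1 := reach_transfer' (C := (stickC G).graph) (stickMap G j) hg
            (fun x y h => stickMap_adj h) (hG j) y.1 (G j).root
          simp only [stickMap_ne y.2, stickMap_root] at h1
          exact h1
        · obtain ⟨hj, hyx⟩ := Sigma.mk.inj_iff.mp heq
          subst hj
          rw [heq_eq_eq] at hyx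
          subst hyx
          have hg : ∀ x ∈ μ i (H i).root, stickMap G (φ i) x ∈ stickBS H G φ μ none := by
            intro x hx
            by_cases hxr : x = (G (φ i)).root
            · rw [hxr, stickMap_root]; exact stickBS_mem_none.mpr (Or.inl rfl)
            · rw [stickMap_ne hxr]
              exact stickBS_mem_none.mpr (Or.inr ⟨φ i, ⟨x, hxr⟩, rfl, Or.inr ⟨i, x, hx, rfl⟩⟩)
          have h1 := reach_transfer (C := (stickC G).graph) (stickMap G (φ i)) hg
            (fun x y _ _ h => stickMap_adj h) (hconn i (H i).root) hx' (hroot i)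
          simp only [stickMap_ne y.2, stickMap_root] at h1
          exact h1
      intro u v
      exact (key u).trans (key v).symm
    · rw [connected_iff]
      have hg : ∀ x ∈ μ i a.1, stickMap G (φ i) x ∈ stickBS H G φ μ (some ⟨i, a⟩) := by
        intro x hx
        rw [stickMap_ne (hnr i a.1 a.2 x hx)]
        exact stickBS_mem_some.mpr ⟨⟨x, hnr i a.1 a.2 x hx⟩, rfl, hx⟩
      constructor
      · rintro ⟨u, hu⟩ ⟨v, hv⟩
        obtain ⟨y, rfl, hy⟩ := stickBS_mem_some.mp hu
        obtain ⟨z, rfl, hz⟩ := stickBS_mem_some.mp hv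
        have h1 := reach_transfer (C := (stickC G).graph) (stickMap G (φ i)) hg
          (fun x y _ _ h => stickMap_adj h) (hconn i a.1) hy hz
        simp only [stickMap_ne y.2, stickMap_ne z.2] at h1
        exact h1
      · obtain ⟨⟨x₀, hx₀⟩⟩ := (hconn i a.1).nonempty
        exact ⟨⟨some ⟨φ i, ⟨x₀, hnr i a.1 a.2 x₀ hx₀⟩⟩,
          stickBS_mem_some.mpr ⟨⟨x₀, hnr i a.1 a.2 x₀ hx₀⟩, rfl, hx₀⟩⟩⟩
  -- Partition
  · intro v
    obtain _ | ⟨j, y⟩ := v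
    · refine ⟨none, stickBS_mem_none.mpr (Or.inl rfl), ?_⟩
      intro w' hw'
      obtain _ | ⟨i', a'⟩ := w'
      · rfl
      · obtain ⟨z, hv, -⟩ := stickBS_mem_some.mp hw'
        exact absurd hv (by simp)
    · by_cases hj : ∃ i, j = φ i
      · obtain ⟨i, rfl⟩ := hj
        obtain ⟨a₀, ha₀, huq⟩ := hpart i y.1
        by_cases har : a₀ = (H i).root
        · subst har
          refine ⟨none,
            stickBS_mem_none.mpr (Or.inr ⟨φ i, y, rfl, Or.inr ⟨i, y.1, ha₀, rfl⟩⟩), ?_⟩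
          intro w' hw'
          obtain _ | ⟨i', a'⟩ := w'
          · rfl
          · obtain ⟨z, hv, hz⟩ := stickBS_mem_some.mp hw'
            injection hv with hv'
            obtain ⟨he, hyz⟩ := Sigma.mk.inj_iff.mp hv'
            have hii : i = i' := hφ.injective he
            subst hii
            rw [heq_eq_eq] at hyz
            subst hyz
            exact absurd (huq a'.1 hz) a'.2
        · refine ⟨some ⟨i, ⟨a₀, har⟩⟩, stickBS_mem_some.mpr ⟨y, rfl, ha₀⟩, ?_⟩
          intro w' hw'
          obtain _ | ⟨i', a'⟩ := w'
          · rcases stickBS_mem_none.mp hw' with h | ⟨j', z, hv, hcase | ⟨i'', x', hx', heq⟩⟩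
            · exact absurd h (by simp)
            · injection hv with hv'
              obtain ⟨he, -⟩ := Sigma.mk.inj_iff.mp hv'
              exact absurd he.symm (hcase i)
            · injection hv with hv'
              obtain ⟨he, hyz⟩ := Sigma.mk.inj_iff.mp hv'
              subst he
              rw [heq_eq_eq] at hyz
              subst hyz
              obtain ⟨he2, hzx⟩ := Sigma.mk.inj_iff.mp heq
              have hii : i = i'' := hφ.injective he2
              subst hii
              rw [heq_eq_eq] at hzx
              subst hzx
              exact absurd (huq (H i).root hx').symm har
          · obtain ⟨z, hv, hz⟩ := stickBS_mem_some.mp hw'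
            injection hv with hv'
            obtain ⟨he, hyz⟩ := Sigma.mk.inj_iff.mp hv'
            have hii : i = i' := hφ.injective he
            subst hii
            rw [heq_eq_eq] at hyz
            subst hyz
            exact congrArg some (congrArg (Sigma.mk i) (Subtype.ext (huq a'.1 hz)))
      · push_neg at hj
        refine ⟨none, stickBS_mem_none.mpr (Or.inr ⟨j, y, rfl, Or.inl hj⟩), ?_⟩
        intro w' hw'
        obtain _ | ⟨i', a'⟩ := w'
        · rfl
        · obtain ⟨z, hv, -⟩ := stickBS_mem_some.mp hw'
          injection hv with hv'
          exact absurd (Sigma.mk.inj_iff.mp hv').1 (hj i')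
  -- Adjacency
  · have key : ∀ (i : Fin (p+1)) (a : {x : (H i).V // x ≠ (H i).root}),
        (stickC H).graph.Adj none (some ⟨i, a⟩) ↔
          ∃ u ∈ stickBS H G φ μ none, ∃ v ∈ stickBS H G φ μ (some ⟨i, a⟩),
            (stickC G).graph.Adj u v := by
      intro i a
      rw [stickC_adj_none H]
      constructor
      · intro hadj
        obtain ⟨x, hx, x', hx', hGxx'⟩ := (hadjm i _ _ (Ne.symm a.2)).mp hadj
        have hx'ne : x' ≠ (G (φ i)).root := hnr i a.1 a.2 x' hx'
        refine ⟨stickMap G (φ i) x, ?_, some ⟨φ i, ⟨x', hx'ne⟩⟩,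
          stickBS_mem_some.mpr ⟨⟨x', hx'ne⟩, rfl, hx'⟩, ?_⟩
        · by_cases hxr : x = (G (φ i)).root
          · rw [hxr, stickMap_root]; exact stickBS_mem_none.mpr (Or.inl rfl)
          · rw [stickMap_ne hxr]
            exact stickBS_mem_none.mpr (Or.inr ⟨φ i, ⟨x, hxr⟩, rfl, Or.inr ⟨i, x, hx, rfl⟩⟩)
        · have h2 := stickMap_adj (G := G) hGxx'
          rwa [stickMap_ne hx'ne] at h2
      · rintro ⟨u, hu, v, hv, huv⟩
        obtain ⟨y, rfl, hy⟩ := stickBS_mem_some.mp hv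
        rcases stickBS_mem_none.mp hu with rfl | ⟨j, z, rfl, hcase | ⟨i'', x', hx', heq⟩⟩
        · rw [stickC_adj_none G] at huv
          exact (hadjm i _ _ (Ne.symm a.2)).mpr ⟨_, hroot i, _, hy, huv⟩
        · exact absurd huv (stickC_adj_some_ne G (hcase i))
        · obtain ⟨hj, hzx⟩ := Sigma.mk.inj_iff.mp heq
          subst hj
          rw [heq_eq_eq] at hzx
          subst hzx
          by_cases hi : i'' = i
          · subst hi
            exact (hadjm i'' _ _ (Ne.symm a.2)).mpr
              ⟨z.1, hx', y.1, hy, (stickC_adj_some_same G).mp huv⟩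
          · exact absurd huv (stickC_adj_some_ne G (fun hc => hi (hφ.injective hc)))
    intro w w' hne
    obtain _ | ⟨i, a⟩ := w <;> obtain _ | ⟨i', a'⟩ := w'
    · exact absurd rfl hne
    · exact key i' a'
    · erw [(stickC H).graph.adj_comm, key i a]
      constructor
      · rintro ⟨u, hu, v, hv, huv⟩
        exact ⟨v, hv, u, hu, huv.symm⟩
      · rintro ⟨u, hu, v, hv, huv⟩
        exact ⟨v, hv, u, hu, huv.symm⟩
    · by_cases hi : i = i'
      · subst hi
        have hav : a ≠ a' := fun h => hne (by rw [h])
        have hav1 : a.1 ≠ a'.1 := fun h => hav (Subtype.ext h)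
        rw [stickC_adj_some_same H]
        constructor
        · intro hadj
          obtain ⟨x, hx, x', hx', hGxx'⟩ := (hadjm i _ _ hav1).mp hadj
          exact ⟨some ⟨φ i, ⟨x, hnr i a.1 a.2 x hx⟩⟩, stickBS_mem_some.mpr ⟨_, rfl, hx⟩,
            some ⟨φ i, ⟨x', hnr i a'.1 a'.2 x' hx'⟩⟩, stickBS_mem_some.mpr ⟨_, rfl, hx'⟩,
            (stickC_adj_some_same G).mpr hGxx'⟩
        · rintro ⟨u, hu, v, hv, huv⟩
          obtain ⟨y, rfl, hy⟩ := stickBS_mem_some.mp hu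
          obtain ⟨z, rfl, hz⟩ := stickBS_mem_some.mp hv
          exact (hadjm i _ _ hav1).mpr ⟨y.1, hy, z.1, hz, (stickC_adj_some_same G).mp huv⟩
      · constructor
        · intro hadj
          exact absurd hadj (stickC_adj_some_ne H hi)
        · rintro ⟨u, hu, v, hv, huv⟩
          obtain ⟨y, rfl, hy⟩ := stickBS_mem_some.mp hu
          obtain ⟨z, rfl, hz⟩ := stickBS_mem_some.mp hv
          exact absurd huv (stickC_adj_some_ne G (fun hc => hi (hφ.injective hc)))

end StickMain
section CPBS

open SimpleGraph

/-- Branch sets for the cycle and clique constructions. -/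
def cpBS {p q : ℕ} (H : Fin (p+1) → RootedGraph) (G : Fin (q+1) → RootedGraph)
    (φ : Fin (p+1) → Fin (q+1)) (μ : ∀ i, (H i).V → Set (G (φ i)).V)
    (w : Σ i : Fin (p+1), (H i).V) : Set (Σ j : Fin (q+1), (G j).V) :=
  {v | (∃ x ∈ μ w.1 w.2, v = ⟨φ w.1, x⟩) ∨
       (w.2 = (H w.1).root ∧ psiFn φ v.1 = w.1 ∧ v.1 ≠ φ w.1)}

variable {p q : ℕ} {H : Fin (p+1) → RootedGraph} {G : Fin (q+1) → RootedGraph}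
  {φ : Fin (p+1) → Fin (q+1)} {μ : ∀ i, (H i).V → Set (G (φ i)).V}

lemma cpBS_mem_phi {i : Fin (p+1)} {a : (H i).V} {x : (G (φ i)).V} :
    (⟨φ i, x⟩ : Σ j, (G j).V) ∈ cpBS H G φ μ ⟨i, a⟩ ↔ x ∈ μ i a := by
  simp only [cpBS, Set.mem_setOf_eq]
  constructor
  · rintro (⟨x', hx', he⟩ | ⟨-, -, hne⟩)
    · obtain ⟨-, hx⟩ := Sigma.mk.inj_iff.mp he
      rw [heq_eq_eq] at hx
      subst hx
      exact hx'
    · exact absurd rfl hne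
  · intro hx
    exact Or.inl ⟨x, hx, rfl⟩

lemma cpBS_mem_ne {i : Fin (p+1)} {a : (H i).V} {j : Fin (q+1)} (hj : j ≠ φ i) {x : (G j).V} :
    (⟨j, x⟩ : Σ j, (G j).V) ∈ cpBS H G φ μ ⟨i, a⟩ ↔
      a = (H i).root ∧ psiFn φ j = i := by
  simp only [cpBS, Set.mem_setOf_eq]
  constructor
  · rintro (⟨x', hx', he⟩ | ⟨h1, h2, -⟩)
    · exact absurd (Sigma.mk.inj_iff.mp he).1 hj
    · exact ⟨h1, h2⟩
  · rintro ⟨h1, h2⟩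
    exact Or.inr ⟨h1, h2, hj⟩

lemma cpBS_mem_psi (hφ : StrictMono φ) {i : Fin (p+1)} {a : (H i).V}
    {v : Σ j, (G j).V} (h : v ∈ cpBS H G φ μ ⟨i, a⟩) : psiFn φ v.1 = i := by
  simp only [cpBS, Set.mem_setOf_eq] at h
  rcases h with ⟨x', hx', rfl⟩ | ⟨-, h2, -⟩
  · exact psi_phi hφ i
  · exact h2

lemma cpBS_root_mem (hroot : ∀ i, (G (φ i)).root ∈ μ i (H i).root)
    {i : Fin (p+1)} {j : Fin (q+1)} (h : psiFn φ j = i) :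
    (⟨j, (G j).root⟩ : Σ j, (G j).V) ∈ cpBS H G φ μ ⟨i, (H i).root⟩ := by
  by_cases hj : j = φ i
  · subst hj
    exact cpBS_mem_phi.mpr (hroot i)
  · exact (cpBS_mem_ne hj).mpr ⟨rfl, h⟩

lemma cpBS_root_forces
    (huniq : ∀ (i : Fin (p+1)) {x : (G (φ i)).V} {a b : (H i).V},
      x ∈ μ i a → x ∈ μ i b → a = b)
    (hroot : ∀ i, (G (φ i)).root ∈ μ i (H i).root)
    {i : Fin (p+1)} {a : (H i).V} {j : Fin (q+1)}
    (h : (⟨j, (G j).root⟩ : Σ j, (G j).V) ∈ cpBS H G φ μ ⟨i, a⟩) : a = (H i).root := by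
  by_cases hj : j = φ i
  · subst hj
    exact huniq i (cpBS_mem_phi.mp h) (hroot i)
  · exact ((cpBS_mem_ne hj).mp h).1

end CPBS
section CliqueMain

open SimpleGraph

lemma clique_contr (p q : ℕ) (H : Fin (p+1) → RootedGraph) (G : Fin (q+1) → RootedGraph)
    (hG : ∀ j, (G j).graph.Connected)
    (φ : Fin (p+1) → Fin (q+1)) (hφ : StrictMono φ)
    (hctr : ∀ i, RootedContraction (H i) (G (φ i))) :
    RootedContraction (cliqueC H) (cliqueC G) := by
  classical
  choose μ hm hroot using hctr
  have hconn : ∀ i a, ((G (φ i)).graph.induce (μ i a)).Connected := fun i => (hm i).1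
  have hpart : ∀ i v, ∃! w, v ∈ μ i w := fun i => (hm i).2.1
  have hadjm : ∀ i (a b : (H i).V), a ≠ b →
      ((H i).graph.Adj a b ↔ ∃ x ∈ μ i a, ∃ y ∈ μ i b, (G (φ i)).graph.Adj x y) :=
    fun i => (hm i).2.2
  have huniq : ∀ (i : Fin (p+1)) {x : (G (φ i)).V} {a b : (H i).V},
      x ∈ μ i a → x ∈ μ i b → a = b :=
    fun i {x a b} ha hb => ((hpart i x).unique ha hb)
  refine ⟨cpBS H G φ μ, ⟨?_, ?_, ?_⟩, cpBS_root_mem hroot (psi_zero hφ)⟩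
  -- Connectivity
  · rintro ⟨i, a⟩
    by_cases ha : a = (H i).root
    · subst ha
      rw [connected_iff]
      have hbase : (⟨φ i, (G (φ i)).root⟩ : Σ j, (G j).V) ∈
          cpBS H G φ μ ⟨i, (H i).root⟩ := cpBS_mem_phi.mpr (hroot i)
      refine ⟨?_, ⟨⟨_, hbase⟩⟩⟩
      have key : ∀ u : ↥(cpBS H G φ μ ⟨i, (H i).root⟩),
          ((cliqueC G).graph.induce _).Reachable u ⟨_, hbase⟩ := by
        rintro ⟨u, hu⟩
        have hu' := hu
        simp only [cpBS, Set.mem_setOf_eq] at hu'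
        rcases hu' with ⟨x, hx, rfl⟩ | ⟨-, hpsi, hne⟩
        · exact reach_transfer (fun y => (⟨φ i, y⟩ : Σ j, (G j).V))
            (fun y hy => cpBS_mem_phi.mpr hy)
            (fun x y _ _ h => (cliqueC_adj_same G).mpr h) (hconn i _) hx (hroot i)
        · obtain ⟨j, x⟩ := u
          have hg2 : ∀ y : (G j).V, (⟨j, y⟩ : Σ j, (G j).V) ∈
              cpBS H G φ μ ⟨i, (H i).root⟩ := fun y => (cpBS_mem_ne hne).mpr ⟨rfl, hpsi⟩
          have h1 := reach_transfer' (C := (cliqueC G).graph)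
            (fun y => (⟨j, y⟩ : Σ j, (G j).V)) hg2
            (fun x y h => (cliqueC_adj_same G).mpr h) (hG j) x (G j).root
          refine h1.trans ?_
          have hedge : (cliqueC G).graph.Adj ⟨j, (G j).root⟩ ⟨φ i, (G (φ i)).root⟩ :=
            (cliqueC_adj_ne G hne).mpr ⟨rfl, rfl⟩
          exact (show ((cliqueC G).graph.induce _).Adj ⟨_, hg2 (G j).root⟩ ⟨_, hbase⟩
            from hedge).reachable
      intro u v
      exact (key u).trans (key v).symm
    · rw [connected_iff]
      have hmem : ∀ x ∈ μ i a, (⟨φ i, x⟩ : Σ j, (G j).V) ∈ cpBS H G φ μ ⟨i, a⟩ :=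
        fun x hx => cpBS_mem_phi.mpr hx
      constructor
      · rintro ⟨u, hu⟩ ⟨v, hv⟩
        have hu' := hu
        have hv' := hv
        simp only [cpBS, Set.mem_setOf_eq] at hu' hv'
        rcases hu' with ⟨x, hx, rfl⟩ | ⟨h1, -⟩
        · rcases hv' with ⟨y, hy, rfl⟩ | ⟨h1, -⟩
          · exact reach_transfer (fun y => (⟨φ i, y⟩ : Σ j, (G j).V)) hmem
              (fun x y _ _ h => (cliqueC_adj_same G).mpr h) (hconn i a) hx hy
          · exact absurd h1 ha
        · exact absurd h1 ha
      · obtain ⟨⟨x₀, hx₀⟩⟩ := (hconn i a).nonempty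
        exact ⟨⟨⟨φ i, x₀⟩, cpBS_mem_phi.mpr hx₀⟩⟩
  -- Partition
  · rintro ⟨j, x⟩
    by_cases hj : ∃ i, j = φ i
    · obtain ⟨i, rfl⟩ := hj
      obtain ⟨a₀, ha₀, huq⟩ := hpart i x
      refine ⟨⟨i, a₀⟩, cpBS_mem_phi.mpr ha₀, ?_⟩
      rintro ⟨i', a'⟩ hw'
      have hi' : i = i' := by
        have h2 := cpBS_mem_psi hφ hw'
        rw [psi_phi hφ] at h2
        exact h2
      subst hi'
      exact congrArg (Sigma.mk i) (huq a' (cpBS_mem_phi.mp hw'))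
    · push_neg at hj
      refine ⟨⟨psiFn φ j, (H (psiFn φ j)).root⟩, (cpBS_mem_ne (hj _)).mpr ⟨rfl, rfl⟩, ?_⟩
      rintro ⟨i', a'⟩ hw'
      have h1 : psiFn φ j = i' := cpBS_mem_psi hφ hw'
      have h2 : a' = (H i').root := ((cpBS_mem_ne (hj i')).mp hw').1
      subst h1
      subst h2
      rfl
  -- Adjacency
  · rintro ⟨i, a⟩ ⟨i', a'⟩ hne
    by_cases hi : i = i'
    · subst hi
      have haa : a ≠ a' := by
        intro h
        exact hne (by rw [h])
      rw [cliqueC_adj_same H]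
      constructor
      · intro hadj
        obtain ⟨x, hx, x', hx', hG'⟩ := (hadjm i a a' haa).mp hadj
        exact ⟨⟨φ i, x⟩, cpBS_mem_phi.mpr hx, ⟨φ i, x'⟩, cpBS_mem_phi.mpr hx',
          (cliqueC_adj_same G).mpr hG'⟩
      · rintro ⟨u, hu, v, hv, huv⟩
        obtain ⟨j, x⟩ := u
        obtain ⟨j', x'⟩ := v
        by_cases hjj : j = j'
        · subst hjj
          have hGadj := (cliqueC_adj_same G).mp huv
          by_cases hjp : j = φ i
          · subst hjp
            exact (hadjm _ a a' haa).mpr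
              ⟨x, cpBS_mem_phi.mp hu, x', cpBS_mem_phi.mp hv, hGadj⟩
          · have h1 := ((cpBS_mem_ne hjp).mp hu).1
            have h2 := ((cpBS_mem_ne hjp).mp hv).1
            exact absurd (h1.trans h2.symm) haa
        · obtain ⟨rfl, rfl⟩ := (cliqueC_adj_ne G hjj).mp huv
          have h1 := cpBS_root_forces huniq hroot hu
          have h2 := cpBS_root_forces huniq hroot hv
          exact absurd (h1.trans h2.symm) haa
    · rw [cliqueC_adj_ne H hi]
      constructor
      · rintro ⟨rfl, rfl⟩
        exact ⟨⟨φ i, (G (φ i)).root⟩, cpBS_mem_phi.mpr (hroot i),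
          ⟨φ i', (G (φ i')).root⟩, cpBS_mem_phi.mpr (hroot i'),
          (cliqueC_adj_ne G (fun hc => hi (hφ.injective hc))).mpr ⟨rfl, rfl⟩⟩
      · rintro ⟨u, hu, v, hv, huv⟩
        obtain ⟨j, x⟩ := u
        obtain ⟨j', x'⟩ := v
        have hj1 : psiFn φ j = i := cpBS_mem_psi hφ hu
        have hj2 : psiFn φ j' = i' := cpBS_mem_psi hφ hv
        have hjj : j ≠ j' := by
          intro hc
          rw [← hj1, ← hj2, hc] at hi
          exact hi rfl
        obtain ⟨rfl, rfl⟩ := (cliqueC_adj_ne G hjj).mp huv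
        exact ⟨cpBS_root_forces huniq hroot hu, cpBS_root_forces huniq hroot hv⟩

end CliqueMain
section CycleMain

open SimpleGraph

lemma cycle_contr (p q : ℕ) (H : Fin (p+1) → RootedGraph) (G : Fin (q+1) → RootedGraph)
    (hG : ∀ j, (G j).graph.Connected)
    (φ : Fin (p+1) → Fin (q+1)) (hφ : StrictMono φ)
    (hctr : ∀ i, RootedContraction (H i) (G (φ i))) :
    RootedContraction (cycleC H) (cycleC G) := by
  classical
  choose μ hm hroot using hctr
  have hconn : ∀ i a, ((G (φ i)).graph.induce (μ i a)).Connected := fun i => (hm i).1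
  have hpart : ∀ i v, ∃! w, v ∈ μ i w := fun i => (hm i).2.1
  have hadjm : ∀ i (a b : (H i).V), a ≠ b →
      ((H i).graph.Adj a b ↔ ∃ x ∈ μ i a, ∃ y ∈ μ i b, (G (φ i)).graph.Adj x y) :=
    fun i => (hm i).2.2
  have huniq : ∀ (i : Fin (p+1)) {x : (G (φ i)).V} {a b : (H i).V},
      x ∈ μ i a → x ∈ μ i b → a = b :=
    fun i {x a b} ha hb => ((hpart i x).unique ha hb)
  have hcard : p ≤ q := by
    have := Fintype.card_le_of_injective φ hφ.injective
    rw [Fintype.card_fin, Fintype.card_fin] at this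
    omega
  refine ⟨cpBS H G φ μ, ⟨?_, ?_, ?_⟩, cpBS_root_mem hroot (psi_zero hφ)⟩
  -- Connectivity
  · rintro ⟨i, a⟩
    by_cases ha : a = (H i).root
    · subst ha
      rw [connected_iff]
      have hbase : (⟨φ i, (G (φ i)).root⟩ : Σ j, (G j).V) ∈
          cpBS H G φ μ ⟨i, (H i).root⟩ := cpBS_mem_phi.mpr (hroot i)
      refine ⟨?_, ⟨⟨_, hbase⟩⟩⟩
      have chainA : ∀ k (j : Fin (q+1)) (hψ : psiFn φ j = i),
          (φ i : ℕ) ≤ (j : ℕ) → (j : ℕ) - (φ i : ℕ) = k →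
          ((cycleC G).graph.induce (cpBS H G φ μ ⟨i, (H i).root⟩)).Reachable
            ⟨⟨j, (G j).root⟩, cpBS_root_mem hroot hψ⟩ ⟨_, hbase⟩ := by
        intro k
        induction k with
        | zero =>
          intro j hψ hle hk
          have hj : j = φ i := Fin.ext (by omega)
          subst hj
          exact Reachable.refl _
        | succ k ih =>
          intro j hψ hle hk
          have hjq : (j : ℕ) ≤ q := Nat.le_of_lt_succ j.isLt
          set j₀ : Fin (q+1) := ⟨(j : ℕ) - 1, by omega⟩ with hj₀def
          have hval₀ : (j₀ : ℕ) = (j : ℕ) - 1 := rfl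
          have hle₀ : (φ i : ℕ) ≤ (j₀ : ℕ) := by omega
          have hψ₀ : psiFn φ j₀ = i := by
            refine le_antisymm ?_ (psi_ge (show φ i ≤ j₀ by
              rw [Fin.le_iff_val_le_val]; omega))
            have := psi_mono φ (show j₀ ≤ j by rw [Fin.le_iff_val_le_val]; omega)
            rwa [hψ] at this
          have hne : j₀ ≠ j := Fin.ne_of_val_ne (by omega)
          have hedge : (cycleC G).graph.Adj ⟨j₀, (G j₀).root⟩ ⟨j, (G j).root⟩ := by
            refine (cycleC_adj_ne G hne).mpr ⟨rfl, rfl, Or.inl (Fin.ext ?_)⟩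
            rw [Fin.val_add_one_of_lt (show j₀ < Fin.last q by
              rw [Fin.lt_iff_val_lt_val, Fin.val_last]; omega)]
            omega
          exact (show ((cycleC G).graph.induce (cpBS H G φ μ ⟨i, (H i).root⟩)).Adj
              ⟨⟨j, (G j).root⟩, cpBS_root_mem hroot hψ⟩
              ⟨⟨j₀, (G j₀).root⟩, cpBS_root_mem hroot hψ₀⟩
            from hedge.symm).reachable.trans (ih j₀ hψ₀ hle₀ (by omega))
      have chainB : ∀ k (j : Fin (q+1)) (hψ : psiFn φ j = 0),
          (j : ℕ) ≤ (φ 0 : ℕ) → (φ 0 : ℕ) - (j : ℕ) = k →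
          ((cycleC G).graph.induce (cpBS H G φ μ ⟨0, (H 0).root⟩)).Reachable
            ⟨⟨j, (G j).root⟩, cpBS_root_mem hroot hψ⟩
            ⟨⟨φ 0, (G (φ 0)).root⟩, cpBS_mem_phi.mpr (hroot 0)⟩ := by
        intro k
        induction k with
        | zero =>
          intro j hψ hle hk
          have hj : j = φ 0 := Fin.ext (by omega)
          subst hj
          exact Reachable.refl _
        | succ k ih =>
          intro j hψ hle hk
          have hq0 : (φ 0 : ℕ) ≤ q := Nat.le_of_lt_succ (φ 0).isLt
          set j₁ : Fin (q+1) := ⟨(j : ℕ) + 1, by omega⟩ with hj₁def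
          have hval₁ : (j₁ : ℕ) = (j : ℕ) + 1 := rfl
          have hψ₁ : psiFn φ j₁ = 0 := by
            refine le_antisymm ?_ (Fin.zero_le _)
            have := psi_mono φ (show j₁ ≤ φ 0 by rw [Fin.le_iff_val_le_val]; omega)
            rwa [psi_phi hφ] at this
          have hne : j ≠ j₁ := Fin.ne_of_val_ne (by omega)
          have hedge : (cycleC G).graph.Adj ⟨j, (G j).root⟩ ⟨j₁, (G j₁).root⟩ := by
            refine (cycleC_adj_ne G hne).mpr ⟨rfl, rfl, Or.inl (Fin.ext ?_)⟩
            rw [Fin.val_add_one_of_lt (show j < Fin.last q by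
              rw [Fin.lt_iff_val_lt_val, Fin.val_last]; omega)]
          exact (show ((cycleC G).graph.induce (cpBS H G φ μ ⟨0, (H 0).root⟩)).Adj
              ⟨⟨j, (G j).root⟩, cpBS_root_mem hroot hψ⟩
              ⟨⟨j₁, (G j₁).root⟩, cpBS_root_mem hroot hψ₁⟩
            from hedge).reachable.trans (ih j₁ hψ₁ (by omega) (by omega))
      have hreach_root : ∀ (j : Fin (q+1)) (hψ : psiFn φ j = i),
          ((cycleC G).graph.induce (cpBS H G φ μ ⟨i, (H i).root⟩)).Reachable
            ⟨⟨j, (G j).root⟩, cpBS_root_mem hroot hψ⟩ ⟨_, hbase⟩ := by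
        intro j hψ
        by_cases hle : (φ i : ℕ) ≤ (j : ℕ)
        · exact chainA _ j hψ hle rfl
        · have h0 : ∀ i', ¬ φ i' ≤ j := fun i' hi' => hle (by
            have h1 := phi_psi_le hi'
            rw [hψ] at h1
            exact Fin.le_iff_val_le_val.mp h1)
          have hi0 : i = 0 := by rw [← hψ, psi_zero_of_lt h0]
          subst hi0
          exact chainB _ j hψ (by
            have := h0 0
            rw [Fin.le_iff_val_le_val] at this
            omega) rfl
      have key : ∀ u : ↥(cpBS H G φ μ ⟨i, (H i).root⟩),
          ((cycleC G).graph.induce _).Reachable u ⟨_, hbase⟩ := by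
        rintro ⟨u, hu⟩
        have hu' := hu
        simp only [cpBS, Set.mem_setOf_eq] at hu'
        rcases hu' with ⟨x, hx, rfl⟩ | ⟨-, hpsi, hne⟩
        · exact reach_transfer (fun y => (⟨φ i, y⟩ : Σ j, (G j).V))
            (fun y hy => cpBS_mem_phi.mpr hy)
            (fun x y _ _ h => (cycleC_adj_same G).mpr h) (hconn i _) hx (hroot i)
        · obtain ⟨j, x⟩ := u
          have hg2 : ∀ y : (G j).V, (⟨j, y⟩ : Σ j, (G j).V) ∈
              cpBS H G φ μ ⟨i, (H i).root⟩ := fun y => (cpBS_mem_ne hne).mpr ⟨rfl, hpsi⟩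
          have h1 := reach_transfer' (C := (cycleC G).graph)
            (fun y => (⟨j, y⟩ : Σ j, (G j).V)) hg2
            (fun x y h => (cycleC_adj_same G).mpr h) (hG j) x (G j).root
          exact h1.trans (hreach_root j hpsi)
      intro u v
      exact (key u).trans (key v).symm
    · rw [connected_iff]
      have hmem : ∀ x ∈ μ i a, (⟨φ i, x⟩ : Σ j, (G j).V) ∈ cpBS H G φ μ ⟨i, a⟩ :=
        fun x hx => cpBS_mem_phi.mpr hx
      constructor
      · rintro ⟨u, hu⟩ ⟨v, hv⟩
        have hu' := hu
        have hv' := hv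
        simp only [cpBS, Set.mem_setOf_eq] at hu' hv'
        rcases hu' with ⟨x, hx, rfl⟩ | ⟨h1, -⟩
        · rcases hv' with ⟨y, hy, rfl⟩ | ⟨h1, -⟩
          · exact reach_transfer (fun y => (⟨φ i, y⟩ : Σ j, (G j).V)) hmem
              (fun x y _ _ h => (cycleC_adj_same G).mpr h) (hconn i a) hx hy
          · exact absurd h1 ha
        · exact absurd h1 ha
      · obtain ⟨⟨x₀, hx₀⟩⟩ := (hconn i a).nonempty
        exact ⟨⟨⟨φ i, x₀⟩, cpBS_mem_phi.mpr hx₀⟩⟩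
  -- Partition
  · rintro ⟨j, x⟩
    by_cases hj : ∃ i, j = φ i
    · obtain ⟨i, rfl⟩ := hj
      obtain ⟨a₀, ha₀, huq⟩ := hpart i x
      refine ⟨⟨i, a₀⟩, cpBS_mem_phi.mpr ha₀, ?_⟩
      rintro ⟨i', a'⟩ hw'
      have hi' : i = i' := by
        have h2 := cpBS_mem_psi hφ hw'
        rw [psi_phi hφ] at h2
        exact h2
      subst hi'
      exact congrArg (Sigma.mk i) (huq a' (cpBS_mem_phi.mp hw'))
    · push_neg at hj
      refine ⟨⟨psiFn φ j, (H (psiFn φ j)).root⟩, (cpBS_mem_ne (hj _)).mpr ⟨rfl, rfl⟩, ?_⟩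
      rintro ⟨i', a'⟩ hw'
      have h1 : psiFn φ j = i' := cpBS_mem_psi hφ hw'
      have h2 : a' = (H i').root := ((cpBS_mem_ne (hj i')).mp hw').1
      subst h1
      subst h2
      rfl
  -- Adjacency
  · have build : ∀ i₁ i₂ : Fin (p+1), i₁ ≠ i₂ → i₂ = i₁ + 1 →
        ∃ u ∈ cpBS H G φ μ ⟨i₁, (H i₁).root⟩, ∃ v ∈ cpBS H G φ μ ⟨i₂, (H i₂).root⟩,
          (cycleC G).graph.Adj u v := by
      intro i₁ i₂ hne12 h12
      by_cases hlast : i₁ = Fin.last p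
      · subst hlast
        have h2 : i₂ = 0 := by rw [h12, Fin.last_add_one]
        subst h2
        have hp : 0 < p := by
          by_contra hc
          push_neg at hc
          have hp0 : p = 0 := by omega
          subst hp0
          exact hne12 (Fin.ext (by simp))
        have hne' : Fin.last q ≠ 0 := Fin.ne_of_val_ne (by
          rw [Fin.val_last]
          simp only [Fin.val_zero]
          omega)
        refine ⟨⟨Fin.last q, (G _).root⟩, cpBS_root_mem hroot psi_last,
          ⟨0, (G 0).root⟩, cpBS_root_mem hroot (psi_zero hφ), ?_⟩
        exact (cycleC_adj_ne G hne').mpr ⟨rfl, rfl, Or.inl (Fin.last_add_one q).symm⟩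
      · have hi₁lt : i₁ < Fin.last p := lt_of_le_of_ne (Fin.le_last _) hlast
        have hval : (i₂ : ℕ) = (i₁ : ℕ) + 1 := by
          rw [h12]
          exact Fin.val_add_one_of_lt hi₁lt
        have hφlt : (φ i₁ : ℕ) < (φ i₂ : ℕ) := by
          have h3 : i₁ < i₂ := by rw [Fin.lt_iff_val_lt_val]; omega
          exact Fin.lt_iff_val_lt_val.mp (hφ h3)
        have hq2 : (φ i₂ : ℕ) ≤ q := Nat.le_of_lt_succ (φ i₂).isLt
        set j : Fin (q+1) := ⟨(φ i₂ : ℕ) - 1, by omega⟩ with hjdef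
        have hjval : (j : ℕ) = (φ i₂ : ℕ) - 1 := rfl
        have hφ₁j : φ i₁ ≤ j := by rw [Fin.le_iff_val_le_val]; omega
        have hψj : psiFn φ j = i₁ := by
          refine le_antisymm ?_ (psi_ge hφ₁j)
          by_contra hc
          push_neg at hc
          have h2 : i₂ ≤ psiFn φ j := by
            rw [Fin.le_iff_val_le_val]
            have := Fin.lt_iff_val_lt_val.mp hc
            omega
          have h3 : φ i₂ ≤ φ (psiFn φ j) := hφ.le_iff_le.mpr h2
          have h4 : φ (psiFn φ j) ≤ j := phi_psi_le hφ₁j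
          have h5 := Fin.le_iff_val_le_val.mp (h3.trans h4)
          omega
        have hne : j ≠ φ i₂ := Fin.ne_of_val_ne (by omega)
        refine ⟨⟨j, (G j).root⟩, cpBS_root_mem hroot hψj,
          ⟨φ i₂, (G (φ i₂)).root⟩, cpBS_root_mem hroot (psi_phi hφ i₂), ?_⟩
        refine (cycleC_adj_ne G hne).mpr ⟨rfl, rfl, Or.inl (Fin.ext ?_)⟩
        rw [Fin.val_add_one_of_lt (show j < Fin.last q by
          rw [Fin.lt_iff_val_lt_val, Fin.val_last]; omega)]
        omega
    rintro ⟨i, a⟩ ⟨i', a'⟩ hne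
    by_cases hi : i = i'
    · subst hi
      have haa : a ≠ a' := by
        intro h
        exact hne (by rw [h])
      rw [cycleC_adj_same H]
      constructor
      · intro hadj
        obtain ⟨x, hx, x', hx', hG'⟩ := (hadjm i a a' haa).mp hadj
        exact ⟨⟨φ i, x⟩, cpBS_mem_phi.mpr hx, ⟨φ i, x'⟩, cpBS_mem_phi.mpr hx',
          (cycleC_adj_same G).mpr hG'⟩
      · rintro ⟨u, hu, v, hv, huv⟩
        obtain ⟨j, x⟩ := u
        obtain ⟨j', x'⟩ := v
        by_cases hjj : j = j'
        · subst hjj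
          have hGadj := (cycleC_adj_same G).mp huv
          by_cases hjp : j = φ i
          · subst hjp
            exact (hadjm _ a a' haa).mpr
              ⟨x, cpBS_mem_phi.mp hu, x', cpBS_mem_phi.mp hv, hGadj⟩
          · have h1 := ((cpBS_mem_ne hjp).mp hu).1
            have h2 := ((cpBS_mem_ne hjp).mp hv).1
            exact absurd (h1.trans h2.symm) haa
        · obtain ⟨rfl, rfl, -⟩ := (cycleC_adj_ne G hjj).mp huv
          have h1 := cpBS_root_forces huniq hroot hu
          have h2 := cpBS_root_forces huniq hroot hv
          exact absurd (h1.trans h2.symm) haa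
    · rw [cycleC_adj_ne H hi]
      constructor
      · rintro ⟨rfl, rfl, hc | hc⟩
        · exact build i i' hi hc
        · obtain ⟨u, hu, v, hv, huv⟩ := build i' i (Ne.symm hi) hc
          exact ⟨v, hv, u, hu, huv.symm⟩
      · rintro ⟨u, hu, v, hv, huv⟩
        obtain ⟨j, x⟩ := u
        obtain ⟨j', x'⟩ := v
        have hj1 := cpBS_mem_psi hφ hu
        have hj2 := cpBS_mem_psi hφ hv
        have hjj : j ≠ j' := by
          intro hc
          apply hi
          rw [← hj1, ← hj2]
          subst hc
          rfl
        obtain ⟨rfl, rfl, hcons⟩ := (cycleC_adj_ne G hjj).mp huv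
        refine ⟨cpBS_root_forces huniq hroot hu, cpBS_root_forces huniq hroot hv, ?_⟩
        rcases hcons with h | h
        · left
          subst h
          rw [← hj1, ← hj2]
          exact psi_succ hφ (by rw [hj1, hj2]; exact Ne.symm hi)
        · right
          subst h
          rw [← hj1, ← hj2]
          exact psi_succ hφ (by rw [hj1, hj2]; exact hi)

end CycleMain

/-- Let `⟨H_0, …, H_p⟩` and `⟨G_0, …, G_q⟩` be nonempty sequences of
rooted connected graphs, and suppose there is a strictly increasing map `φ` between the
index sets such that each `H_i` is a rooted contraction of `G_{φ i}`. Then the cycle,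
clique and stick compositions of the `H_i`'s are rooted contractions of the respective
compositions of the `G_j`'s. -/
theorem rooted_compositions_contraction (p q : ℕ)
    (H : Fin (p + 1) → RootedGraph) (G : Fin (q + 1) → RootedGraph)
    (hH : ∀ i, (H i).graph.Connected) (hG : ∀ j, (G j).graph.Connected)
    (φ : Fin (p + 1) → Fin (q + 1)) (hφ : StrictMono φ)
    (hctr : ∀ i, RootedContraction (H i) (G (φ i))) :
    RootedContraction (cycleC H) (cycleC G) ∧
    RootedContraction (cliqueC H) (cliqueC G) ∧
    RootedContraction (stickC H) (stickC G) := by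
  exact ⟨cycle_contr p q H G hG φ hφ hctr, clique_contr p q H G hG φ hφ hctr,
    stick_contr p q H G hG φ hφ hctr⟩
end

section
/- Under the contraction relation, the class of all finite graphs has no canonical antichain: there is no antichain A of the contraction relation ⋖ such that for every ⋖-closed class F of graphs, F ∩ A is finite if and only if F is well-quasi-ordered by ⋖. -/
open SimpleGraph

/-- A class of finite graphs is closed under the contraction relation. -/
def ContrClosed (F : Set FinGraph) : Prop :=
  ∀ G ∈ F, ∀ H : FinGraph, FinGraph.Contr H G → H ∈ F

/-- An antichain of the contraction relation: a set of pairwise incomparable graphs. -/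
def ContrAntichain (A : Set FinGraph) : Prop :=
  ∀ a ∈ A, ∀ b ∈ A, a ≠ b → ¬ FinGraph.Contr a b

/-! ### Auxiliary machinery -/

/-- The inclusion homomorphism from an induced subgraph into the ambient graph. -/
def inducedIncl {V : Type*} (G : SimpleGraph V) (s : Set V) : G.induce s →g G where
  toFun := Subtype.val
  map_rel' := fun h => h

/-- In a connected part with at least two vertices, every vertex has a neighbour
inside the part. -/
lemma part_edge {V : Type*} {G : SimpleGraph V} {s : Set V}
    (h : (G.induce s).Connected) {a b : V} (ha : a ∈ s) (hb : b ∈ s) (hab : a ≠ b) :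
    ∃ x, x ∈ s ∧ G.Adj a x := by
  obtain ⟨p⟩ := h.preconnected ⟨a, ha⟩ ⟨b, hb⟩
  cases p with
  | nil => exact absurd rfl hab
  | cons hadj q => exact ⟨_, (Subtype.mem _), hadj⟩

section model
variable {V W : Type*} {G : SimpleGraph V} {H : SimpleGraph W} {φ : W → Set V}

/-- The vertex of `H` whose part contains a given vertex of `G`. -/
noncomputable def mOwner (hm : IsContractionModel G H φ) (v : V) : W :=
  (hm.2.1 v).exists.choose

lemma mOwner_mem (hm : IsContractionModel G H φ) (v : V) : v ∈ φ (mOwner hm v) :=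
  (hm.2.1 v).exists.choose_spec

lemma mOwner_eq (hm : IsContractionModel G H φ) {v : V} {w : W} (hv : v ∈ φ w) :
    w = mOwner hm v :=
  (hm.2.1 v).unique hv (mOwner_mem hm v)

/-- A chosen vertex of `G` in the part of a given vertex of `H`. -/
noncomputable def mPick (hm : IsContractionModel G H φ) (w : W) : V :=
  (hm.1 w).nonempty.some.val

lemma mPick_mem (hm : IsContractionModel G H φ) (w : W) : mPick hm w ∈ φ w :=
  (hm.1 w).nonempty.some.property

lemma mReach_within (hm : IsContractionModel G H φ) {a b : V} {w : W}
    (ha : a ∈ φ w) (hb : b ∈ φ w) : G.Reachable a b := by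
  have := (hm.1 w).preconnected ⟨a, ha⟩ ⟨b, hb⟩
  exact this.map (inducedIncl G (φ w))

end model

/-- A function constant on edges is constant on walks. -/
lemma eq_of_walk {V : Type*} {G : SimpleGraph V} {β : Sort*} (f : V → β)
    (h : ∀ v w, G.Adj v w → f v = f w) : ∀ {v w : V}, G.Walk v w → f v = f w := by
  intro v w p
  induction p with
  | nil => rfl
  | cons hadj q ih => exact (h _ _ hadj).trans ih

/-- A connected component induces a connected subgraph. -/
lemma supp_connected {V : Type*} {G : SimpleGraph V} (C : G.ConnectedComponent) :
    (G.induce C.supp).Connected := by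
  obtain ⟨v, hv⟩ := C.exists_rep
  rw [connected_iff]
  refine ⟨?_, ⟨⟨v, hv⟩⟩⟩
  rintro ⟨a, ha⟩ ⟨b, hb⟩
  rw [ConnectedComponent.mem_supp_iff] at ha hb
  classical
  have hr : G.Reachable a b := ConnectedComponent.exact (ha.trans hb.symm)
  obtain ⟨p⟩ := hr
  have hsub : {x | x ∈ p.support} ⊆ C.supp := by
    intro x hx
    have hrx : G.Reachable a x := ⟨p.takeUntil x hx⟩
    rw [ConnectedComponent.mem_supp_iff, ← ha]
    exact (ConnectedComponent.sound hrx).symm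
  have hc := p.connected_induce_support
  have hre := hc.preconnected ⟨a, p.start_mem_support⟩ ⟨b, p.end_mem_support⟩
  have hmap := hre.map (G.induceHomOfLE hsub).toHom
  convert hmap using 1 <;> rfl

/-- The number of connected components of a finite graph. -/
noncomputable def ccCard (X : FinGraph) : ℕ := Nat.card X.2.ConnectedComponent

/-- Contractions of edgeless graphs: the vertex count is preserved and the
result is edgeless. -/
lemma contr_edgeless {H G : FinGraph} (h : H.Contr G)
    (hG : ∀ a b, ¬ G.2.Adj a b) : H.1 = G.1 ∧ ∀ a b, ¬ H.2.Adj a b := by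
  obtain ⟨φ, hm⟩ := h
  have hsing : ∀ w, ∀ a ∈ φ w, ∀ b ∈ φ w, a = b := by
    intro w a ha b hb
    by_contra hne
    obtain ⟨x, hx, hax⟩ := part_edge (hm.1 w) ha hb hne
    exact hG a x hax
  have hnoadj : ∀ a b, ¬ H.2.Adj a b := by
    intro a b hab
    obtain ⟨x, hx, y, hy, hxy⟩ := (hm.2.2 a b hab.ne).mp hab
    exact hG x y hxy
  refine ⟨?_, hnoadj⟩
  have e : Fin H.1 ≃ Fin G.1 :=
    { toFun := mPick hm
      invFun := mOwner hm
      left_inv := by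
        intro w
        exact (mOwner_eq hm (mPick_mem hm w)).symm
      right_inv := by
        intro v
        exact hsing _ _ (mPick_mem hm _) _ (mOwner_mem hm v) }
  simpa using Fintype.card_congr e

/-- Every finite graph contracts onto the edgeless graph on its set of
connected components. -/
lemma contr_bot (X : FinGraph) : FinGraph.Contr ⟨ccCard X, ⊥⟩ X := by
  haveI : Fintype X.2.ConnectedComponent := Fintype.ofFinite _
  have hk : Fintype.card X.2.ConnectedComponent = ccCard X := by
    rw [ccCard, Nat.card_eq_fintype_card]
  let e : Fin (ccCard X) ≃ X.2.ConnectedComponent :=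
    (Fintype.equivFinOfCardEq hk).symm
  refine ⟨fun w => (e w).supp, fun w => supp_connected _, fun v => ?_, fun w w' hne => ?_⟩
  · refine ⟨e.symm (X.2.connectedComponentMk v), ?_, ?_⟩
    · simp [ConnectedComponent.mem_supp_iff]
    · intro y hy
      rw [ConnectedComponent.mem_supp_iff] at hy
      rw [hy]; simp
  · simp only [bot_adj, false_iff]
    rintro ⟨a, ha, b, hb, hab⟩
    rw [ConnectedComponent.mem_supp_iff] at ha hb
    exact hne (e.injective (by rw [← ha, ← hb, ConnectedComponent.sound hab.reachable]))

/-- The number of connected components is invariant under contraction. -/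
lemma ccCard_contr {H G : FinGraph} (h : H.Contr G) : ccCard H = ccCard G := by
  obtain ⟨φ, hm⟩ := h
  refine Nat.card_congr ?_
  have hAdjHG : ∀ w w', H.2.Adj w w' →
      G.2.connectedComponentMk (mPick hm w) = G.2.connectedComponentMk (mPick hm w') := by
    intro w w' hadj
    obtain ⟨a, ha, b, hb, hab⟩ := (hm.2.2 w w' hadj.ne).mp hadj
    refine ConnectedComponent.sound ?_
    exact ((mReach_within hm (mPick_mem hm w) ha).trans hab.reachable).trans
      (mReach_within hm hb (mPick_mem hm w'))
  have hAdjGH : ∀ a b, G.2.Adj a b →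
      H.2.connectedComponentMk (mOwner hm a) = H.2.connectedComponentMk (mOwner hm b) := by
    intro a b hab
    by_cases hw : mOwner hm a = mOwner hm b
    · rw [hw]
    · refine ConnectedComponent.sound ?_
      have : H.2.Adj (mOwner hm a) (mOwner hm b) :=
        (hm.2.2 _ _ hw).mpr ⟨a, mOwner_mem hm a, b, mOwner_mem hm b, hab⟩
      exact this.reachable
  refine
    { toFun := ConnectedComponent.lift (fun w => G.2.connectedComponentMk (mPick hm w))
        (fun v w p _ => eq_of_walk _ hAdjHG p)
      invFun := ConnectedComponent.lift (fun v => H.2.connectedComponentMk (mOwner hm v))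
        (fun v w p _ => eq_of_walk _ hAdjGH p)
      left_inv := ?_
      right_inv := ?_ }
  · refine ConnectedComponent.ind ?_
    intro w
    simp only [ConnectedComponent.lift_mk]
    exact congrArg _ (mOwner_eq hm (mPick_mem hm w)).symm
  · refine ConnectedComponent.ind ?_
    intro v
    simp only [ConnectedComponent.lift_mk]
    exact ConnectedComponent.sound
      (mReach_within hm (mPick_mem hm (mOwner hm v)) (mOwner_mem hm v))

/-- The cocktail-party graph on `2r` vertices (pairs `{2t, 2t+1}` nonadjacent,
all other pairs adjacent) together with `p` further isolated vertices. -/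
def Ygraph (r p : ℕ) : SimpleGraph (Fin (2*r+p)) where
  Adj i j := (i:ℕ)/2 ≠ (j:ℕ)/2 ∧ (i:ℕ) < 2*r ∧ (j:ℕ) < 2*r
  symm := ⟨by rintro i j ⟨h1, h2, h3⟩; exact ⟨h1.symm, h3, h2⟩⟩
  loopless := ⟨by rintro i ⟨h, -⟩; exact h rfl⟩

/-- `Ygraph r p` has `p + 1` connected components. -/
lemma ccCard_Ygraph {r p : ℕ} (hr : 2 ≤ r) :
    Nat.card (Ygraph r p).ConnectedComponent = p + 1 := by
  have hlab : ∀ i : Fin (2*r+p), ¬ (i:ℕ) < 2*r → (i:ℕ) - 2*r + 1 < p + 1 := by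
    intro i h; have := i.isLt; omega
  let lab : Fin (2*r+p) → Fin (p+1) := fun i =>
    if h : (i:ℕ) < 2*r then 0 else ⟨(i:ℕ) - 2*r + 1, hlab i h⟩
  have hresp : ∀ v w, (Ygraph r p).Adj v w → lab v = lab w := by
    rintro v w ⟨-, hv, hw⟩
    simp only [lab, dif_pos hv, dif_pos hw]
  have h2rp : ∀ j : Fin (p+1), (j:ℕ) ≠ 0 → 2*r + ((j:ℕ) - 1) < 2*r + p := by
    intro j h; have := j.isLt; omega
  have h0 : 0 < 2*r + p := by omega
  let rep : Fin (p+1) → Fin (2*r+p) := fun j =>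
    if h : (j:ℕ) = 0 then ⟨0, h0⟩ else ⟨2*r + ((j:ℕ) - 1), h2rp j h⟩
  have hmk0 : ∀ v : Fin (2*r+p), (v:ℕ) < 2*r →
      (Ygraph r p).connectedComponentMk v = (Ygraph r p).connectedComponentMk ⟨0, h0⟩ := by
    intro v hv
    by_cases hv0 : (v:ℕ) = 0
    · congr 1; exact Fin.ext hv0
    · by_cases hv2 : (v:ℕ)/2 = 0
      · have h2 : (2:ℕ) < 2*r + p := by omega
        have a1 : (Ygraph r p).Adj v ⟨2, h2⟩ := by
          refine ⟨?_, hv, by simp; omega⟩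
          simp only [Fin.val_mk]; omega
        have a2 : (Ygraph r p).Adj ⟨2, h2⟩ ⟨0, h0⟩ := by
          refine ⟨?_, by simp; omega, by simp; omega⟩
          simp only [Fin.val_mk]; omega
        exact (ConnectedComponent.sound (a1.reachable.trans a2.reachable))
      · have a1 : (Ygraph r p).Adj v ⟨0, h0⟩ := by
          refine ⟨?_, hv, by simp; omega⟩
          simp only [Fin.val_mk]; omega
        exact ConnectedComponent.sound a1.reachable
  have e : (Ygraph r p).ConnectedComponent ≃ Fin (p+1) :=
    { toFun := ConnectedComponent.lift lab (fun v w q _ => eq_of_walk _ hresp q)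
      invFun := fun j => (Ygraph r p).connectedComponentMk (rep j)
      left_inv := by
        refine ConnectedComponent.ind ?_
        intro v
        simp only [ConnectedComponent.lift_mk]
        by_cases hv : (v:ℕ) < 2*r
        · simp only [lab, dif_pos hv, rep]
          rw [dif_pos (show ((0 : Fin (p+1)) : ℕ) = 0 from rfl)]
          exact (hmk0 v hv).symm
        · simp only [lab, dif_neg hv, rep]
          have hne : ((⟨(v:ℕ) - 2*r + 1, hlab v hv⟩ : Fin (p+1)) : ℕ) ≠ 0 := by
            simp only [Fin.val_mk]; omega
          rw [dif_neg hne]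
          congr 1
          apply Fin.ext
          simp only [Fin.val_mk]
          omega
      right_inv := by
        intro j
        simp only [ConnectedComponent.lift_mk]
        by_cases hj : (j:ℕ) = 0
        · simp only [rep, dif_pos hj, lab]
          rw [dif_pos (show ((⟨0, h0⟩ : Fin (2*r+p)) : ℕ) < 2*r by
            simp only [Fin.val_mk]; omega)]
          exact (Fin.ext hj.symm : (0:Fin (p+1)) = j)
        · simp only [rep, dif_neg hj, lab]
          rw [dif_neg (show ¬ ((⟨2*r + ((j:ℕ)-1), h2rp j hj⟩ : Fin (2*r+p)) : ℕ) < 2*r by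
            simp only [Fin.val_mk]; omega)]
          apply Fin.ext
          simp only [Fin.val_mk]
          omega }
  rw [Nat.card_congr e, Nat.card_eq_fintype_card, Fintype.card_fin]

/-- Splitting equivalence for the high part of `Fin (a+b)`. -/
def finSplitHigh (a b : ℕ) : {v : Fin (a+b) // a ≤ (v:ℕ)} ≃ Fin b where
  toFun v := ⟨(v.1 : ℕ) - a, by have := v.1.isLt; have := v.2; omega⟩
  invFun j := ⟨⟨a + (j:ℕ), by have := j.isLt; omega⟩, by simp⟩
  left_inv v := by
    apply Subtype.ext; apply Fin.ext; have := v.2; simp; omega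
  right_inv j := by apply Fin.ext; simp

/-- Splitting equivalence for the low part of `Fin (a+b)`. -/
def finSplitLow (a b : ℕ) : {v : Fin (a+b) // (v:ℕ) < a} ≃ Fin a where
  toFun v := ⟨(v.1 : ℕ), v.2⟩
  invFun j := ⟨⟨(j:ℕ), by have := j.isLt; omega⟩, by simpa using j.isLt⟩
  left_inv v := by apply Subtype.ext; apply Fin.ext; simp
  right_inv j := by apply Fin.ext; simp

/-- The key incomparability: if `Ygraph s p` is a contraction of `Ygraph r p`
(`r, s ≥ 2`), then `s = r`.  Hence the graphs `Ygraph r p`, `r ≥ 2`, form an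
infinite antichain of the contraction order. -/
lemma Ygraph_contr_eq {r s p : ℕ} (hr : 2 ≤ r) (hs : 2 ≤ s)
    (h : FinGraph.Contr ⟨2*s+p, Ygraph s p⟩ ⟨2*r+p, Ygraph r p⟩) : s = r := by
  obtain ⟨φ, hm⟩ := h
  have hm' : IsContractionModel (Ygraph r p) (Ygraph s p) φ := hm
  clear hm
  have stepA : ∀ (w : Fin (2*s+p)) (g : Fin (2*r+p)), g ∈ φ w → ¬((g:ℕ) < 2*r) →
      φ w = {g} := by
    intro w g hg hglt
    refine Set.eq_singleton_iff_unique_mem.mpr ⟨hg, ?_⟩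
    intro b hb
    by_contra hbg
    obtain ⟨x, hx, hax⟩ := part_edge (hm'.1 w) hg hb (fun hgb => hbg (hgb.symm))
    exact hglt hax.2.1
  have stepB : ∀ (w : Fin (2*s+p)) (g : Fin (2*r+p)), g ∈ φ w → ¬((g:ℕ) < 2*r) →
      ∀ w', ¬ (Ygraph s p).Adj w w' := by
    intro w g hg hglt w' hadj
    obtain ⟨a, ha, b, hb, hab⟩ := (hm'.2.2 w w' hadj.ne).mp hadj
    rw [stepA w g hg hglt] at ha
    rw [Set.mem_singleton_iff] at ha
    exact hglt (ha ▸ hab.2.1)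
  have stepC : ∀ w : Fin (2*s+p), (w:ℕ) < 2*s → ∃ w', (Ygraph s p).Adj w w' := by
    intro w hw
    by_cases h2 : (w:ℕ)/2 = 0
    · refine ⟨⟨2, by omega⟩, ?_, hw, ?_⟩ <;> simp only [Fin.val_mk] <;> omega
    · refine ⟨⟨0, by omega⟩, ?_, hw, ?_⟩ <;> simp only [Fin.val_mk] <;> omega
  have stepD : ∀ w : Fin (2*s+p), (w:ℕ) < 2*s → ∀ g ∈ φ w, (g:ℕ) < 2*r := by
    intro w hw g hg
    by_contra hglt
    obtain ⟨w', hadj⟩ := stepC w hw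
    exact stepB w g hg hglt w' hadj
  have stepE : ∀ w : Fin (2*s+p), (w:ℕ) < 2*s → ∀ a ∈ φ w, ∀ b ∈ φ w, a = b := by
    intro w hw a ha b hb
    by_contra hne
    obtain ⟨x, hx, hax⟩ := part_edge (hm'.1 w) ha hb hne
    set w' : Fin (2*s+p) := ⟨2*((w:ℕ)/2) + (1 - (w:ℕ)%2), by omega⟩ with hw'def
    have hww' : w ≠ w' := by
      intro heq
      have : (w:ℕ) = 2*((w:ℕ)/2) + (1 - (w:ℕ)%2) := congrArg Fin.val heq
      omega
    have hw's : (w':ℕ) < 2*s := by simp only [hw'def, Fin.val_mk]; omega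
    have hnadj : ¬ (Ygraph s p).Adj w w' := by
      rintro ⟨hq, -, -⟩
      apply hq
      simp only [hw'def, Fin.val_mk]
      omega
    have hc := mPick_mem hm' w'
    set c := mPick hm' w' with hcdef
    have hclt : (c:ℕ) < 2*r := stepD w' hw's c hc
    have hcnot : c ∉ φ w := by
      intro hcw
      exact hww' ((hm'.2.1 c).unique hcw hc)
    have hca : c ≠ a := fun hh => hcnot (hh ▸ ha)
    have hcx : c ≠ x := fun hh => hcnot (hh ▸ hx)
    obtain ⟨hdvd, halt, hxlt⟩ := hax
    have hadj' : (Ygraph s p).Adj w' w := by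
      refine (hm'.2.2 w' w hww'.symm).mpr ?_
      by_cases hcc : (c:ℕ)/2 = (a:ℕ)/2
      · exact ⟨c, hc, x, hx, by omega, hclt, hxlt⟩
      · exact ⟨c, hc, a, ha, hcc, hclt, halt⟩
    exact hnadj hadj'.symm
  have hψdef : ∀ g : Fin (2*r+p), 2*r ≤ (g:ℕ) →
      2*s ≤ ((mOwner hm' g : Fin (2*s+p)):ℕ) := by
    intro g hg
    by_contra hlow
    obtain ⟨w', hadj⟩ := stepC (mOwner hm' g) (by omega)
    exact stepB (mOwner hm' g) g (mOwner_mem hm' g) (by omega) w' hadj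
  let ψ : {v : Fin (2*r+p) // 2*r ≤ (v:ℕ)} → {w : Fin (2*s+p) // 2*s ≤ (w:ℕ)} :=
    fun v => ⟨mOwner hm' v.1, hψdef v.1 v.2⟩
  have hψinj : Function.Injective ψ := by
    rintro ⟨g1, hg1⟩ ⟨g2, hg2⟩ heq
    have : mOwner hm' g1 = mOwner hm' g2 := congrArg Subtype.val heq
    have h1 := stepA _ g1 (mOwner_mem hm' g1) (by omega)
    have h2 := stepA _ g2 (mOwner_mem hm' g2) (by omega)
    rw [this] at h1
    rw [h1] at h2
    exact Subtype.ext (Set.singleton_eq_singleton_iff.mp h2)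
  have hψsurj : Function.Surjective ψ := by
    let f' : Fin p → Fin p := fun j => finSplitHigh (2*s) p (ψ ((finSplitHigh (2*r) p).symm j))
    have hf'inj : Function.Injective f' := by
      intro j1 j2 heq
      have := hψinj ((finSplitHigh (2*s) p).injective heq)
      exact (finSplitHigh (2*r) p).symm.injective this
    have hf'surj : Function.Surjective f' := Finite.surjective_of_injective hf'inj
    intro w
    obtain ⟨j, hj⟩ := hf'surj (finSplitHigh (2*s) p w)
    refine ⟨(finSplitHigh (2*r) p).symm j, (finSplitHigh (2*s) p).injective hj⟩
  have stepG : ∀ w : Fin (2*s+p), 2*s ≤ (w:ℕ) → ∀ g ∈ φ w, 2*r ≤ (g:ℕ) := by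
    intro w hw g hg
    obtain ⟨⟨g0, hg0⟩, hψ0⟩ := hψsurj ⟨w, hw⟩
    have howner : mOwner hm' g0 = w := congrArg Subtype.val hψ0
    have hsing := stepA _ g0 (mOwner_mem hm' g0) (by omega)
    rw [howner] at hsing
    rw [hsing, Set.mem_singleton_iff] at hg
    omega
  have hmainlt : ∀ w : {w : Fin (2*s+p) // (w:ℕ) < 2*s},
      ((mPick hm' w.1 : Fin (2*r+p)):ℕ) < 2*r :=
    fun w => stepD w.1 w.2 _ (mPick_mem hm' w.1)
  let eMainF : {w : Fin (2*s+p) // (w:ℕ) < 2*s} → {v : Fin (2*r+p) // (v:ℕ) < 2*r} :=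
    fun w => ⟨mPick hm' w.1, hmainlt w⟩
  have hMinj : Function.Injective eMainF := by
    rintro ⟨w1, h1⟩ ⟨w2, h2⟩ heq
    have hv : mPick hm' w1 = mPick hm' w2 := congrArg Subtype.val heq
    refine Subtype.ext ((hm'.2.1 (mPick hm' w1)).unique (mPick_mem hm' w1) ?_)
    rw [hv]; exact mPick_mem hm' w2
  have hMsurj : Function.Surjective eMainF := by
    rintro ⟨v, hv⟩
    have hw : ((mOwner hm' v : Fin (2*s+p)):ℕ) < 2*s := by
      by_contra hcon
      have := stepG _ (by omega) v (mOwner_mem hm' v)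
      omega
    refine ⟨⟨mOwner hm' v, hw⟩, Subtype.ext ?_⟩
    exact stepE _ hw _ (mPick_mem hm' _) v (mOwner_mem hm' v)
  have eMain := Equiv.ofBijective eMainF ⟨hMinj, hMsurj⟩
  have efin : Fin (2*s) ≃ Fin (2*r) :=
    ((finSplitLow (2*s) p).symm.trans eMain).trans (finSplitLow (2*r) p)
  have := Fintype.card_congr efin
  simp only [Fintype.card_fin] at this
  omega

/-- Under the contraction relation, the class of all finite graphs has
no canonical antichain: there is no antichain `A` such that, for every
contraction-closed class `F` of graphs, `F ∩ A` is finite if and only if `F` is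
well-quasi-ordered by the contraction relation. -/
theorem no_canonical_antichain :
    ¬ ∃ A : Set FinGraph, ContrAntichain A ∧
      ∀ F : Set FinGraph, ContrClosed F → ((F ∩ A).Finite ↔ WqoByContraction F) := by
  rintro ⟨A, hA, hIff⟩
  set Bad : Set ℕ := {n | (⟨n, (⊥ : SimpleGraph (Fin n))⟩ : FinGraph) ∈ A} with hBadDef
  by_cases hfin : (Badᶜ : Set ℕ).Finite
  · -- Case 2 : edgeless graphs of cofinitely many sizes lie in `A`.
    obtain ⟨N, hN⟩ := hfin.bddAbove
    have hk : N + 1 ∈ Bad := by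
      by_contra hkc
      have : N + 1 ∈ (Badᶜ : Set ℕ) := hkc
      have := hN this
      omega
    set k := N + 1 with hkdef
    set F : Set FinGraph := {X | ccCard X = k} with hFdef
    have hclosed : ContrClosed F := by
      intro G hG H hH
      have : ccCard H = ccCard G := ccCard_contr hH
      simp only [hFdef, Set.mem_setOf_eq] at hG ⊢
      rw [this, hG]
    have hsub : F ∩ A ⊆ {(⟨k, (⊥ : SimpleGraph (Fin k))⟩ : FinGraph)} := by
      rintro X ⟨hXF, hXA⟩
      by_contra hne
      change ¬ X = _ at hne
      have hcontr := contr_bot X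
      have hXk : ccCard X = k := hXF
      rw [hXk] at hcontr
      exact hA _ hk X hXA (fun hh => hne hh.symm) hcontr
    have hwqo := (hIff F hclosed).mp ((Set.finite_singleton _).subset hsub)
    obtain ⟨i, j, hij, hC⟩ :=
      hwqo (fun n => ⟨2*(n+2)+(k-1), Ygraph (n+2) (k-1)⟩) (by
        intro n
        show ccCard _ = k
        show Nat.card (Ygraph (n+2) (k-1)).ConnectedComponent = k
        rw [ccCard_Ygraph (by omega)]
        omega)
    have := Ygraph_contr_eq (r := j+2) (s := i+2) (by omega) (by omega) hC
    omega
  · -- Case 1 : infinitely many sizes of edgeless graphs are missing from `A`.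
    have hinf : (Badᶜ : Set ℕ).Infinite := hfin
    set F : Set FinGraph := {X | (∀ a b, ¬ X.2.Adj a b) ∧ X.1 ∉ Bad} with hFdef
    have hclosed : ContrClosed F := by
      rintro G ⟨hGe, hGb⟩ H hH
      obtain ⟨h1, h2⟩ := contr_edgeless hH hGe
      exact ⟨h2, h1 ▸ hGb⟩
    have hempty : F ∩ A = ∅ := by
      ext X
      simp only [Set.mem_inter_iff, Set.mem_empty_iff_false, iff_false]
      rintro ⟨⟨hXe, hXb⟩, hXA⟩
      apply hXb
      have hX2 : X.2 = ⊥ := by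
        ext a b
        simp only [bot_adj, iff_false]
        exact hXe a b
      show (⟨X.1, (⊥ : SimpleGraph (Fin X.1))⟩ : FinGraph) ∈ A
      rw [← hX2]
      exact hXA
    have hwqo := (hIff F hclosed).mp (by rw [hempty]; exact Set.finite_empty)
    let e := hinf.natEmbedding
    obtain ⟨i, j, hij, hC⟩ :=
      hwqo (fun n => ⟨(e n).val, (⊥ : SimpleGraph (Fin (e n).val))⟩) (by
        intro n
        exact ⟨fun a b h => h, (e n).property⟩)
    obtain ⟨h1, -⟩ := contr_edgeless hC (fun a b h => h)
    have : e i = e j := Subtype.ext h1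
    have := e.injective this
    omega
end
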